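/- arXiv:1911.12778 — 3 statements merged into one kernel-verified Lean document; each statement's English description precedes it below -/
import Mathlib

section
/- For every metric space (X,d) and every finite server set S ⊆ X with |S| = k ≥ 1, there exists a deterministic online matching algorithm A for S such that for every sequence of clients c_1,…,c_k ∈ X the following hold: (i) for every t ∈ {1,…,k}, the cost of the matching A(c_1,…,c_t) is at most (2·⌈log₂(t+1)⌉ − 1) times OPT_t, and (ii) every client index j ∈ {1,…,k} is reassigned at most ⌊log₂ k⌋ times over the whole sequence. -/
/-- A matching of the first `t` clients (indexed `1,…,t`) into the server set `S`:
an injective assignment whose values on `{1,…,t}` are servers in `S`. -/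
def IsMatching {X : Type*} [MetricSpace X] (S : Finset X) (t : ℕ) (f : ℕ → X) : Prop :=
  Set.InjOn f (Set.Icc 1 t) ∧ ∀ j ∈ Set.Icc 1 t, f j ∈ S

/-- The cost of a matching `f` of the first `t` clients `c 1, …, c t`. -/
noncomputable def matchingCost {X : Type*} [MetricSpace X] (t : ℕ) (c f : ℕ → X) : ℝ :=
  ∑ j ∈ Finset.Icc 1 t, dist (c j) (f j)

/-- `OPT S t c` is the minimum cost of a matching of the first `t` clients into `S`. -/
noncomputable def OPT {X : Type*} [MetricSpace X] (S : Finset X) (t : ℕ) (c : ℕ → X) : ℝ :=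
  sInf {r : ℝ | ∃ f : ℕ → X, IsMatching S t f ∧ matchingCost t c f = r}

/-- The prefix `(c 1, …, c t)` of the client sequence `c`, as a function on `Fin t`;
an online algorithm only gets to see this prefix at time `t`. -/
def prefixOf {X : Type*} (c : ℕ → X) (t : ℕ) : Fin t → X := fun j => c (j.1 + 1)

set_option linter.unusedSectionVars false
namespace OMRec
open Classical

variable {X : Type*} [MetricSpace X]

/-! ### truncation -/

noncomputable def trunc (x0 : X) (c : ℕ → X) (t : ℕ) : ℕ → X :=
  fun j => if 1 ≤ j ∧ j ≤ t then c j else x0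

lemma trunc_eq_of_mem (x0 : X) (c : ℕ → X) {t j : ℕ} (h1 : 1 ≤ j) (h2 : j ≤ t) :
    trunc x0 c t j = c j := by simp [trunc, h1, h2]

lemma trunc_trunc (x0 : X) (c : ℕ → X) {q t : ℕ} (h : q ≤ t) :
    trunc x0 (trunc x0 c t) q = trunc x0 c q := by
  funext j
  by_cases hj : 1 ≤ j ∧ j ≤ q
  · rw [trunc_eq_of_mem x0 _ hj.1 hj.2, trunc_eq_of_mem x0 _ hj.1 hj.2,
      trunc_eq_of_mem x0 _ hj.1 (hj.2.trans h)]
  · simp only [trunc, if_neg hj]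

lemma trunc_self (x0 : X) (c : ℕ → X) (t : ℕ) :
    trunc x0 (trunc x0 c t) t = trunc x0 c t := trunc_trunc x0 c le_rfl

/-! ### OPT basics -/

variable (S : Finset X)

def MSet (t : ℕ) (c : ℕ → X) : Set ℝ :=
  {r : ℝ | ∃ f : ℕ → X, IsMatching S t f ∧ matchingCost t c f = r}

lemma OPT_def (t : ℕ) (c : ℕ → X) : OPT S t c = sInf (MSet S t c) := rfl

lemma matchingCost_nonneg (t : ℕ) (c f : ℕ → X) : 0 ≤ matchingCost t c f :=
  Finset.sum_nonneg fun _ _ => dist_nonneg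

lemma MSet_nonneg (t : ℕ) (c : ℕ → X) : ∀ r ∈ MSet S t c, (0:ℝ) ≤ r := by
  rintro r ⟨f, _, rfl⟩; exact matchingCost_nonneg t c f

lemma MSet_bddBelow (t : ℕ) (c : ℕ → X) : BddBelow (MSet S t c) :=
  ⟨0, fun r hr => MSet_nonneg S t c r hr⟩

lemma matchingCost_congr {t : ℕ} {c₁ c₂ f₁ f₂ : ℕ → X}
    (hc : ∀ j ∈ Set.Icc 1 t, c₁ j = c₂ j) (hf : ∀ j ∈ Set.Icc 1 t, f₁ j = f₂ j) :
    matchingCost t c₁ f₁ = matchingCost t c₂ f₂ := by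
  unfold matchingCost
  refine Finset.sum_congr rfl fun j hj => ?_
  rw [Finset.mem_Icc] at hj
  rw [hc j (Set.mem_Icc.2 hj), hf j (Set.mem_Icc.2 hj)]

lemma OPT_congr {t : ℕ} {c₁ c₂ : ℕ → X} (hc : ∀ j ∈ Set.Icc 1 t, c₁ j = c₂ j) :
    OPT S t c₁ = OPT S t c₂ := by
  have : MSet S t c₁ = MSet S t c₂ := by
    ext r
    constructor
    · rintro ⟨f, hf, rfl⟩
      exact ⟨f, hf, (matchingCost_congr (fun j hj => (hc j hj).symm) (fun _ _ => rfl))⟩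
    · rintro ⟨f, hf, rfl⟩
      exact ⟨f, hf, (matchingCost_congr hc (fun _ _ => rfl))⟩
  rw [OPT_def, OPT_def, this]

lemma MSet_finite (t : ℕ) (c : ℕ → X) : (MSet S t c).Finite := by
  classical
  have : MSet S t c ⊆ Set.range (fun g : (↑(Finset.Icc 1 t) : Type _) → ↥S =>
      matchingCost t c (fun j => if h : j ∈ Finset.Icc 1 t then (g ⟨j, h⟩ : X) else c 0)) := by
    rintro r ⟨f, hf, rfl⟩
    refine ⟨fun jh => ⟨f jh.1, hf.2 jh.1 (by
      have := jh.2; rw [Finset.mem_Icc] at this; exact Set.mem_Icc.2 this)⟩, ?_⟩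
    refine matchingCost_congr (fun _ _ => rfl) (fun j hj => ?_)
    rw [Set.mem_Icc] at hj
    simp [Finset.mem_Icc.2 hj]
  exact (Set.finite_range _).subset this

lemma MSet_nonempty {t : ℕ} (c : ℕ → X) (x0 : X) (ht : t ≤ S.card) :
    (MSet S t c).Nonempty := by
  classical
  have hcard : Fintype.card (↑(Finset.Icc 1 t) : Type _) ≤ Fintype.card ↥S := by
    rw [Fintype.card_coe, Fintype.card_coe, Nat.card_Icc]
    simpa using ht
  obtain ⟨em⟩ := Function.Embedding.nonempty_of_card_le hcard
  set f : ℕ → X := fun j => if h : j ∈ Finset.Icc 1 t then (em ⟨j, h⟩ : X) else x0 with hfdef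
  refine ⟨matchingCost t c f, f, ⟨?_, ?_⟩, rfl⟩
  · intro a ha b hb hab
    rw [Set.mem_Icc] at ha hb
    have ha' : a ∈ Finset.Icc 1 t := Finset.mem_Icc.2 ha
    have hb' : b ∈ Finset.Icc 1 t := Finset.mem_Icc.2 hb
    simp only [hfdef, dif_pos ha', dif_pos hb'] at hab
    have := em.injective (Subtype.ext hab)
    exact congrArg Subtype.val this
  · intro j hj
    rw [Set.mem_Icc] at hj
    have hj' : j ∈ Finset.Icc 1 t := Finset.mem_Icc.2 hj
    simp only [hfdef, dif_pos hj']
    exact (em ⟨j, hj'⟩).2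

lemma OPT_attained {t : ℕ} (c : ℕ → X) (x0 : X) (ht : t ≤ S.card) :
    ∃ f : ℕ → X, IsMatching S t f ∧ matchingCost t c f = OPT S t c :=
  (MSet_nonempty S c x0 ht).csInf_mem (MSet_finite S t c)

lemma OPT_le_cost {t : ℕ} {c f : ℕ → X} (hf : IsMatching S t f) :
    OPT S t c ≤ matchingCost t c f :=
  csInf_le (MSet_bddBelow S t c) ⟨f, hf, rfl⟩

lemma OPT_nonneg (t : ℕ) (c : ℕ → X) : 0 ≤ OPT S t c :=
  Real.sInf_nonneg (MSet_nonneg S t c)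

lemma cost_mono {p t : ℕ} (h : p ≤ t) (c f : ℕ → X) :
    matchingCost p c f ≤ matchingCost t c f := by
  unfold matchingCost
  exact Finset.sum_le_sum_of_subset_of_nonneg
    (Finset.Icc_subset_Icc le_rfl h) (fun _ _ _ => dist_nonneg)

lemma isMatching_mono {p t : ℕ} (h : p ≤ t) {f : ℕ → X} (hf : IsMatching S t f) :
    IsMatching S p f :=
  ⟨hf.1.mono (Set.Icc_subset_Icc le_rfl h), fun j hj => hf.2 j (Set.Icc_subset_Icc le_rfl h hj)⟩

lemma OPT_mono {p t : ℕ} (hpt : p ≤ t) (ht : t ≤ S.card) (c : ℕ → X) (x0 : X) :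
    OPT S p c ≤ OPT S t c := by
  obtain ⟨f, hf, hcost⟩ := OPT_attained S c x0 ht
  calc OPT S p c ≤ matchingCost p c f := OPT_le_cost S (isMatching_mono S hpt hf)
    _ ≤ matchingCost t c f := cost_mono hpt c f
    _ = OPT S t c := hcost

lemma OPT_zero (c : ℕ → X) : OPT S 0 c = 0 := by
  have h0 : (0:ℝ) ∈ MSet S 0 c := by
    refine ⟨fun _ => c 0, ⟨?_, ?_⟩, ?_⟩
    · simp [Set.InjOn]
    · intro j hj; rw [Set.mem_Icc] at hj; omega
    · simp [matchingCost]
  refine le_antisymm (csInf_le (MSet_bddBelow S 0 c) h0) (OPT_nonneg S 0 c)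

-- chunk2


/-! ### binary counter arithmetic -/

/-- largest power of two dividing `n` (junk value 1 at 0) -/
def lowB (n : ℕ) : ℕ := 2 ^ (n.factorization 2)

/-- clear the lowest set bit -/
def B (n : ℕ) : ℕ := n - lowB n

lemma lowB_pos (n : ℕ) : 0 < lowB n := Nat.pow_pos (by norm_num)

lemma lowB_dvd {n : ℕ} (hn : n ≠ 0) : lowB n ∣ n := Nat.ordProj_dvd n 2

lemma lowB_le {n : ℕ} (hn : n ≠ 0) : lowB n ≤ n :=
  Nat.le_of_dvd (Nat.pos_of_ne_zero hn) (lowB_dvd hn)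

lemma B_lt {n : ℕ} (hn : n ≠ 0) : B n < n := by
  have := lowB_pos n
  have := lowB_le hn
  unfold B; omega

lemma B_le (n : ℕ) : B n ≤ n := Nat.sub_le _ _

lemma B_zero : B 0 = 0 := rfl

lemma B_add_lowB {n : ℕ} (hn : n ≠ 0) : B n + lowB n = n := by
  have := lowB_le hn; unfold B; omega

/-- pow-of-two divisibility transfers to B n -/
lemma lowB_dvd_B {n : ℕ} (hn : n ≠ 0) : lowB n ∣ B n := by
  have h := lowB_dvd hn
  exact (Nat.dvd_sub h (dvd_refl _))

lemma two_lowB_dvd {n : ℕ} (hn : n ≠ 0) (hB : B n ≠ 0) : 2 * lowB n ∣ B n := by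
  -- n / lowB n is odd, so (n / lowB n - 1) is even; B n = lowB n * (n/lowB n - 1)
  have hdvd := lowB_dvd hn
  have hodd : ¬ (2 ∣ n / lowB n) := Nat.not_dvd_ordCompl (by norm_num) hn
  have hq : n = lowB n * (n / lowB n) := (Nat.mul_div_cancel' hdvd).symm
  have hqpos : 0 < n / lowB n := Nat.div_pos (lowB_le hn) (lowB_pos n)
  have hB' : B n = lowB n * (n / lowB n - 1) := by
    unfold B
    rw [Nat.mul_sub_one]
    omega
  have heven : 2 ∣ (n / lowB n - 1) := by
    rcases Nat.even_or_odd (n / lowB n) with h | h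
    · exact absurd h.two_dvd hodd
    · obtain ⟨m, hm⟩ := h; omega
  rw [hB']
  obtain ⟨m, hm⟩ := heven
  exact ⟨m, by rw [hm]; ring⟩

lemma lowB_B_ge {n : ℕ} (hn : n ≠ 0) (hB : B n ≠ 0) : 2 * lowB n ≤ lowB (B n) := by
  have h2 : 2 * lowB n ∣ B n := two_lowB_dvd hn hB
  have : (2:ℕ) ^ (n.factorization 2 + 1) ∣ B n := by
    rw [pow_succ]
    calc (2:ℕ) ^ n.factorization 2 * 2 = 2 * lowB n := by unfold lowB; ring
    _ ∣ B n := h2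
  have hle : n.factorization 2 + 1 ≤ (B n).factorization 2 :=
    (Nat.Prime.pow_dvd_iff_le_factorization (by norm_num) hB).1 this
  calc 2 * lowB n = 2 ^ (n.factorization 2 + 1) := by unfold lowB; ring
  _ ≤ 2 ^ ((B n).factorization 2) := Nat.pow_le_pow_right (by norm_num) hle
  _ = lowB (B n) := rfl

/-- number of ones in binary representation, via B -/
def cnt : ℕ → ℕ
  | 0 => 0
  | (n+1) => cnt (B (n+1)) + 1
  decreasing_by exact B_lt (Nat.succ_ne_zero n)

lemma cnt_eq {n : ℕ} (hn : n ≠ 0) : cnt n = cnt (B n) + 1 := by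
  obtain ⟨m, rfl⟩ := Nat.exists_eq_succ_of_ne_zero hn
  rw [cnt]

lemma B_eq_zero_iff {n : ℕ} (hn : n ≠ 0) : B n = 0 ↔ n = lowB n := by
  have := lowB_le hn; unfold B; omega

lemma cnt_le_aux : ∀ n : ℕ, n ≠ 0 → cnt n + n.factorization 2 ≤ Nat.log 2 n + 1 := by
  intro n
  induction n using Nat.strong_induction_on with
  | _ n IH =>
    intro hn
    by_cases hB : B n = 0
    · -- n = 2^v
      have hn' : n = lowB n := (B_eq_zero_iff hn).1 hB
      have : cnt n = 1 := by rw [cnt_eq hn, hB]; rw [cnt]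
      rw [this]
      have : Nat.log 2 n = n.factorization 2 := by
        conv_lhs => rw [hn']
        exact Nat.log_pow (by norm_num) _
      omega
    · have h1 : cnt n = cnt (B n) + 1 := cnt_eq hn
      have h2 := IH (B n) (B_lt hn) hB
      have h3 : n.factorization 2 + 1 ≤ (B n).factorization 2 := by
        have := lowB_B_ge hn hB
        unfold lowB at this
        have h22 : (2:ℕ)^(n.factorization 2 + 1) ≤ 2^((B n).factorization 2) := by
          calc (2:ℕ)^(n.factorization 2 + 1) = 2 * 2 ^ (n.factorization 2) := by ring
          _ ≤ 2^((B n).factorization 2) := this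
        exact (Nat.pow_le_pow_iff_right (by norm_num)).1 h22
      have h4 : Nat.log 2 (B n) ≤ Nat.log 2 n := Nat.log_mono_right (B_le n)
      omega

lemma cnt_le_log (n : ℕ) (hn : n ≠ 0) : cnt n ≤ Nat.log 2 n + 1 := by
  have := cnt_le_aux n hn; omega

lemma log_succ_le_clog (n : ℕ) (hn : n ≠ 0) : Nat.log 2 n + 1 ≤ Nat.clog 2 (n+1) := by
  by_contra h
  push_neg at h
  have : Nat.clog 2 (n+1) ≤ Nat.log 2 n := by omega
  have := (Nat.clog_le_iff_le_pow (by norm_num)).1 this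
  have h2 := Nat.pow_log_le_self 2 hn
  omega

lemma cnt_le_clog (n : ℕ) (hn : n ≠ 0) : cnt n ≤ Nat.clog 2 (n+1) :=
  (cnt_le_log n hn).trans (log_succ_le_clog n hn)

/-- iterates of B from n-1 reach B n -/
lemma B_double (y : ℕ) : B (2*y) = 2 * B y := by
  rcases Nat.eq_zero_or_pos y with rfl | hy
  · simp [B_zero]
  · have hy' : y ≠ 0 := hy.ne'
    have h2y : (2*y) ≠ 0 := by positivity
    have : lowB (2*y) = 2 * lowB y := by
      unfold lowB
      have : (2*y).factorization 2 = y.factorization 2 + 1 := by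
        rw [Nat.factorization_mul (by norm_num) hy']
        simp [Nat.Prime.factorization_self (by norm_num : Nat.Prime 2)]
        omega
      rw [this]; ring
    unfold B
    rw [this]
    omega

lemma B_iterate_double (i y : ℕ) : B^[i] (2*y) = 2 * B^[i] y := by
  induction i generalizing y with
  | zero => simp
  | succ i IH =>
    rw [Function.iterate_succ_apply, Function.iterate_succ_apply, B_double, IH]

lemma B_odd {y : ℕ} (h : y % 2 = 1) : B y = y - 1 := by
  have : lowB y = 1 := by
    unfold lowB
    have : ¬ (2 ∣ y) := by omega
    rw [Nat.factorization_eq_zero_of_not_dvd this]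
    rfl
  unfold B; omega

lemma B_pred_iterate : ∀ n : ℕ, n ≠ 0 → ∃ i, B^[i] (n-1) = B n := by
  intro n
  induction n using Nat.strong_induction_on with
  | _ n IH =>
    intro hn
    rcases Nat.even_or_odd n with he | ho
    · -- n = 2x
      obtain ⟨x, hx⟩ := he
      have hx2 : n = 2*x := by omega
      have hxpos : x ≠ 0 := by omega
      obtain ⟨i, hi⟩ := IH x (by omega) hxpos
      refine ⟨i + 1, ?_⟩
      have hodd : (n-1) % 2 = 1 := by omega
      rw [Function.iterate_succ_apply, B_odd hodd]
      have : n - 1 - 1 = 2 * (x-1) := by omega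
      rw [this, B_iterate_double]
      have : B n = 2 * B x := by rw [hx2, B_double]
      rw [this]
      rw [show x - 1 = x - 1 from rfl] at hi
      rw [hi]
    · refine ⟨0, ?_⟩
      have : n % 2 = 1 := Nat.odd_iff.1 ho
      simp [B_odd this]

/-- counting: distinct "reassignment" times with the same lowB are impossible close together -/
lemma lowB_inj_on_window {j t₁ t₂ : ℕ} (h1 : B t₁ < j) (h1' : j < t₁)
    (h2 : B t₂ < j) (h2' : j < t₂) (hlow : lowB t₁ = lowB t₂) : t₁ = t₂ := by
  by_contra hne
  wlog hlt : t₁ < t₂ generalizing t₁ t₂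
  · exact this h2 h2' h1 h1' hlow.symm (Ne.symm hne) (by omega)
  have hn1 : t₁ ≠ 0 := by omega
  have hn2 : t₂ ≠ 0 := by omega
  have e1 := B_add_lowB hn1
  have e2 := B_add_lowB hn2
  have hd1 : lowB t₁ ∣ t₁ := lowB_dvd hn1
  have hd2 : lowB t₂ ∣ t₂ := lowB_dvd hn2
  -- t₁, t₂ ∈ (j, j + lowB), both divisible by lowB
  have hdvd : lowB t₁ ∣ (t₂ - t₁) := by
    rw [hlow] at hd1 ⊢
    exact Nat.dvd_sub hd2 hd1
  have hlt2 : t₂ - t₁ < lowB t₁ := by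
    rw [hlow]; omega
  have hpos : 0 < t₂ - t₁ := by omega
  have := Nat.le_of_dvd hpos hdvd
  omega

lemma lowB_eq_two_pow (n : ℕ) : lowB n = 2 ^ (n.factorization 2) := rfl

lemma lowB_ge_two {t j : ℕ} (h1 : B t < j) (h2 : j < t) : 2 ≤ lowB t := by
  have hn : t ≠ 0 := by omega
  have := B_add_lowB hn
  omega


-- chunk3
/-! ### alternating path machinery -/

section Core

variable (g N : ℕ → X) (p : ℕ)

/-- partial inverse of `g` on `[1,p]` -/
noncomputable def pinv (s : X) : ℕ := Function.invFunOn g (Set.Icc 1 p) s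

/-- follow an alternating step: from a server in `g''[1,p]` to the `N`-server of its client -/
noncomputable def Tm (s : X) : X := N (pinv g p s)

/-- the alternating path from client `d`: start at `N d`, follow `Tm` -/
noncomputable def orb (d n : ℕ) : X := (Tm g N p)^[n] (N d)

/-- servers used by `g` -/
def VpS : Set X := g '' Set.Icc 1 p

lemma orb_zero (d : ℕ) : orb g N p d 0 = N d := rfl

lemma orb_succ (d n : ℕ) : orb g N p d (n+1) = Tm g N p (orb g N p d n) := by
  unfold orb
  rw [Function.iterate_succ_apply']

variable {g N p}

lemma pinv_mem {s : X} (hs : s ∈ VpS g p) : pinv g p s ∈ Set.Icc 1 p := by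
  obtain ⟨a, ha, rfl⟩ := hs
  exact Function.invFunOn_mem ⟨a, ha, rfl⟩

lemma g_pinv {s : X} (hs : s ∈ VpS g p) : g (pinv g p s) = s := by
  obtain ⟨a, ha, rfl⟩ := hs
  exact Function.invFunOn_eq ⟨a, ha, rfl⟩

variable {t : ℕ} (hpt : p ≤ t)
variable (hgi : Set.InjOn g (Set.Icc 1 p)) (hNi : Set.InjOn N (Set.Icc 1 t))

include hpt hgi hNi

lemma Tm_injOn {s s' : X} (hs : s ∈ VpS g p) (hs' : s' ∈ VpS g p)
    (h : Tm g N p s = Tm g N p s') : s = s' := by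
  have h1 := pinv_mem hs
  have h2 := pinv_mem hs'
  have hIcc : Set.Icc 1 p ⊆ Set.Icc (1:ℕ) t := Set.Icc_subset_Icc le_rfl hpt
  have := hNi (hIcc h1) (hIcc h2) h
  rw [← g_pinv hs, ← g_pinv hs', this]

lemma key_inj : ∀ i j d d', d ∈ Set.Icc (p+1) t → d' ∈ Set.Icc (p+1) t →
    (∀ m < i, orb g N p d m ∈ VpS g p) → (∀ m < j, orb g N p d' m ∈ VpS g p) →
    orb g N p d i = orb g N p d' j → i = j ∧ d = d' := by
  intro i
  induction i with
  | zero =>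
    intro j d d' hd hd' _ hj heq
    match j with
    | 0 =>
      refine ⟨rfl, ?_⟩
      rw [Set.mem_Icc] at hd hd'
      exact hNi (Set.mem_Icc.2 ⟨by omega, hd.2⟩) (Set.mem_Icc.2 ⟨by omega, hd'.2⟩) heq
    | (j'+1) =>
      exfalso
      rw [orb_zero, orb_succ] at heq
      have hmem : orb g N p d' j' ∈ VpS g p := hj j' (by omega)
      have hx := pinv_mem hmem
      rw [Set.mem_Icc] at hx hd
      have : d = pinv g p (orb g N p d' j') :=
        hNi (Set.mem_Icc.2 ⟨by omega, hd.2⟩) (Set.mem_Icc.2 ⟨by omega, by omega⟩) heq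
      omega
  | succ i' IH =>
    intro j d d' hd hd' hi hj heq
    match j with
    | 0 =>
      exfalso
      rw [orb_zero, orb_succ] at heq
      have hmem : orb g N p d i' ∈ VpS g p := hi i' (by omega)
      have hx := pinv_mem hmem
      rw [Set.mem_Icc] at hx hd'
      have : pinv g p (orb g N p d i') = d' :=
        hNi (Set.mem_Icc.2 ⟨by omega, by omega⟩) (Set.mem_Icc.2 ⟨by omega, hd'.2⟩) heq
      omega
    | (j'+1) =>
      rw [orb_succ, orb_succ] at heq
      have h1 : orb g N p d i' ∈ VpS g p := hi i' (by omega)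
      have h2 : orb g N p d' j' ∈ VpS g p := hj j' (by omega)
      have := Tm_injOn hpt hgi hNi h1 h2 heq
      obtain ⟨hij, hdd⟩ := IH j' d d' hd hd' (fun m hm => hi m (by omega))
        (fun m hm => hj m (by omega)) this
      exact ⟨by omega, hdd⟩

lemma exit_exists {d : ℕ} (hd : d ∈ Set.Icc (p+1) t) :
    ∃ n, orb g N p d n ∉ VpS g p := by
  by_contra hall
  push_neg at hall
  have hinj : Set.InjOn (fun n => orb g N p d n) ↑(Finset.range (p+1)) := by
    intro a _ b _ hab
    exact (key_inj hpt hgi hNi a b d d hd hd (fun m _ => hall m) (fun m _ => hall m) hab).1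
  have hmaps : ∀ a ∈ Finset.range (p+1), orb g N p d a ∈ (Finset.Icc 1 p).image g := by
    intro a _
    obtain ⟨x, hx, hgx⟩ := hall a
    exact Finset.mem_image.2 ⟨x, by rw [Finset.mem_Icc]; exact Set.mem_Icc.1 hx, hgx⟩
  have := Finset.card_le_card_of_injOn _ hmaps hinj
  have h2 := Finset.card_image_le (s := Finset.Icc 1 p) (f := g)
  simp only [Finset.card_range, Nat.card_Icc] at this h2
  omega

omit hpt hgi hNi

/-- exit time of the alternating path of `d` -/
noncomputable def nExit (g N : ℕ → X) (p t d : ℕ) : ℕ :=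
  if h : ∃ n, orb g N p d n ∉ VpS g p then Nat.find h else 0

/-- endpoint of the alternating path of `d` -/
noncomputable def pEnd (g N : ℕ → X) (p t d : ℕ) : X := orb g N p d (nExit g N p t d)

include hpt hgi hNi

lemma nExit_spec {d : ℕ} (hd : d ∈ Set.Icc (p+1) t) :
    orb g N p d (nExit g N p t d) ∉ VpS g p := by
  have h := exit_exists hpt hgi hNi hd
  rw [nExit, dif_pos h]
  exact Nat.find_spec h

lemma nExit_min {d : ℕ} (hd : d ∈ Set.Icc (p+1) t) {m : ℕ} (hm : m < nExit g N p t d) :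
    orb g N p d m ∈ VpS g p := by
  have h := exit_exists hpt hgi hNi hd
  rw [nExit, dif_pos h] at hm
  by_contra hmem
  exact absurd (Nat.find_min h hm) (by simpa using hmem)

lemma pEnd_not_mem {d : ℕ} (hd : d ∈ Set.Icc (p+1) t) : pEnd g N p t d ∉ VpS g p :=
  nExit_spec hpt hgi hNi hd

lemma orb_mem_image {d : ℕ} (hd : d ∈ Set.Icc (p+1) t) {n : ℕ} (hn : n ≤ nExit g N p t d) :
    orb g N p d n ∈ N '' Set.Icc 1 t := by
  induction n with
  | zero =>
    rw [Set.mem_Icc] at hd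
    exact ⟨d, Set.mem_Icc.2 ⟨by omega, hd.2⟩, rfl⟩
  | succ n IH =>
    rw [orb_succ]
    have hmem : orb g N p d n ∈ VpS g p := nExit_min hpt hgi hNi hd (by omega)
    have := pinv_mem hmem
    rw [Set.mem_Icc] at this
    exact ⟨pinv g p (orb g N p d n), Set.mem_Icc.2 ⟨this.1, this.2.trans hpt⟩, rfl⟩

lemma pEnd_mem_image {d : ℕ} (hd : d ∈ Set.Icc (p+1) t) :
    pEnd g N p t d ∈ N '' Set.Icc 1 t :=
  orb_mem_image hpt hgi hNi hd le_rfl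

lemma pEnd_injOn : Set.InjOn (pEnd g N p t) (Set.Icc (p+1) t) := by
  intro d hd d' hd' heq
  exact (key_inj hpt hgi hNi _ _ d d' hd hd'
    (fun m hm => nExit_min hpt hgi hNi hd hm)
    (fun m hm => nExit_min hpt hgi hNi hd' hm) heq).2

end Core

-- chunk4
/-! ### path cost accounting -/

section Cost

variable {g N : ℕ → X} {p t : ℕ} (c : ℕ → X) (hpt : p ≤ t)
variable (hgi : Set.InjOn g (Set.Icc 1 p)) (hNi : Set.InjOn N (Set.Icc 1 t))

/-- clients visited along the path of `d` -/
noncomputable def pathSet (g N : ℕ → X) (p t d : ℕ) : Finset ℕ :=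
  (Finset.range (nExit g N p t d)).image (fun m => pinv g p (orb g N p d m))

include hpt hgi hNi

lemma pathSet_subset {d : ℕ} (hd : d ∈ Set.Icc (p+1) t) :
    pathSet g N p t d ⊆ Finset.Icc 1 p := by
  intro x hx
  obtain ⟨m, hm, rfl⟩ := Finset.mem_image.1 hx
  rw [Finset.mem_range] at hm
  have := pinv_mem (nExit_min hpt hgi hNi hd hm)
  rw [Set.mem_Icc] at this
  rw [Finset.mem_Icc]
  exact this

lemma pinv_orb_inj {d : ℕ} (hd : d ∈ Set.Icc (p+1) t) {m m' : ℕ}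
    (hm : m < nExit g N p t d) (hm' : m' < nExit g N p t d)
    (h : pinv g p (orb g N p d m) = pinv g p (orb g N p d m')) : m = m' := by
  have h1 : orb g N p d m = orb g N p d m' := by
    rw [← g_pinv (nExit_min hpt hgi hNi hd hm), ← g_pinv (nExit_min hpt hgi hNi hd hm'), h]
  exact (key_inj hpt hgi hNi m m' d d hd hd
    (fun k hk => nExit_min hpt hgi hNi hd (by omega))
    (fun k hk => nExit_min hpt hgi hNi hd (by omega)) h1).1

lemma pathSet_disjoint {d d' : ℕ} (hd : d ∈ Set.Icc (p+1) t) (hd' : d' ∈ Set.Icc (p+1) t)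
    (hne : d ≠ d') : Disjoint (pathSet g N p t d) (pathSet g N p t d') := by
  rw [Finset.disjoint_left]
  intro x hx hx'
  obtain ⟨m, hm, hxe⟩ := Finset.mem_image.1 hx
  obtain ⟨m', hm', hxe'⟩ := Finset.mem_image.1 hx'
  rw [Finset.mem_range] at hm hm'
  have h1 : orb g N p d m = orb g N p d' m' := by
    rw [← g_pinv (nExit_min hpt hgi hNi hd hm), ← g_pinv (nExit_min hpt hgi hNi hd' hm'),
      hxe, hxe']
  exact hne (key_inj hpt hgi hNi m m' d d' hd hd'
    (fun k hk => nExit_min hpt hgi hNi hd (by omega))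
    (fun k hk => nExit_min hpt hgi hNi hd' (by omega)) h1).2

/-- triangle inequality along the path -/
lemma orb_dist_le {d : ℕ} (hd : d ∈ Set.Icc (p+1) t) :
    ∀ n ≤ nExit g N p t d, dist (orb g N p d 0) (orb g N p d n) ≤
      ∑ m ∈ Finset.range n, (dist (c (pinv g p (orb g N p d m))) (g (pinv g p (orb g N p d m))) +
        dist (c (pinv g p (orb g N p d m))) (N (pinv g p (orb g N p d m)))) := by
  intro n
  induction n with
  | zero => intro _; simp
  | succ n IH =>
    intro hn
    have hn' : n ≤ nExit g N p t d := by omega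
    have hmem : orb g N p d n ∈ VpS g p := nExit_min hpt hgi hNi hd (by omega)
    calc dist (orb g N p d 0) (orb g N p d (n+1))
        ≤ dist (orb g N p d 0) (orb g N p d n) + dist (orb g N p d n) (orb g N p d (n+1)) :=
          dist_triangle _ _ _
      _ ≤ (∑ m ∈ Finset.range n, (dist (c (pinv g p (orb g N p d m))) (g (pinv g p (orb g N p d m))) +
            dist (c (pinv g p (orb g N p d m))) (N (pinv g p (orb g N p d m))))) +
          dist (orb g N p d n) (orb g N p d (n+1)) := by
            have := IH hn'
            linarith
      _ ≤ _ := by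
          rw [Finset.sum_range_succ]
          set x := pinv g p (orb g N p d n) with hx
          have hgx : g x = orb g N p d n := g_pinv hmem
          have hNx : orb g N p d (n+1) = N x := orb_succ g N p d n
          have hstep : dist (orb g N p d n) (orb g N p d (n+1)) ≤
              dist (c x) (g x) + dist (c x) (N x) := by
            rw [hNx, ← hgx, dist_comm (c x) (g x)]
            exact dist_triangle _ _ _
          linarith

/-- per-client cost bound -/
lemma pEnd_cost {d : ℕ} (hd : d ∈ Set.Icc (p+1) t) :
    dist (c d) (pEnd g N p t d) ≤ dist (c d) (N d) +
      ∑ x ∈ pathSet g N p t d, (dist (c x) (g x) + dist (c x) (N x)) := by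
  have h1 : dist (c d) (pEnd g N p t d) ≤ dist (c d) (N d) +
      dist (orb g N p d 0) (orb g N p d (nExit g N p t d)) := by
    rw [orb_zero]
    exact dist_triangle _ _ _
  have h2 := orb_dist_le c hpt hgi hNi hd (nExit g N p t d) le_rfl
  have h3 : ∑ m ∈ Finset.range (nExit g N p t d),
      (dist (c (pinv g p (orb g N p d m))) (g (pinv g p (orb g N p d m))) +
        dist (c (pinv g p (orb g N p d m))) (N (pinv g p (orb g N p d m)))) =
      ∑ x ∈ pathSet g N p t d, (dist (c x) (g x) + dist (c x) (N x)) := by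
    rw [pathSet, Finset.sum_image]
    intro m hm m' hm' h
    rw [Finset.mem_coe, Finset.mem_range] at hm hm'
    exact pinv_orb_inj hpt hgi hNi hd hm hm' h
  unfold pEnd at h1 ⊢
  linarith [h2, h3 ▸ h2]

/-- total cost bound over all new clients -/
lemma pEnd_total_cost :
    ∑ d ∈ Finset.Icc (p+1) t, dist (c d) (pEnd g N p t d) ≤
      (∑ j ∈ Finset.Icc 1 t, dist (c j) (N j)) + ∑ j ∈ Finset.Icc 1 p, dist (c j) (g j) := by
  classical
  have step1 : ∑ d ∈ Finset.Icc (p+1) t, dist (c d) (pEnd g N p t d) ≤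
      ∑ d ∈ Finset.Icc (p+1) t, (dist (c d) (N d) +
        ∑ x ∈ pathSet g N p t d, (dist (c x) (g x) + dist (c x) (N x))) := by
    refine Finset.sum_le_sum fun d hd => ?_
    rw [Finset.mem_Icc] at hd
    exact pEnd_cost c hpt hgi hNi (Set.mem_Icc.2 hd)
  rw [Finset.sum_add_distrib] at step1
  have step2 : ∑ d ∈ Finset.Icc (p+1) t, ∑ x ∈ pathSet g N p t d,
      (dist (c x) (g x) + dist (c x) (N x)) ≤
      ∑ x ∈ Finset.Icc 1 p, (dist (c x) (g x) + dist (c x) (N x)) := by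
    rw [← Finset.sum_biUnion]
    · refine Finset.sum_le_sum_of_subset_of_nonneg ?_ (fun _ _ _ => by positivity)
      intro x hx
      obtain ⟨d, hd, hxd⟩ := Finset.mem_biUnion.1 hx
      rw [Finset.mem_Icc] at hd
      exact pathSet_subset hpt hgi hNi (Set.mem_Icc.2 hd) hxd
    · intro d hd d' hd' hne
      rw [Finset.mem_coe, Finset.mem_Icc] at hd hd'
      exact pathSet_disjoint hpt hgi hNi (Set.mem_Icc.2 hd) (Set.mem_Icc.2 hd') hne
  have step3 : ∑ d ∈ Finset.Icc (p+1) t, dist (c d) (N d) +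
      ∑ j ∈ Finset.Icc 1 p, dist (c j) (N j) = ∑ j ∈ Finset.Icc 1 t, dist (c j) (N j) := by
    rw [Finset.Icc_add_one_left_eq_Ioc, show (Finset.Icc 1 p) = Finset.Ioc 0 p from (Finset.Icc_add_one_left_eq_Ioc 0 p).symm,
      show (Finset.Icc 1 t) = Finset.Ioc 0 t from (Finset.Icc_add_one_left_eq_Ioc 0 t).symm,
      add_comm]
    exact Finset.sum_Ioc_consecutive _ (by omega) hpt
  have hsplit : ∑ x ∈ Finset.Icc 1 p, (dist (c x) (g x) + dist (c x) (N x)) =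
      ∑ x ∈ Finset.Icc 1 p, dist (c x) (g x) + ∑ x ∈ Finset.Icc 1 p, dist (c x) (N x) :=
    Finset.sum_add_distrib
  linarith

end Cost

-- chunk5
/-! ### the exchange lemma: nested optimal matchings -/

section Exchange

variable (S : Finset X) (c g N : ℕ → X) (p : ℕ)

lemma exchangeEX (hgS : IsMatching S p g) (hgopt : matchingCost p c g = OPT S p c)
    (hNS : IsMatching S (p+1) N) (hNopt : matchingCost (p+1) c N = OPT S (p+1) c) :
    ∃ f : ℕ → X, IsMatching S (p+1) f ∧ matchingCost (p+1) c f = OPT S (p+1) c ∧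
      g '' Set.Icc 1 p ⊆ f '' Set.Icc 1 (p+1) := by
  classical
  have hpt : p ≤ p + 1 := Nat.le_succ p
  have hgi := hgS.1
  have hNi := hNS.1
  have hd : (p+1) ∈ Set.Icc (p+1) (p+1) := Set.mem_Icc.2 ⟨le_rfl, le_rfl⟩
  set nE := nExit g N p (p+1) (p+1) with hnE
  set P := pathSet g N p (p+1) (p+1) with hP
  -- abbreviations
  have horb0 : orb g N p (p+1) 0 = N (p+1) := orb_zero g N p (p+1)
  have hPsub : P ⊆ Finset.Icc 1 p := pathSet_subset hpt hgi hNi hd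
  have horb_mem : ∀ m, m < nE → orb g N p (p+1) m ∈ VpS g p :=
    fun m hm => nExit_min hpt hgi hNi hd hm
  have horb_exit : orb g N p (p+1) nE ∉ VpS g p := nExit_spec hpt hgi hNi hd
  have horb_inj : ∀ i ≤ nE, ∀ j ≤ nE, orb g N p (p+1) i = orb g N p (p+1) j → i = j := by
    intro i hi j hj h
    exact (key_inj hpt hgi hNi i j (p+1) (p+1) hd hd
      (fun m hm => horb_mem m (by omega)) (fun m hm => horb_mem m (by omega)) h).1
  -- path clients
  have hx_mem : ∀ m, m < nE → pinv g p (orb g N p (p+1) m) ∈ Set.Icc 1 p :=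
    fun m hm => pinv_mem (horb_mem m hm)
  have hgx : ∀ m, m < nE → g (pinv g p (orb g N p (p+1) m)) = orb g N p (p+1) m :=
    fun m hm => g_pinv (horb_mem m hm)
  have hNx : ∀ m, orb g N p (p+1) (m+1) = N (pinv g p (orb g N p (p+1) m)) :=
    fun m => orb_succ g N p (p+1) m
  have hmemP : ∀ x, x ∈ P ↔ ∃ m, m < nE ∧ pinv g p (orb g N p (p+1) m) = x := by
    intro x
    rw [hP, pathSet]
    simp only [Finset.mem_image, Finset.mem_range, ← hnE]
  -- if g j hits the path, j is a path client
  have hgP : ∀ j ∈ Set.Icc 1 p, ∀ m, m < nE → g j = orb g N p (p+1) m → j ∈ P := by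
    intro j hj m hm hgj
    have : g j = g (pinv g p (orb g N p (p+1) m)) := by rw [hgx m hm, hgj]
    have := hgi hj (hx_mem m hm) this
    exact (hmemP j).2 ⟨m, hm, this.symm⟩
  -- path clients are ≤ p, in particular ≠ p+1
  have hPlep : ∀ x ∈ P, x ∈ Set.Icc 1 p := by
    intro x hx
    have := hPsub hx
    rw [Finset.mem_Icc] at this
    exact Set.mem_Icc.2 this
  -- the new matching
  set f : ℕ → X := fun j => if j = p+1 then N (p+1) else if j ∈ P then N j else g j with hf
  -- value characterizations
  have hf_top : f (p+1) = N (p+1) := by simp [hf]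
  have hf_path : ∀ x ∈ P, f x = N x := by
    intro x hx
    have hxp := hPlep x hx
    rw [Set.mem_Icc] at hxp
    simp only [hf]
    rw [if_neg (by omega), if_pos hx]
  have hf_off : ∀ j, j ≠ p+1 → j ∉ P → f j = g j := by
    intro j h1 h2
    simp only [hf]
    rw [if_neg h1, if_neg h2]
  -- N-values along the path as f-values
  have hval_path : ∀ m, m < nE → f (pinv g p (orb g N p (p+1) m)) = orb g N p (p+1) (m+1) := by
    intro m hm
    rw [hf_path _ ((hmemP _).2 ⟨m, hm, rfl⟩), hNx m]
  -- injectivity of f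
  have hf_inj : Set.InjOn f (Set.Icc 1 (p+1)) := by
    intro a ha b hb hab
    rw [Set.mem_Icc] at ha hb
    by_cases hap : a = p+1 <;> by_cases hbp : b = p+1
    · rw [hap, hbp]
    all_goals (try subst hap) <;> (try subst hbp)
    · -- a = p+1, b ≠ p+1
      exfalso
      by_cases hbP : b ∈ P
      · obtain ⟨m, hm, rfl⟩ := (hmemP b).1 hbP
        rw [hf_top, hval_path m hm, ← horb0] at hab
        have := horb_inj 0 (by omega) (m+1) (by omega) hab
        omega
      · rw [hf_top, hf_off b hbp hbP, ← horb0] at hab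
        rcases Nat.eq_zero_or_pos nE with h0 | h0
        · rw [h0] at horb_exit
          exact horb_exit ⟨b, Set.mem_Icc.2 ⟨hb.1, by omega⟩, hab.symm⟩
        · exact hbP (hgP b (Set.mem_Icc.2 ⟨hb.1, by omega⟩) 0 h0 hab.symm)
    · -- a ≠ p+1, b = p+1 : symmetric
      exfalso
      by_cases haP : a ∈ P
      · obtain ⟨m, hm, rfl⟩ := (hmemP a).1 haP
        rw [hf_top, hval_path m hm, ← horb0] at hab
        have := horb_inj (m+1) (by omega) 0 (by omega) hab
        omega
      · rw [hf_top, hf_off a hap haP, ← horb0] at hab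
        rcases Nat.eq_zero_or_pos nE with h0 | h0
        · rw [h0] at horb_exit
          exact horb_exit ⟨a, Set.mem_Icc.2 ⟨ha.1, by omega⟩, hab⟩
        · exact haP (hgP a (Set.mem_Icc.2 ⟨ha.1, by omega⟩) 0 h0 hab)
    · -- both ≠ p+1
      by_cases haP : a ∈ P <;> by_cases hbP : b ∈ P
      · obtain ⟨m, hm, ha'⟩ := (hmemP a).1 haP
        obtain ⟨m', hm', hb'⟩ := (hmemP b).1 hbP
        rw [← ha', ← hb', hval_path m hm, hval_path m' hm'] at hab
        have := horb_inj (m+1) (by omega) (m'+1) (by omega) hab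
        rw [← ha', ← hb']
        rw [show m = m' by omega]
      · exfalso
        obtain ⟨m, hm, ha'⟩ := (hmemP a).1 haP
        rw [← ha', hval_path m hm, hf_off b hbp hbP] at hab
        rcases Nat.lt_or_ge (m+1) nE with h1 | h1
        · exact hbP (hgP b (Set.mem_Icc.2 ⟨hb.1, by omega⟩) (m+1) h1 hab.symm)
        · have : m + 1 = nE := by omega
          rw [this] at hab
          exact horb_exit ⟨b, Set.mem_Icc.2 ⟨hb.1, by omega⟩, hab.symm⟩
      · exfalso
        obtain ⟨m, hm, hb'⟩ := (hmemP b).1 hbP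
        rw [← hb', hval_path m hm, hf_off a hap haP] at hab
        rcases Nat.lt_or_ge (m+1) nE with h1 | h1
        · exact haP (hgP a (Set.mem_Icc.2 ⟨ha.1, by omega⟩) (m+1) h1 hab)
        · have : m + 1 = nE := by omega
          rw [this] at hab
          exact horb_exit ⟨a, Set.mem_Icc.2 ⟨ha.1, by omega⟩, hab⟩
      · rw [hf_off a hap haP, hf_off b hbp hbP] at hab
        exact hgi (Set.mem_Icc.2 ⟨ha.1, by omega⟩) (Set.mem_Icc.2 ⟨hb.1, by omega⟩) hab
  -- values in S
  have hf_S : ∀ j ∈ Set.Icc 1 (p+1), f j ∈ S := by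
    intro j hj
    rw [Set.mem_Icc] at hj
    by_cases hjp : j = p+1
    · rw [hjp, hf_top]; exact hNS.2 (p+1) (Set.mem_Icc.2 ⟨by omega, le_rfl⟩)
    by_cases hjP : j ∈ P
    · rw [hf_path j hjP]
      exact hNS.2 j (Set.mem_Icc.2 ⟨hj.1, by omega⟩)
    · rw [hf_off j hjp hjP]
      exact hgS.2 j (Set.mem_Icc.2 ⟨hj.1, by omega⟩)
  -- image inclusion
  have hf_img : g '' Set.Icc 1 p ⊆ f '' Set.Icc 1 (p+1) := by
    rintro s ⟨x, hx, rfl⟩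
    by_cases hxP : x ∈ P
    · obtain ⟨m, hm, hx'⟩ := (hmemP x).1 hxP
      rw [← hx', hgx m hm]
      match m, hm with
      | 0, hm =>
        exact ⟨p+1, Set.mem_Icc.2 ⟨by omega, le_rfl⟩, by rw [hf_top, horb0]⟩
      | (m'+1), hm =>
        refine ⟨pinv g p (orb g N p (p+1) m'), ?_, ?_⟩
        · have := hx_mem m' (by omega)
          rw [Set.mem_Icc] at this ⊢
          omega
        · rw [hval_path m' (by omega)]
    · exact ⟨x, Set.Icc_subset_Icc le_rfl hpt hx, hf_off x (by
        rw [Set.mem_Icc] at hx; omega) hxP⟩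
  -- cost comparison via the off-path exchange
  have hcost : matchingCost (p+1) c f ≤ matchingCost (p+1) c N := by
    -- M'' : keep g on path clients, N off path
    set M2 : ℕ → X := fun j => if j ∈ P then g j else N j with hM2
    have hM2_inj : Set.InjOn M2 (Set.Icc 1 p) := by
      intro a ha b hb hab
      simp only [hM2] at hab
      by_cases haP : a ∈ P <;> by_cases hbP : b ∈ P <;>
        simp only [if_pos, if_neg, haP, hbP, if_true, if_false] at hab
      · exact hgi ha hb hab
      · exfalso
        obtain ⟨m, hm, ha'⟩ := (hmemP a).1 haP
        rw [← ha', hgx m hm] at hab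
        match m, hm with
        | 0, hm =>
          rw [horb0] at hab
          have hbt : b ∈ Set.Icc 1 (p+1) := Set.Icc_subset_Icc le_rfl hpt hb
          have := hNi (Set.mem_Icc.2 ⟨by omega, le_rfl⟩) hbt hab
          rw [Set.mem_Icc] at hb
          omega
        | (m'+1), hm =>
          rw [hNx m'] at hab
          have hbt : b ∈ Set.Icc 1 (p+1) := Set.Icc_subset_Icc le_rfl hpt hb
          have hxt : pinv g p (orb g N p (p+1) m') ∈ Set.Icc 1 (p+1) :=
            Set.Icc_subset_Icc le_rfl hpt (hx_mem m' (by omega))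
          have := hNi hxt hbt hab
          exact hbP (this ▸ (hmemP _).2 ⟨m', by omega, rfl⟩)
      · exfalso
        obtain ⟨m, hm, hb'⟩ := (hmemP b).1 hbP
        rw [← hb', hgx m hm] at hab
        match m, hm with
        | 0, hm =>
          rw [horb0] at hab
          have hat : a ∈ Set.Icc 1 (p+1) := Set.Icc_subset_Icc le_rfl hpt ha
          have := hNi hat (Set.mem_Icc.2 ⟨by omega, le_rfl⟩) hab
          rw [Set.mem_Icc] at ha
          omega
        | (m'+1), hm =>
          rw [hNx m'] at hab
          have hat : a ∈ Set.Icc 1 (p+1) := Set.Icc_subset_Icc le_rfl hpt ha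
          have hxt : pinv g p (orb g N p (p+1) m') ∈ Set.Icc 1 (p+1) :=
            Set.Icc_subset_Icc le_rfl hpt (hx_mem m' (by omega))
          have := hNi hat hxt hab
          exact haP (this ▸ (hmemP _).2 ⟨m', by omega, rfl⟩)
      · exact hNi (Set.Icc_subset_Icc le_rfl hpt ha) (Set.Icc_subset_Icc le_rfl hpt hb) hab
    have hM2_S : ∀ j ∈ Set.Icc 1 p, M2 j ∈ S := by
      intro j hj
      simp only [hM2]
      by_cases hjP : j ∈ P
      · rw [if_pos hjP]; exact hgS.2 j hj
      · rw [if_neg hjP]; exact hNS.2 j (Set.Icc_subset_Icc le_rfl hpt hj)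
    have hM2cost : OPT S p c ≤ matchingCost p c M2 := OPT_le_cost S ⟨hM2_inj, hM2_S⟩
    -- sum decompositions
    have hsum_g : matchingCost p c g =
        (∑ x ∈ Finset.Icc 1 p \ P, dist (c x) (g x)) + ∑ x ∈ P, dist (c x) (g x) := by
      rw [matchingCost, ← Finset.sum_sdiff hPsub]
    have hsum_M2 : matchingCost p c M2 =
        (∑ x ∈ Finset.Icc 1 p \ P, dist (c x) (N x)) + ∑ x ∈ P, dist (c x) (g x) := by
      rw [matchingCost, ← Finset.sum_sdiff hPsub]
      congr 1
      · refine Finset.sum_congr rfl fun x hx => ?_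
        rw [Finset.mem_sdiff] at hx
        simp only [hM2]
        rw [if_neg hx.2]
      · refine Finset.sum_congr rfl fun x hx => ?_
        simp only [hM2]
        rw [if_pos hx]
    have hoff : (∑ x ∈ Finset.Icc 1 p \ P, dist (c x) (g x)) ≤
        ∑ x ∈ Finset.Icc 1 p \ P, dist (c x) (N x) := by
      have := hM2cost
      rw [hsum_M2] at this
      rw [hgopt] at hsum_g
      linarith [hsum_g]
    have hIccsucc : Finset.Icc 1 (p+1) = insert (p+1) (Finset.Icc 1 p) := by
      exact (Finset.insert_Icc_right_eq_Icc_add_one (by omega)).symm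
    have hsum_f : matchingCost (p+1) c f =
        dist (c (p+1)) (N (p+1)) + ((∑ x ∈ Finset.Icc 1 p \ P, dist (c x) (g x)) +
          ∑ x ∈ P, dist (c x) (N x)) := by
      rw [matchingCost, hIccsucc, Finset.sum_insert (by simp), hf_top,
        ← Finset.sum_sdiff hPsub]
      congr 1
      congr 1
      · refine Finset.sum_congr rfl fun x hx => ?_
        rw [Finset.mem_sdiff, Finset.mem_Icc] at hx
        rw [hf_off x (by omega) hx.2]
      · refine Finset.sum_congr rfl fun x hx => ?_
        rw [hf_path x hx]
    have hsum_N : matchingCost (p+1) c N =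
        dist (c (p+1)) (N (p+1)) + ((∑ x ∈ Finset.Icc 1 p \ P, dist (c x) (N x)) +
          ∑ x ∈ P, dist (c x) (N x)) := by
      rw [matchingCost, hIccsucc, Finset.sum_insert (by simp), ← Finset.sum_sdiff hPsub]
    rw [hsum_f, hsum_N]
    linarith
  refine ⟨f, ⟨hf_inj, hf_S⟩, le_antisymm (hcost.trans_eq hNopt) (OPT_le_cost S ⟨hf_inj, hf_S⟩),
    hf_img⟩

end Exchange

-- chunk6
/-! ### the nested chain of optimal matchings -/

section Chain

variable (S : Finset X) (x0 : X)

lemma isMatching_zero : IsMatching S 0 (fun _ : ℕ => x0) := by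
  constructor
  · intro a ha
    rw [Set.mem_Icc] at ha; omega
  · intro j hj
    rw [Set.mem_Icc] at hj; omega

lemma matchingCost_zero (c : ℕ → X) (f : ℕ → X) : matchingCost 0 c f = 0 := by
  simp [matchingCost]

lemma chainEX (c : ℕ → X) (u : ℕ) (h : u + 1 ≤ S.card) (g : ℕ → X)
    (hg : u ≤ S.card → IsMatching S u g ∧
      matchingCost u (trunc x0 c u) g = OPT S u (trunc x0 c u)) :
    ∃ f : ℕ → X, (IsMatching S (u+1) f ∧ matchingCost (u+1) c f = OPT S (u+1) c) ∧
      g '' Set.Icc 1 u ⊆ f '' Set.Icc 1 (u+1) := by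
  obtain ⟨hgm, hgc⟩ := hg (by omega)
  have hagree : ∀ j ∈ Set.Icc 1 u, trunc x0 c u j = c j := by
    intro j hj
    rw [Set.mem_Icc] at hj
    exact trunc_eq_of_mem x0 c hj.1 hj.2
  have hgc' : matchingCost u c g = OPT S u c := by
    rw [← matchingCost_congr hagree (fun _ _ => rfl), hgc, OPT_congr S hagree]
  obtain ⟨N, hN, hNc⟩ := OPT_attained S c x0 h
  obtain ⟨f, hf1, hf2, hf3⟩ := exchangeEX S c g N u hgm hgc' hN hNc
  exact ⟨f, ⟨hf1, hf2⟩, hf3⟩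

noncomputable def chainP (c : ℕ → X) :
    (u : ℕ) → {f : ℕ → X // u ≤ S.card → IsMatching S u f ∧ matchingCost u c f = OPT S u c}
  | 0 => ⟨fun _ => x0, fun _ => ⟨isMatching_zero S x0, by
      rw [matchingCost_zero, OPT_zero]⟩⟩
  | (u+1) =>
    if h : u + 1 ≤ S.card then
      ⟨Classical.choose (chainEX S x0 c u h (chainP (trunc x0 c u) u).1
          (chainP (trunc x0 c u) u).2),
       fun _ => (Classical.choose_spec (chainEX S x0 c u h (chainP (trunc x0 c u) u).1
          (chainP (trunc x0 c u) u).2)).1⟩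
    else ⟨fun _ => x0, fun hle => absurd hle h⟩

lemma chain_nested (c : ℕ → X) (u : ℕ) (h : u + 1 ≤ S.card) :
    (chainP S x0 (trunc x0 c u) u).1 '' Set.Icc 1 u ⊆
      (chainP S x0 c (u+1)).1 '' Set.Icc 1 (u+1) := by
  have : (chainP S x0 c (u+1)).1 = Classical.choose (chainEX S x0 c u h
      (chainP S x0 (trunc x0 c u) u).1 (chainP S x0 (trunc x0 c u) u).2) := by
    simp only [chainP, dif_pos h]
  rw [this]
  exact (Classical.choose_spec (chainEX S x0 c u h (chainP S x0 (trunc x0 c u) u).1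
    (chainP S x0 (trunc x0 c u) u).2)).2

/-- the canonical optimal matching of the first `u` clients -/
noncomputable def chainN (c : ℕ → X) (u : ℕ) : ℕ → X := (chainP S x0 (trunc x0 c u) u).1

/-- its image -/
def chainImg (c : ℕ → X) (u : ℕ) : Set X := chainN S x0 c u '' Set.Icc 1 u

lemma chainN_prop (c : ℕ → X) (u : ℕ) (h : u ≤ S.card) :
    IsMatching S u (chainN S x0 c u) ∧ matchingCost u c (chainN S x0 c u) = OPT S u c := by
  obtain ⟨h1, h2⟩ := (chainP S x0 (trunc x0 c u) u).2 h
  refine ⟨h1, ?_⟩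
  have hagree : ∀ j ∈ Set.Icc 1 u, trunc x0 c u j = c j := by
    intro j hj
    rw [Set.mem_Icc] at hj
    exact trunc_eq_of_mem x0 c hj.1 hj.2
  rw [← matchingCost_congr hagree (fun _ _ => rfl), ← OPT_congr S hagree]
  exact h2

lemma chainImg_succ (c : ℕ → X) (u : ℕ) (h : u + 1 ≤ S.card) :
    chainImg S x0 c u ⊆ chainImg S x0 c (u+1) := by
  unfold chainImg chainN
  have h1 : trunc x0 (trunc x0 c (u+1)) u = trunc x0 c u := trunc_trunc x0 c (by omega)
  have := chain_nested S x0 (trunc x0 c (u+1)) u h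
  rw [h1] at this
  exact this

lemma chainImg_mono (c : ℕ → X) {q t : ℕ} (hqt : q ≤ t) (ht : t ≤ S.card) :
    chainImg S x0 c q ⊆ chainImg S x0 c t := by
  induction t with
  | zero =>
    have : q = 0 := by omega
    rw [this]
  | succ t IH =>
    rcases Nat.lt_or_ge q (t+1) with hlt | hge
    · exact (IH (by omega) (by omega)).trans (chainImg_succ S x0 c t ht)
    · have : q = t+1 := by omega
      rw [this]

end Chain

-- chunk7
/-! ### segments and the assembled online matching -/

section Assemble

variable (S : Finset X) (x0 : X)

lemma chainN_trunc (c : ℕ → X) {u t : ℕ} (h : u ≤ t) :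
    chainN S x0 (trunc x0 c t) u = chainN S x0 c u := by
  unfold chainN
  rw [trunc_trunc x0 c h]

lemma chainImg_trunc (c : ℕ → X) {u t : ℕ} (h : u ≤ t) :
    chainImg S x0 (trunc x0 c t) u = chainImg S x0 c u := by
  unfold chainImg
  rw [chainN_trunc S x0 c h]

lemma OPT_trunc (c : ℕ → X) {u t : ℕ} (h : u ≤ t) :
    OPT S u (trunc x0 c t) = OPT S u c := by
  refine OPT_congr S fun j hj => ?_
  rw [Set.mem_Icc] at hj
  exact trunc_eq_of_mem x0 c hj.1 (hj.2.trans h)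

lemma segEX (c : ℕ → X) (p t : ℕ) (hpt : p < t) (ht : t ≤ S.card) :
    ∃ F : ℕ → X,
      Set.InjOn F (Set.Icc (p+1) t) ∧
      (∀ j ∈ Set.Icc (p+1) t, F j ∈ chainImg S x0 c t ∧ F j ∉ chainImg S x0 c p) ∧
      ∑ j ∈ Finset.Icc (p+1) t, dist (c j) (F j) ≤ OPT S p c + OPT S t c := by
  have hp : p ≤ S.card := by omega
  have hple : p ≤ t := by omega
  obtain ⟨hgm, hgc⟩ := chainN_prop S x0 c p hp
  obtain ⟨hNm, hNc⟩ := chainN_prop S x0 c t ht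
  set g := chainN S x0 c p
  set N := chainN S x0 c t
  have hgi := hgm.1
  have hNi := hNm.1
  refine ⟨pEnd g N p t, pEnd_injOn hple hgi hNi, ?_, ?_⟩
  · intro j hj
    exact ⟨pEnd_mem_image hple hgi hNi hj, pEnd_not_mem hple hgi hNi hj⟩
  · have := pEnd_total_cost c hple hgi hNi
    calc ∑ j ∈ Finset.Icc (p+1) t, dist (c j) (pEnd g N p t j)
        ≤ (∑ j ∈ Finset.Icc 1 t, dist (c j) (N j)) + ∑ j ∈ Finset.Icc 1 p, dist (c j) (g j) :=
          this
      _ = OPT S t c + OPT S p c := by rw [← hNc, ← hgc]; rfl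
      _ = OPT S p c + OPT S t c := by ring

/-- the matching used for the segment `(p, t]` -/
noncomputable def segF (c : ℕ → X) (p t : ℕ) : ℕ → X :=
  if h : p < t ∧ t ≤ S.card then
    Classical.choose (segEX S x0 (trunc x0 c t) p t h.1 h.2)
  else fun _ => x0

lemma segF_spec (c : ℕ → X) (p t : ℕ) (hpt : p < t) (ht : t ≤ S.card) :
    Set.InjOn (segF S x0 c p t) (Set.Icc (p+1) t) ∧
    (∀ j ∈ Set.Icc (p+1) t, segF S x0 c p t j ∈ chainImg S x0 c t ∧
      segF S x0 c p t j ∉ chainImg S x0 c p) ∧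
    ∑ j ∈ Finset.Icc (p+1) t, dist (c j) (segF S x0 c p t j) ≤ OPT S p c + OPT S t c := by
  have h : p < t ∧ t ≤ S.card := ⟨hpt, ht⟩
  have hdef : segF S x0 c p t = Classical.choose (segEX S x0 (trunc x0 c t) p t h.1 h.2) := by
    rw [segF, dif_pos h]
  obtain ⟨h1, h2, h3⟩ := Classical.choose_spec (segEX S x0 (trunc x0 c t) p t h.1 h.2)
  rw [← hdef] at h1 h2 h3
  rw [chainImg_trunc S x0 c le_rfl, chainImg_trunc S x0 c (le_of_lt hpt)] at h2
  refine ⟨h1, h2, ?_⟩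
  rw [OPT_trunc S x0 c (le_of_lt hpt), OPT_trunc S x0 c le_rfl] at h3
  calc ∑ j ∈ Finset.Icc (p+1) t, dist (c j) (segF S x0 c p t j)
      = ∑ j ∈ Finset.Icc (p+1) t, dist (trunc x0 c t j) (segF S x0 c p t j) := by
        refine Finset.sum_congr rfl fun j hj => ?_
        rw [Finset.mem_Icc] at hj
        rw [trunc_eq_of_mem x0 c (by omega) hj.2]
    _ ≤ OPT S p c + OPT S t c := h3

/-- the assembled online matching: binary-counter segments -/
noncomputable def asm (c : ℕ → X) : ℕ → ℕ → X
  | 0 => fun _ => x0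
  | (n+1) => fun j =>
      if j ≤ B (n+1) then asm c (B (n+1)) j else segF S x0 c (B (n+1)) (n+1) j
  termination_by n => n
  decreasing_by exact B_lt (Nat.succ_ne_zero n)

lemma asm_zero (c : ℕ → X) : asm S x0 c 0 = fun _ => x0 := by rw [asm]

lemma asm_le {c : ℕ → X} {t j : ℕ} (ht : t ≠ 0) (hj : j ≤ B t) :
    asm S x0 c t j = asm S x0 c (B t) j := by
  obtain ⟨n, rfl⟩ := Nat.exists_eq_succ_of_ne_zero ht
  rw [asm]
  simp only [if_pos hj]

lemma asm_gt {c : ℕ → X} {t j : ℕ} (ht : t ≠ 0) (hj : ¬ j ≤ B t) :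
    asm S x0 c t j = segF S x0 c (B t) t j := by
  obtain ⟨n, rfl⟩ := Nat.exists_eq_succ_of_ne_zero ht
  rw [asm]
  simp only [if_neg hj]

lemma segF_congr {c₁ c₂ : ℕ → X} (p t : ℕ) (h : trunc x0 c₁ t = trunc x0 c₂ t) :
    segF S x0 c₁ p t = segF S x0 c₂ p t := by
  exact congrArg (fun cc => if h : p < t ∧ t ≤ S.card then
    Classical.choose (segEX S x0 cc p t h.1 h.2) else fun _ => x0) h


lemma asm_congr : ∀ t : ℕ, ∀ c₁ c₂ : ℕ → X,
    trunc x0 c₁ t = trunc x0 c₂ t → asm S x0 c₁ t = asm S x0 c₂ t := by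
  intro t
  induction t using Nat.strong_induction_on with
  | _ t IH =>
    intro c₁ c₂ h
    rcases Nat.eq_zero_or_pos t with rfl | ht
    · rw [asm_zero, asm_zero]
    have htne : t ≠ 0 := by omega
    funext j
    by_cases hj : j ≤ B t
    · rw [asm_le S x0 htne hj, asm_le S x0 htne hj]
      have hBt : trunc x0 c₁ (B t) = trunc x0 c₂ (B t) := by
        have h1 : trunc x0 (trunc x0 c₁ t) (B t) = trunc x0 (trunc x0 c₂ t) (B t) := by rw [h]
        rwa [trunc_trunc x0 c₁ (B_le t), trunc_trunc x0 c₂ (B_le t)] at h1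
      exact congrFun (IH (B t) (B_lt htne) c₁ c₂ hBt) j
    · rw [asm_gt S x0 htne hj, asm_gt S x0 htne hj, segF_congr S x0 (B t) t h]

end Assemble

-- chunk8
/-! ### properties of the assembled matching -/

section AsmProps

variable (S : Finset X) (x0 : X)

lemma chainImg_subset_S (c : ℕ → X) {t : ℕ} (ht : t ≤ S.card) :
    chainImg S x0 c t ⊆ ↑S := by
  rintro s ⟨j, hj, rfl⟩
  exact (chainN_prop S x0 c t ht).1.2 j hj

/-- the assembled matching is a matching, with image inside the chain image -/
lemma asm_isMatching : ∀ t : ℕ, t ≤ S.card → ∀ c : ℕ → X,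
    (∀ j ∈ Set.Icc 1 t, asm S x0 c t j ∈ chainImg S x0 c t) ∧ IsMatching S t (asm S x0 c t) := by
  intro t
  induction t using Nat.strong_induction_on with
  | _ t IH =>
    intro ht c
    rcases Nat.eq_zero_or_pos t with rfl | htpos
    · refine ⟨?_, ?_, ?_⟩ <;> intro j hj <;> rw [Set.mem_Icc] at hj <;> first
        | omega
        | (exact absurd hj (by omega))
    have htne : t ≠ 0 := by omega
    have hBlt := B_lt htne
    have hBcard : B t ≤ S.card := by omega
    obtain ⟨IHimg, IHmatch⟩ := IH (B t) hBlt hBcard c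
    obtain ⟨hFinj, hFmem, _⟩ := segF_spec S x0 c (B t) t hBlt ht
    have hval_le : ∀ j ∈ Set.Icc 1 t, j ≤ B t → asm S x0 c t j ∈ chainImg S x0 c (B t) := by
      intro j hj hjB
      rw [asm_le S x0 htne hjB]
      rw [Set.mem_Icc] at hj
      exact IHimg j (Set.mem_Icc.2 ⟨hj.1, hjB⟩)
    have hval_gt : ∀ j ∈ Set.Icc 1 t, ¬ j ≤ B t →
        asm S x0 c t j ∈ chainImg S x0 c t ∧ asm S x0 c t j ∉ chainImg S x0 c (B t) := by
      intro j hj hjB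
      rw [asm_gt S x0 htne hjB]
      rw [Set.mem_Icc] at hj
      exact hFmem j (Set.mem_Icc.2 ⟨by omega, hj.2⟩)
    have himg : ∀ j ∈ Set.Icc 1 t, asm S x0 c t j ∈ chainImg S x0 c t := by
      intro j hj
      by_cases hjB : j ≤ B t
      · exact chainImg_mono S x0 c (B_le t) ht (hval_le j hj hjB)
      · exact (hval_gt j hj hjB).1
    refine ⟨himg, ?_, fun j hj => chainImg_subset_S S x0 c ht (himg j hj)⟩
    -- injectivity
    intro a ha b hb hab
    by_cases haB : a ≤ B t <;> by_cases hbB : b ≤ B t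
    · rw [asm_le S x0 htne haB, asm_le S x0 htne hbB] at hab
      rw [Set.mem_Icc] at ha hb
      exact IHmatch.1 (Set.mem_Icc.2 ⟨ha.1, haB⟩) (Set.mem_Icc.2 ⟨hb.1, hbB⟩) hab
    · exfalso
      have h1 := hval_le a ha haB
      have h2 := (hval_gt b hb hbB).2
      rw [hab] at h1
      exact h2 h1
    · exfalso
      have h1 := hval_le b hb hbB
      have h2 := (hval_gt a ha haB).2
      rw [← hab] at h1
      exact h2 h1
    · rw [asm_gt S x0 htne haB, asm_gt S x0 htne hbB] at hab
      rw [Set.mem_Icc] at ha hb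
      exact hFinj (Set.mem_Icc.2 ⟨by omega, ha.2⟩) (Set.mem_Icc.2 ⟨by omega, hb.2⟩) hab

/-- cost bound for the assembled matching -/
lemma asm_cost : ∀ t : ℕ, t ≤ S.card → ∀ c : ℕ → X,
    matchingCost t c (asm S x0 c t) ≤ (2 * (cnt t : ℝ) - 1) * OPT S t c := by
  intro t
  induction t using Nat.strong_induction_on with
  | _ t IH =>
    intro ht c
    rcases Nat.eq_zero_or_pos t with rfl | htpos
    · rw [matchingCost_zero, OPT_zero]
      norm_num
    have htne : t ≠ 0 := by omega
    have hBlt := B_lt htne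
    have hBcard : B t ≤ S.card := by omega
    have IHB := IH (B t) hBlt hBcard c
    obtain ⟨_, _, hFcost⟩ := segF_spec S x0 c (B t) t hBlt ht
    have hsplit : matchingCost t c (asm S x0 c t) =
        (∑ j ∈ Finset.Icc 1 (B t), dist (c j) (asm S x0 c t j)) +
        ∑ j ∈ Finset.Icc (B t + 1) t, dist (c j) (asm S x0 c t j) := by
      rw [matchingCost,
        show (Finset.Icc 1 (B t)) = Finset.Ioc 0 (B t) from (Finset.Icc_add_one_left_eq_Ioc 0 (B t)).symm,
        show (Finset.Icc (B t + 1) t) = Finset.Ioc (B t) t by exact Finset.Icc_add_one_left_eq_Ioc (B t) t,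
        show (Finset.Icc 1 t) = Finset.Ioc 0 t from (Finset.Icc_add_one_left_eq_Ioc 0 t).symm]
      exact (Finset.sum_Ioc_consecutive _ (by omega) (by omega)).symm
    have hfirst : (∑ j ∈ Finset.Icc 1 (B t), dist (c j) (asm S x0 c t j)) =
        matchingCost (B t) c (asm S x0 c (B t)) := by
      rw [matchingCost]
      refine Finset.sum_congr rfl fun j hj => ?_
      rw [Finset.mem_Icc] at hj
      rw [asm_le S x0 htne hj.2]
    have hsecond : (∑ j ∈ Finset.Icc (B t + 1) t, dist (c j) (asm S x0 c t j)) ≤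
        OPT S (B t) c + OPT S t c := by
      refine le_trans (le_of_eq ?_) hFcost
      refine Finset.sum_congr rfl fun j hj => ?_
      rw [Finset.mem_Icc] at hj
      rw [asm_gt S x0 htne (by omega)]
    have hOPTmono : OPT S (B t) c ≤ OPT S t c := OPT_mono S (B_le t) ht c x0
    have hOPTnn : 0 ≤ OPT S t c := OPT_nonneg S t c
    have hOPTnnB : 0 ≤ OPT S (B t) c := OPT_nonneg S (B t) c
    have hcnt : (cnt t : ℝ) = (cnt (B t) : ℝ) + 1 := by
      rw [cnt_eq htne]
      push_cast
      ring
    have hcntB : (1:ℝ) ≤ cnt t := by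
      have : 1 ≤ cnt t := by rw [cnt_eq htne]; omega
      exact_mod_cast this
    calc matchingCost t c (asm S x0 c t)
        = matchingCost (B t) c (asm S x0 c (B t)) +
          ∑ j ∈ Finset.Icc (B t + 1) t, dist (c j) (asm S x0 c t j) := by
          rw [hsplit, hfirst]
      _ ≤ (2 * (cnt (B t) : ℝ) - 1) * OPT S (B t) c + (OPT S (B t) c + OPT S t c) := by
          linarith [hsecond]
      _ ≤ (2 * (cnt (B t) : ℝ) - 1) * OPT S t c + (OPT S t c + OPT S t c) := by
          have h1 : (0:ℝ) ≤ 2 * (cnt (B t) : ℝ) - 1 ∨ cnt (B t) = 0 := by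
            rcases Nat.eq_zero_or_pos (cnt (B t)) with h | h
            · exact Or.inr h
            · left
              have : (1:ℝ) ≤ (cnt (B t) : ℝ) := by exact_mod_cast h
              linarith
          rcases h1 with h1 | h1
          · have := mul_le_mul_of_nonneg_left hOPTmono h1
            linarith
          · rw [h1]
            norm_num
      _ = (2 * (cnt t : ℝ) - 1) * OPT S t c := by
          rw [hcnt]; ring

end AsmProps

-- chunk9
/-! ### consistency over time -/

section Consist

variable (S : Finset X) (x0 : X)

lemma asm_iter (c : ℕ → X) : ∀ i t j, j ≤ B^[i] t → asm S x0 c t j = asm S x0 c (B^[i] t) j := by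
  intro i
  induction i with
  | zero => intro t j _; rfl
  | succ i IH =>
    intro t j hj
    rw [Function.iterate_succ_apply'] at hj ⊢
    have hj' : j ≤ B^[i] t := hj.trans (B_le _)
    rw [IH t j hj']
    rcases Nat.eq_zero_or_pos (B^[i] t) with h0 | hpos
    · rw [h0, B_zero]
    · exact asm_le S x0 (by omega) hj

lemma asm_pred (c : ℕ → X) {t j : ℕ} (ht : t ≠ 0) (hj : j ≤ B t) :
    asm S x0 c t j = asm S x0 c (t-1) j := by
  obtain ⟨i, hi⟩ := B_pred_iterate t ht
  have h1 : asm S x0 c (t-1) j = asm S x0 c (B^[i] (t-1)) j := by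
    rw [asm_iter S x0 c i (t-1) j (by rw [hi]; exact hj)]
  rw [h1, hi, asm_le S x0 ht hj]

end Consist

end OMRec

open OMRec in
/-- For every metric space `(X,d)` and finite server set `S` with `|S| = k ≥ 1`, there is a
deterministic online matching algorithm `A` for `S` such that for every client sequence
`c 1, …, c k`: (i) at every time `1 ≤ t ≤ k` the matching maintained has cost at most
`(2⌈log₂(t+1)⌉ − 1) · OPT_t`, and (ii) every client index `j` is reassigned at most
`⌊log₂ k⌋` times over the whole sequence. -/
theorem stmt0 {X : Type*} [MetricSpace X] (S : Finset X) (hk : 1 ≤ S.card) :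
    ∃ A : (t : ℕ) → (Fin t → X) → (ℕ → X),
      (∀ t, t ≤ S.card → ∀ cp : Fin t → X, IsMatching S t (A t cp)) ∧
      ∀ c : ℕ → X,
        (∀ t, 1 ≤ t → t ≤ S.card →
          matchingCost t c (A t (prefixOf c t)) ≤
            (2 * (Nat.clog 2 (t + 1) : ℝ) - 1) * OPT S t c) ∧
        (∀ j, 1 ≤ j → j ≤ S.card →
          {t : ℕ | j < t ∧ t ≤ S.card ∧
              A t (prefixOf c t) j ≠ A (t - 1) (prefixOf c (t - 1)) j}.ncard
            ≤ Nat.log 2 S.card) := by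
  classical
  have hS : S.Nonempty := Finset.card_pos.1 hk
  obtain ⟨x0, _⟩ := hS
  -- extend a prefix to a total client function
  set pext : (t : ℕ) → (Fin t → X) → (ℕ → X) :=
    fun t cp j => if h : 1 ≤ j ∧ j ≤ t then cp ⟨j - 1, by omega⟩ else x0 with hpext
  refine ⟨fun t cp => asm S x0 (pext t cp) t, ?_, ?_⟩
  · intro t ht cp
    exact (asm_isMatching S x0 t ht (pext t cp)).2
  intro c
  have hpe : ∀ t, pext t (prefixOf c t) = trunc x0 c t := by
    intro t
    funext j
    by_cases h : 1 ≤ j ∧ j ≤ t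
    · rw [hpext]
      simp only [dif_pos h]
      rw [trunc_eq_of_mem x0 c h.1 h.2]
      show c (j - 1 + 1) = c j
      congr 1
      omega
    · rw [hpext]
      simp only [dif_neg h]
      simp only [trunc, if_neg h]
  constructor
  · -- cost bound
    intro t ht1 ht2
    change matchingCost t c (asm S x0 (pext t (prefixOf c t)) t) ≤ _
    rw [hpe t]
    have hcost := asm_cost S x0 t ht2 (trunc x0 c t)
    have hagree : ∀ j ∈ Set.Icc 1 t, trunc x0 c t j = c j := by
      intro j hj
      rw [Set.mem_Icc] at hj
      exact trunc_eq_of_mem x0 c hj.1 hj.2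
    rw [matchingCost_congr hagree (fun _ _ => rfl), OPT_trunc S x0 c le_rfl] at hcost
    refine hcost.trans ?_
    have h1 : cnt t ≤ Nat.clog 2 (t+1) := cnt_le_clog t (by omega)
    have h2 : (2 * (cnt t : ℝ) - 1) ≤ 2 * (Nat.clog 2 (t + 1) : ℝ) - 1 := by
      have : (cnt t : ℝ) ≤ (Nat.clog 2 (t+1) : ℝ) := by exact_mod_cast h1
      linarith
    exact mul_le_mul_of_nonneg_right h2 (OPT_nonneg S t c)
  · -- recourse bound
    intro j hj1 hj2
    set R : Set ℕ := {t : ℕ | j < t ∧ t ≤ S.card ∧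
      asm S x0 (pext t (prefixOf c t)) t j ≠
        asm S x0 (pext (t-1) (prefixOf c (t-1))) (t-1) j} with hR
    have hwin : ∀ t ∈ R, B t < j ∧ j < t ∧ t ≤ S.card := by
      intro t htR
      rw [hR] at htR
      obtain ⟨hjt, htc, hne⟩ := htR
      refine ⟨?_, hjt, htc⟩
      by_contra hBj
      push_neg at hBj
      apply hne
      rw [hpe t, hpe (t-1)]
      have ht0 : t ≠ 0 := by omega
      rw [asm_pred S x0 (trunc x0 c t) ht0 hBj]
      have : trunc x0 (trunc x0 c t) (t-1) = trunc x0 (trunc x0 c (t-1)) (t-1) := by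
        rw [trunc_trunc x0 c (by omega : t - 1 ≤ t), trunc_self]
      exact congrFun (asm_congr S x0 (t-1) (trunc x0 c t) (trunc x0 c (t-1)) this) j
    -- inject R into [1, log₂ k] via the 2-adic valuation
    have hinj : Set.InjOn (fun t => t.factorization 2) R := by
      intro t1 h1 t2 h2 heq
      obtain ⟨hB1, hj1', _⟩ := hwin t1 h1
      obtain ⟨hB2, hj2', _⟩ := hwin t2 h2
      have heq' : t1.factorization 2 = t2.factorization 2 := heq
      have : lowB t1 = lowB t2 := by unfold lowB; rw [heq']
      exact lowB_inj_on_window hB1 hj1' hB2 hj2' this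
    have hmaps : ∀ t ∈ R, (fun t => t.factorization 2) t ∈ Set.Icc 1 (Nat.log 2 S.card) := by
      intro t htR
      obtain ⟨hB, hjt, htc⟩ := hwin t htR
      have h2le : 2 ≤ lowB t := lowB_ge_two hB hjt
      have hv1 : 1 ≤ t.factorization 2 := by
        by_contra hv
        push_neg at hv
        have : t.factorization 2 = 0 := by omega
        rw [lowB, this] at h2le
        norm_num at h2le
      have hvlog : t.factorization 2 ≤ Nat.log 2 S.card := by
        have hlow_le : 2 ^ (t.factorization 2) ≤ S.card := by
          have h1 : lowB t ≤ t := lowB_le (by omega)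
          rw [lowB] at h1
          omega
        exact (Nat.le_log_iff_pow_le (by norm_num) (by omega)).2 hlow_le
      exact Set.mem_Icc.2 ⟨hv1, hvlog⟩
    have hfin : (Set.Icc 1 (Nat.log 2 S.card)).Finite := Set.finite_Icc _ _
    have hle := Set.ncard_le_ncard_of_injOn _ hmaps hinj hfin
    refine le_trans (le_of_eq ?_) (hle.trans ?_)
    · rw [hR]
    · rw [show Set.Icc 1 (Nat.log 2 S.card) = ↑(Finset.Icc 1 (Nat.log 2 S.card)) by
        rw [Finset.coe_Icc], Set.ncard_coe_finset, Nat.card_Icc]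
      omega
end

section
/- Let n ≥ 2, let X = {0,1,…,n} carry the star metric, i.e. d(x,y) = 0 if x = y, d(0,i) = d(i,0) = 1 for i ≥ 1, and d(i,j) = 2 for distinct i,j ≥ 1, and let the server set be S = {1,…,n}. Let C ≥ 1 be an integer and let A be a deterministic online matching algorithm for S with per-client recourse at most C, i.e. for every client sequence (c_1,…,c_m) with m ≤ n and every index j ≤ m, the set of servers {A(c_1,…,c_t)(j) : j ≤ t ≤ m} has cardinality at most C. Then there exist m ≤ n, a sequence (c_1,…,c_m) of pairwise distinct points of X with c_1 = 0, and a time t ≤ m such that the cost of the matching A(c_1,…,c_t) is at least log n / log(C+1) − 1, while OPT_t = 1. -/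
section AdvDefs

variable {X : Type*}

open Classical in
noncomputable def nextAdv (A : (t : ℕ) → (Fin t → X) → (ℕ → X)) (τ : ℕ) (cp : ℕ → X)
    (q : ℕ) : ℕ :=
  if h : ∃ j, j ∈ Finset.Icc 1 τ ∧ cp j = A τ (fun i => cp (i.1 + 1)) q then h.choose else 0

noncomputable def pathAdv (A : (t : ℕ) → (Fin t → X) → (ℕ → X)) (τ : ℕ) (cp : ℕ → X)
    (i : ℕ) : ℕ :=
  (nextAdv A τ cp)^[i] 1

def termAdv (A : (t : ℕ) → (Fin t → X) → (ℕ → X)) (τ : ℕ) (cp : ℕ → X) (q : ℕ) : Prop :=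
  ¬ ∃ j, j ∈ Finset.Icc 1 τ ∧ cp j = A τ (fun i => cp (i.1 + 1)) q

open Classical in
noncomputable def tipLen (A : (t : ℕ) → (Fin t → X) → (ℕ → X)) (τ : ℕ) (cp : ℕ → X) : ℕ :=
  if h : ∃ i, termAdv A τ cp (pathAdv A τ cp i) then Nat.find h else 0

noncomputable def attackVal (A : (t : ℕ) → (Fin t → X) → (ℕ → X)) (τ : ℕ) (cp : ℕ → X) : X :=
  A τ (fun i => cp (i.1 + 1)) (pathAdv A τ cp (tipLen A τ cp))

noncomputable def advVec (A : (t : ℕ) → (Fin t → X) → (ℕ → X)) (x0 : X) : ℕ → ℕ → X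
  | 0 => fun _ => x0
  | (t+1) => fun s => if s ≤ t then advVec A x0 t s else
      if 1 ≤ t then attackVal A t (advVec A x0 t) else x0

noncomputable def adv (A : (t : ℕ) → (Fin t → X) → (ℕ → X)) (x0 : X) (s : ℕ) : X :=
  advVec A x0 s s

lemma advVec_eq_adv (A : (t : ℕ) → (Fin t → X) → (ℕ → X)) (x0 : X) :
    ∀ t s, s ≤ t → advVec A x0 t s = adv A x0 s := by
  intro t
  induction t with
  | zero => intro s hs; interval_cases s; rfl
  | succ t ih =>
    intro s hs
    rcases Nat.lt_or_ge s (t+1) with h | h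
    · have hs' : s ≤ t := Nat.lt_succ_iff.mp h
      rw [show advVec A x0 (t+1) s = advVec A x0 t s from if_pos hs', ih s hs']
    · have : s = t + 1 := le_antisymm hs h
      subst this; rfl

lemma adv_one (A : (t : ℕ) → (Fin t → X) → (ℕ → X)) (x0 : X) : adv A x0 1 = x0 := by
  show advVec A x0 1 1 = x0
  simp [advVec]

lemma adv_succ (A : (t : ℕ) → (Fin t → X) → (ℕ → X)) (x0 : X) (τ : ℕ) (hτ : 1 ≤ τ) :
    adv A x0 (τ+1) = attackVal A τ (advVec A x0 τ) := by
  show advVec A x0 (τ+1) (τ+1) = _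
  rw [show advVec A x0 (τ+1) (τ+1) = _ from if_neg (by omega)]
  rw [if_pos hτ]

end AdvDefs

/-- Lower bound on the star metric: let `X` contain the points `v 0, v 1, …, v n` of the star
metric (`dist (v 0) (v i) = 1` for `i ≠ 0`, `dist (v i) (v j) = 2` for distinct nonzero
`i, j`), let the server set be `S = {v 1, …, v n}`, and let `A` be a deterministic online
matching algorithm for `S` with per-client recourse at most `C` (for every client sequence of
length `m ≤ n` and every client index `j ≤ m`, the set of servers client `j` is ever matched
to has cardinality at most `C`).  Then there are `m ≤ n`, a sequence of `m` pairwise distinct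
points of the star with `c 1 = v 0`, and a time `t ≤ m` at which the algorithm's matching has
cost at least `log n / log (C+1) − 1`, while `OPT_t = 1`. -/
theorem stmt1 {X : Type*} [MetricSpace X] (n : ℕ) (hn : 2 ≤ n)
    (v : Fin (n + 1) → X)
    (hd1 : ∀ i : Fin (n + 1), i ≠ 0 → dist (v 0) (v i) = 1)
    (hd2 : ∀ i j : Fin (n + 1), i ≠ 0 → j ≠ 0 → i ≠ j → dist (v i) (v j) = 2)
    (S : Finset X) (hS : ∀ x, x ∈ S ↔ ∃ i : Fin (n + 1), i ≠ 0 ∧ x = v i)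
    (C : ℕ) (hC : 1 ≤ C)
    (A : (t : ℕ) → (Fin t → X) → (ℕ → X))
    (hA : ∀ t, t ≤ S.card → ∀ cp : Fin t → X, IsMatching S t (A t cp))
    (hrec : ∀ c : ℕ → X, ∀ m, m ≤ n → ∀ j, 1 ≤ j → j ≤ m →
        ((fun t => A t (prefixOf c t) j) '' Set.Icc j m).ncard ≤ C) :
    ∃ m, m ≤ n ∧ ∃ c : ℕ → X,
      c 1 = v 0 ∧ Set.InjOn c (Set.Icc 1 m) ∧
      (∀ j ∈ Set.Icc 1 m, c j ∈ Set.range v) ∧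
      ∃ t, 1 ≤ t ∧ t ≤ m ∧
        Real.log n / Real.log ((C : ℝ) + 1) - 1 ≤ matchingCost t c (A t (prefixOf c t)) ∧
        OPT S t c = 1 := by
  classical
  -- basic facts about v and S
  have hvinj : Function.Injective v := by
    intro a b hab
    by_contra hne
    rcases eq_or_ne a 0 with rfl | ha0
    · have hb0 : b ≠ 0 := fun h => hne (h ▸ rfl)
      have := hd1 b hb0
      rw [hab, dist_self] at this; norm_num at this
    · rcases eq_or_ne b 0 with rfl | hb0
      · have := hd1 a ha0
        rw [← hab, dist_self] at this; norm_num at this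
      · have := hd2 a b ha0 hb0 hne
        rw [hab, dist_self] at this; norm_num at this
  have hv0S : v 0 ∉ S := by
    intro h
    rcases (hS (v 0)).mp h with ⟨i, hi0, hi⟩
    exact hi0 (hvinj hi.symm)
  have hScard : S.card = n := by
    have hSeq : S = (Finset.univ.erase (0 : Fin (n+1))).image v := by
      ext x
      simp only [Finset.mem_image, Finset.mem_erase, Finset.mem_univ, and_true, hS x]
      constructor
      · rintro ⟨i, hi0, rfl⟩; exact ⟨i, hi0, rfl⟩
      · rintro ⟨i, hi0, rfl⟩; exact ⟨i, hi0, rfl⟩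
    rw [hSeq, Finset.card_image_of_injective _ hvinj, Finset.card_erase_of_mem (Finset.mem_univ _)]
    simp
  set x0 := v 0 with hx0
  set c : ℕ → X := adv A x0 with hc
  set F : ℕ → ℕ → X := fun τ => A τ (prefixOf c τ) with hFdef
  have hvec : ∀ τ s, s ≤ τ → advVec A x0 τ s = c s := fun τ s hs => advVec_eq_adv A x0 τ s hs
  have hAF : ∀ τ q, A τ (fun i : Fin τ => advVec A x0 τ (i.1 + 1)) q = F τ q := by
    intro τ q
    have : (fun i : Fin τ => advVec A x0 τ (i.1 + 1)) = prefixOf c τ := by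
      funext i; exact hvec τ (i.1 + 1) (by omega)
    rw [this]
  have hc1 : c 1 = v 0 := adv_one A x0
  have hFinj : ∀ τ, τ ≤ n → Set.InjOn (F τ) (Set.Icc 1 τ) :=
    fun τ hτ => (hA τ (hScard ▸ hτ) (prefixOf c τ)).1
  have hFS : ∀ τ, τ ≤ n → ∀ q, 1 ≤ q → q ≤ τ → F τ q ∈ S :=
    fun τ hτ q h1 h2 => (hA τ (hScard ▸ hτ) (prefixOf c τ)).2 q ⟨h1, h2⟩
  set P : ℕ → ℕ → ℕ := fun τ i => pathAdv A τ (advVec A x0 τ) i with hPdef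
  set R : ℕ → ℕ := fun τ => tipLen A τ (advVec A x0 τ) with hRdef
  set T : ℕ → ℕ → Prop := fun τ q => termAdv A τ (advVec A x0 τ) q with hTdef
  have hP0 : ∀ τ, P τ 0 = 1 := by intro τ; simp [hPdef, pathAdv]
  have hPsucc : ∀ τ i, P τ (i+1) = nextAdv A τ (advVec A x0 τ) (P τ i) := by
    intro τ i
    simp only [hPdef, pathAdv, Function.iterate_succ_apply']
  have hnext : ∀ τ q, ¬ T τ q →
      (nextAdv A τ (advVec A x0 τ) q) ∈ Finset.Icc 1 τ ∧
      c (nextAdv A τ (advVec A x0 τ) q) = F τ q := by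
    intro τ q hq
    have h : ∃ j, j ∈ Finset.Icc 1 τ ∧ advVec A x0 τ j = A τ (fun i => advVec A x0 τ (i.1+1)) q := by
      simp only [hTdef, termAdv, not_not] at hq; exact hq
    rw [nextAdv, dif_pos h]
    obtain ⟨hmem, heq⟩ := h.choose_spec
    refine ⟨hmem, ?_⟩
    rw [← hvec τ h.choose (Finset.mem_Icc.mp hmem).2, heq, hAF]
  have hterm : ∀ τ q, T τ q → ∀ j, 1 ≤ j → j ≤ τ → c j ≠ F τ q := by
    intro τ q hq j h1 h2 hcj
    refine hq ⟨j, Finset.mem_Icc.mpr ⟨h1, h2⟩, ?_⟩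
    rw [hvec τ j h2, hcj, hAF]
  have hPmem : ∀ τ, 1 ≤ τ → τ ≤ n → ∀ i, (∀ k, k < i → ¬ T τ (P τ k)) →
      1 ≤ P τ i ∧ P τ i ≤ τ := by
    intro τ h1 h2 i
    induction i with
    | zero => intro _; rw [hP0]; exact ⟨le_refl 1, h1⟩
    | succ i ih =>
      intro hk
      have := (hnext τ (P τ i) (hk i (by omega))).1
      rw [hPsucc]
      exact Finset.mem_Icc.mp this
  have hPne1 : ∀ τ, 1 ≤ τ → τ ≤ n → ∀ i, (∀ k, k < i+1 → ¬ T τ (P τ k)) →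
      P τ (i+1) ≠ 1 := by
    intro τ h1 h2 i hk heq
    have hmi := hPmem τ h1 h2 i (fun k hk' => hk k (by omega))
    have h2' := (hnext τ (P τ i) (hk i (by omega))).2
    rw [← hPsucc, heq, hc1] at h2'
    apply hv0S
    rw [hx0, h2']
    exact hFS τ h2 (P τ i) hmi.1 hmi.2
  have hPinj : ∀ τ, 1 ≤ τ → τ ≤ n → ∀ j i, i < j → (∀ k, k < j → ¬ T τ (P τ k)) →
      P τ i ≠ P τ j := by
    intro τ h1 h2 j
    induction j with
    | zero => intro i hi; omega
    | succ j ih =>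
      intro i hij hk heq
      rcases Nat.eq_zero_or_pos i with rfl | hi
      · exact hPne1 τ h1 h2 j hk (by rw [← heq, hP0])
      · obtain ⟨i', rfl⟩ : ∃ i', i = i' + 1 := ⟨i-1, by omega⟩
        have hti' : ¬ T τ (P τ i') := hk i' (by omega)
        have htj : ¬ T τ (P τ j) := hk j (by omega)
        have e1 := hnext τ (P τ i') hti'
        have e2 := hnext τ (P τ j) htj
        rw [hPsucc, hPsucc] at heq
        have hFeq2 : F τ (P τ i') = F τ (P τ j) := by rw [← e1.2, ← e2.2, heq]
        have hmi := hPmem τ h1 h2 i' (fun k hk' => hk k (by omega))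
        have hmj := hPmem τ h1 h2 j (fun k hk' => hk k (by omega))
        have : P τ i' = P τ j :=
          hFinj τ h2 ⟨hmi.1, hmi.2⟩ ⟨hmj.1, hmj.2⟩ hFeq2
        exact ih i' (by omega) (fun k hk' => hk k (by omega)) this
  have hTex : ∀ τ, 1 ≤ τ → τ ≤ n → ∃ i, i ≤ τ ∧ T τ (P τ i) := by
    intro τ h1 h2
    by_contra hcon
    push_neg at hcon
    have hnt : ∀ k, k ≤ τ → ¬ T τ (P τ k) := hcon
    have hsub : ∀ i ∈ Finset.range (τ+2), P τ i ∈ Finset.Icc 1 τ := by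
      intro i hi
      rw [Finset.mem_range] at hi
      have := hPmem τ h1 h2 i (fun k hk' => hnt k (by omega))
      exact Finset.mem_Icc.mpr this
    have hinj : Set.InjOn (P τ) (Finset.range (τ+2)) := by
      intro a ha b hb hab
      simp only [Finset.coe_range, Set.mem_Iio] at ha hb
      by_contra hne
      rcases Nat.lt_or_ge a b with h | h
      · exact hPinj τ h1 h2 b a h (fun k hk' => hnt k (by omega)) hab
      · have : b < a := by omega
        exact hPinj τ h1 h2 a b this (fun k hk' => hnt k (by omega)) hab.symm
    have := Finset.card_le_card_of_injOn (P τ) hsub hinj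
    simp only [Finset.card_range, Nat.card_Icc] at this
    omega
  have hRfacts : ∀ τ, 1 ≤ τ → τ ≤ n →
      R τ ≤ τ ∧ T τ (P τ (R τ)) ∧ (∀ k, k < R τ → ¬ T τ (P τ k)) := by
    intro τ h1 h2
    obtain ⟨i, hi, hti⟩ := hTex τ h1 h2
    have hex : ∃ i, termAdv A τ (advVec A x0 τ) (pathAdv A τ (advVec A x0 τ) i) := ⟨i, hti⟩
    have hR : R τ = Nat.find hex := by
      simp only [hRdef, tipLen]
      rw [dif_pos hex]
    refine ⟨?_, ?_, ?_⟩
    · rw [hR]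
      exact le_trans (Nat.find_le hti) hi
    · rw [hR]; exact Nat.find_spec hex
    · intro k hk; rw [hR] at hk; exact Nat.find_min hex hk
  have hcsucc : ∀ τ, 1 ≤ τ → c (τ+1) = F τ (P τ (R τ)) := by
    intro τ h1
    show adv A x0 (τ+1) = _
    rw [adv_succ A x0 τ h1]
    simp only [attackVal]
    rw [hAF]
  have hfresh : ∀ τ, 1 ≤ τ → τ ≤ n → ∀ j, 1 ≤ j → j ≤ τ → c j ≠ c (τ+1) := by
    intro τ h1 h2 j hj1 hj2
    rw [hcsucc τ h1]
    exact hterm τ (P τ (R τ)) (hRfacts τ h1 h2).2.1 j hj1 hj2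
  have hcS : ∀ j, 2 ≤ j → j ≤ n → c j ∈ S := by
    intro j hj2 hjn
    obtain ⟨τ, rfl⟩ : ∃ τ, j = τ + 1 := ⟨j-1, by omega⟩
    have h1 : 1 ≤ τ := by omega
    have h2 : τ ≤ n := by omega
    rw [hcsucc τ h1]
    have hm := hPmem τ h1 h2 (R τ) (hRfacts τ h1 h2).2.2
    exact hFS τ h2 _ hm.1 hm.2
  have hcinj : Set.InjOn c (Set.Icc 1 n) := by
    have key : ∀ a b, 1 ≤ a → a < b → b ≤ n → c a ≠ c b := by
      intro a b ha hab hbn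
      obtain ⟨τ, rfl⟩ : ∃ τ, b = τ + 1 := ⟨b-1, by omega⟩
      exact hfresh τ (by omega) (by omega) a ha (by omega)
    intro a ha b hb hab
    by_contra hne
    rcases Nat.lt_or_ge a b with h | h
    · exact key a b ha.1 h hb.2 hab
    · have : b < a := by omega
      exact key b a hb.1 this ha.2 hab.symm
  set o : ℕ → ℕ → ℕ := fun q τ => if h : ∃ d, F (q+d) q = F τ q then q + Nat.find h else 0
    with hodef
  set idx : ℕ → ℕ → ℕ := fun q τ => ((Finset.Icc q (o q τ)).image (fun t => F t q)).card
    with hidxdef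
  have hofacts : ∀ q τ, 1 ≤ q → q ≤ τ → τ ≤ n →
      q ≤ o q τ ∧ o q τ ≤ τ ∧ F (o q τ) q = F τ q ∧
        (∀ t, q ≤ t → t < o q τ → F t q ≠ F τ q) := by
    intro q τ h1 h2 h3
    have hex : ∃ d, F (q+d) q = F τ q := ⟨τ - q, by rw [Nat.add_sub_cancel' h2]⟩
    have ho : o q τ = q + Nat.find hex := by simp only [hodef]; rw [dif_pos hex]
    refine ⟨by omega, ?_, ?_, ?_⟩
    · rw [ho]
      have : Nat.find hex ≤ τ - q := Nat.find_le (by rw [Nat.add_sub_cancel' h2])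
      omega
    · rw [ho]; exact Nat.find_spec hex
    · intro t ht1 ht2
      rw [ho] at ht2
      have hmin : ¬ (F (q + (t - q)) q = F τ q) := Nat.find_min hex (by omega)
      rw [Nat.add_sub_cancel' ht1] at hmin
      exact hmin
  have hidx_le : ∀ q τ, 1 ≤ q → q ≤ τ → τ ≤ n → idx q τ ≤ C := by
    intro q τ h1 h2 h3
    have hsub : (Finset.Icc q (o q τ)).image (fun t => F t q) ⊆
        (Finset.Icc q n).image (fun t => F t q) :=
      Finset.image_subset_image
        (Finset.Icc_subset_Icc le_rfl (le_trans (hofacts q τ h1 h2 h3).2.1 h3))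
    have hcard := Finset.card_le_card hsub
    have hconv : ((Finset.Icc q n).image (fun t => F t q)).card =
        ((fun t => A t (prefixOf c t) q) '' Set.Icc q n).ncard := by
      rw [← Set.ncard_coe_finset, Finset.coe_image, Finset.coe_Icc]
    exact le_trans hcard (le_trans (le_of_eq hconv) (hrec c n le_rfl q h1 (le_trans h2 h3)))
  have hidx_det : ∀ q τ1 τ2, 1 ≤ q → q ≤ τ1 → τ1 ≤ n → q ≤ τ2 → τ2 ≤ n →
      idx q τ1 = idx q τ2 → F τ1 q = F τ2 q := by
    have key : ∀ q τ1 τ2, 1 ≤ q → q ≤ τ1 → τ1 ≤ n → q ≤ τ2 → τ2 ≤ n → o q τ1 ≤ o q τ2 →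
        idx q τ1 = idx q τ2 → F τ1 q = F τ2 q := by
      intro q τ1 τ2 h1 ha1 hb1 ha2 hb2 hoo hidx
      obtain ⟨hq1, ho1, hspec1, hmin1⟩ := hofacts q τ1 h1 ha1 hb1
      obtain ⟨hq2, ho2, hspec2, hmin2⟩ := hofacts q τ2 h1 ha2 hb2
      have hsub : (Finset.Icc q (o q τ1)).image (fun t => F t q) ⊆
          (Finset.Icc q (o q τ2)).image (fun t => F t q) :=
        Finset.image_subset_image (Finset.Icc_subset_Icc le_rfl hoo)
      have heq : (Finset.Icc q (o q τ1)).image (fun t => F t q) =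
          (Finset.Icc q (o q τ2)).image (fun t => F t q) :=
        Finset.eq_of_subset_of_card_le hsub (le_of_eq hidx.symm)
      have hmem : F τ2 q ∈ (Finset.Icc q (o q τ1)).image (fun t => F t q) := by
        rw [heq]
        exact Finset.mem_image.mpr ⟨o q τ2, Finset.mem_Icc.mpr ⟨hq2, le_rfl⟩, hspec2⟩
      obtain ⟨t, htmem, hteq⟩ := Finset.mem_image.mp hmem
      rw [Finset.mem_Icc] at htmem
      by_cases hlt : t < o q τ2
      · exact absurd hteq (hmin2 t htmem.1 hlt)
      · have hoeq : o q τ1 = o q τ2 := by omega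
        rw [← hspec1, ← hspec2, hoeq]
    intro q τ1 τ2 h1 ha1 hb1 ha2 hb2 hidx
    rcases le_total (o q τ1) (o q τ2) with h | h
    · exact key q τ1 τ2 h1 ha1 hb1 ha2 hb2 h hidx
    · exact (key q τ2 τ1 h1 ha2 hb2 ha1 hb1 h hidx.symm).symm
  have hattne : (Finset.Icc 1 (n-1)).Nonempty := ⟨1, Finset.mem_Icc.mpr ⟨le_rfl, by omega⟩⟩
  set K : ℕ := (Finset.Icc 1 (n-1)).sup' hattne (fun τ => R τ + 1) with hKdef
  obtain ⟨τs, hτs_mem, hτs⟩ := Finset.exists_mem_eq_sup' hattne (fun τ => R τ + 1)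
  rw [← hKdef] at hτs
  have hτs1 : 1 ≤ τs := (Finset.mem_Icc.mp hτs_mem).1
  have hτs2 : τs ≤ n - 1 := (Finset.mem_Icc.mp hτs_mem).2
  have hKpos : 1 ≤ K := by rw [hτs]; omega
  have hRltK : ∀ τ, 1 ≤ τ → τ ≤ n - 1 → R τ < K := by
    intro τ ha hb
    have := Finset.le_sup' (fun τ => R τ + 1) (Finset.mem_Icc.mpr ⟨ha, hb⟩)
    rw [← hKdef] at this
    omega
  set word : ℕ → Fin K × (Fin K → Fin (C+1)) := fun τ =>
    (⟨R τ % K, Nat.mod_lt _ (by omega)⟩,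
     fun i => ⟨(if i.1 ≤ R τ then idx (P τ i.1) τ else 0) % (C+1),
       Nat.mod_lt _ (by omega)⟩) with hword
  have hwinj : Set.InjOn word (Finset.Icc 1 (n-1)) := by
    have key : ∀ τ1 τ2, 1 ≤ τ1 → τ1 ≤ n-1 → 1 ≤ τ2 → τ2 ≤ n-1 → τ1 < τ2 →
        R τ1 = R τ2 → P τ1 (R τ1) = P τ2 (R τ1) → F τ1 (P τ1 (R τ1)) = F τ2 (P τ2 (R τ2)) →
        False := by
      intro τ1 τ2 ha1 hb1 ha2 hb2 hlt hReq hPeq hFeq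
      have hc1' : c (τ1 + 1) = F τ1 (P τ1 (R τ1)) := hcsucc τ1 ha1
      have hT2 : T τ2 (P τ2 (R τ2)) := (hRfacts τ2 ha2 (by omega)).2.1
      exact hterm τ2 (P τ2 (R τ2)) hT2 (τ1+1) (by omega) (by omega) (hc1'.trans hFeq)
    intro τ1 hτ1 τ2 hτ2 hw
    simp only [Finset.coe_Icc, Set.mem_Icc] at hτ1 hτ2
    rw [hword] at hw
    simp only at hw
    have hR1 := hRltK τ1 hτ1.1 hτ1.2
    have hR2 := hRltK τ2 hτ2.1 hτ2.2
    have h1n : τ1 ≤ n := by omega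
    have h2n : τ2 ≤ n := by omega
    have hfst := congrArg (fun z : Fin K × (Fin K → Fin (C+1)) => z.1.1) hw
    simp only at hfst
    rw [Nat.mod_eq_of_lt hR1, Nat.mod_eq_of_lt hR2] at hfst
    have hent : ∀ i : ℕ, i < K →
        (if i ≤ R τ1 then idx (P τ1 i) τ1 else 0) % (C+1) =
        (if i ≤ R τ2 then idx (P τ2 i) τ2 else 0) % (C+1) := by
      intro i hiK
      exact congrArg (fun z : Fin K × (Fin K → Fin (C+1)) => (z.2 ⟨i, hiK⟩).1) hw
    -- idx equality at on-path positions
    have hident : ∀ i : ℕ, i ≤ R τ1 → idx (P τ1 i) τ1 = idx (P τ2 i) τ2 := by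
      intro i hi
      have hiK : i < K := by omega
      have h := hent i hiK
      rw [if_pos hi, if_pos (by omega : i ≤ R τ2)] at h
      have hm1 := hPmem τ1 hτ1.1 h1n i (fun k hk => (hRfacts τ1 hτ1.1 h1n).2.2 k (by omega))
      have hm2 := hPmem τ2 hτ2.1 h2n i (fun k hk => (hRfacts τ2 hτ2.1 h2n).2.2 k (by omega))
      have hle1 : idx (P τ1 i) τ1 ≤ C := hidx_le _ τ1 hm1.1 hm1.2 h1n
      have hle2 : idx (P τ2 i) τ2 ≤ C := hidx_le _ τ2 hm2.1 hm2.2 h2n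
      rw [Nat.mod_eq_of_lt (by omega), Nat.mod_eq_of_lt (by omega)] at h
      exact h
    -- the two paths agree up to position R τ1
    have hPeq : ∀ i, i ≤ R τ1 → P τ1 i = P τ2 i := by
      intro i
      induction i with
      | zero => intro _; rw [hP0, hP0]
      | succ i ih =>
        intro hile
        have hPi := ih (by omega)
        have hm1 := hPmem τ1 hτ1.1 h1n i (fun k hk => (hRfacts τ1 hτ1.1 h1n).2.2 k (by omega))
        have hm2 := hPmem τ2 hτ2.1 h2n i (fun k hk => (hRfacts τ2 hτ2.1 h2n).2.2 k (by omega))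
        have hq2 : P τ1 i = P τ2 i := hPi
        have hFi : F τ1 (P τ2 i) = F τ2 (P τ2 i) := by
          have hident' := hident i (by omega)
          rw [hq2] at hident'
          have hle1 : P τ2 i ≤ τ1 := by rw [← hq2]; exact hm1.2
          exact hidx_det (P τ2 i) τ1 τ2 hm2.1 hle1 h1n hm2.2 h2n hident'
        have hnt1 : ¬ T τ1 (P τ1 i) := (hRfacts τ1 hτ1.1 h1n).2.2 i (by omega)
        have hnt2 : ¬ T τ2 (P τ2 i) := (hRfacts τ2 hτ2.1 h2n).2.2 i (by omega)
        have e1 := hnext τ1 (P τ1 i) hnt1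
        have e2 := hnext τ2 (P τ2 i) hnt2
        have hceq : c (P τ1 (i+1)) = c (P τ2 (i+1)) := by
          rw [hPsucc, hPsucc, e1.2, e2.2, hq2]
          exact hFi
        have hmm1 := hPmem τ1 hτ1.1 h1n (i+1)
          (fun k hk => (hRfacts τ1 hτ1.1 h1n).2.2 k (by omega))
        have hmm2 := hPmem τ2 hτ2.1 h2n (i+1)
          (fun k hk => (hRfacts τ2 hτ2.1 h2n).2.2 k (by omega))
        exact hcinj ⟨hmm1.1, by omega⟩ ⟨hmm2.1, by omega⟩ hceq
    -- conclude
    by_contra hne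
    have hmm1 := hPmem τ1 hτ1.1 h1n (R τ1)
      (fun k hk => (hRfacts τ1 hτ1.1 h1n).2.2 k hk)
    have hmm2 := hPmem τ2 hτ2.1 h2n (R τ1)
      (fun k hk => (hRfacts τ2 hτ2.1 h2n).2.2 k (by omega))
    have hPR : P τ1 (R τ1) = P τ2 (R τ1) := hPeq (R τ1) le_rfl
    have hidr := hident (R τ1) le_rfl
    rw [hPR] at hidr
    have hle1 : P τ2 (R τ1) ≤ τ1 := by rw [← hPR]; exact hmm1.2
    have hFR : F τ1 (P τ2 (R τ1)) = F τ2 (P τ2 (R τ1)) :=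
      hidx_det (P τ2 (R τ1)) τ1 τ2 hmm2.1 hle1 h1n hmm2.2 h2n hidr
    rcases Nat.lt_or_ge τ1 τ2 with h | h
    · refine key τ1 τ2 hτ1.1 hτ1.2 hτ2.1 hτ2.2 h hfst hPR ?_
      rw [hPR, ← hfst]
      exact hFR
    · have hlt2 : τ2 < τ1 := by omega
      refine key τ2 τ1 hτ2.1 hτ2.2 hτ1.1 hτ1.2 hlt2 hfst.symm ?_ ?_
      · rw [← hfst]
        exact hPR.symm
      · rw [← hfst, hPR]
        exact hFR.symm
  have hcount : n - 1 ≤ K * (C+1)^K := by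
    have hle := Finset.card_le_card_of_injOn word (fun x _ => Finset.mem_univ (word x)) hwinj
    rw [Nat.card_Icc] at hle
    simp only [Finset.card_univ, Fintype.card_prod, Fintype.card_fun, Fintype.card_fin] at hle
    omega
  have hpow : n ≤ (C+1)^(2*K) := by
    have h2K : K + 1 ≤ 2^K := Nat.succ_le_of_lt (Nat.lt_two_pow_self (n := K))
    have h2C : (2:ℕ)^K ≤ (C+1)^K := Nat.pow_le_pow_left (by omega) K
    have hx : 1 ≤ (C+1)^K := Nat.one_le_pow _ _ (by omega)
    calc n ≤ K * (C+1)^K + 1 := by omega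
      _ ≤ (K+1) * ((C+1)^K) := by rw [Nat.succ_mul]; omega
      _ ≤ (C+1)^K * (C+1)^K := Nat.mul_le_mul_right _ (le_trans h2K h2C)
      _ = (C+1)^(2*K) := by rw [← pow_add]; ring_nf
  have hτsn : τs ≤ n := by omega
  have hRf := hRfacts τs hτs1 hτsn
  set r := R τs with hrdef
  have hrK : K = r + 1 := hτs
  have hntk : ∀ k, k < r → ¬ T τs (P τs k) := fun k hk => hRf.2.2 k hk
  have hmemi : ∀ i, i ≤ r → 1 ≤ P τs i ∧ P τs i ≤ τs := fun i hi =>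
    hPmem τs hτs1 hτsn i (fun k hk => hntk k (by omega))
  have hpinj : ∀ i j, i < j → j ≤ r → P τs i ≠ P τs j := fun i j hij hj =>
    hPinj τs hτs1 hτsn j i hij (fun k hk => hntk k (by omega))
  have hcost : (2 * (K:ℝ) - 1) ≤ matchingCost τs c (F τs) := by
    set PS := (Finset.range (r+1)).image (fun i => P τs i) with hPS
    have hsubPS : PS ⊆ Finset.Icc 1 τs := by
      intro x hx
      obtain ⟨i, hi, rfl⟩ := Finset.mem_image.mp hx
      rw [Finset.mem_range] at hi
      exact Finset.mem_Icc.mpr (hmemi i (by omega))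
    have hterm_i : ∀ i, i ≤ r →
        (if i = 0 then (1:ℝ) else 2) ≤ dist (c (P τs i)) (F τs (P τs i)) := by
      intro i hi
      rcases Nat.eq_zero_or_pos i with rfl | hipos
      · have hFin : F τs 1 ∈ S := hFS τs hτsn 1 le_rfl hτs1
        obtain ⟨k, hk0, hkeq⟩ := (hS _).mp hFin
        rw [if_pos rfl, hP0, hc1, hkeq, hd1 k hk0]
      · rw [if_neg (by omega)]
        have hq := hmemi i hi
        have hq1 : 2 ≤ P τs i := by
          have hne1 : P τs i ≠ 1 := by
            have h01 := hpinj 0 i hipos hi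
            rw [hP0] at h01
            exact fun h => h01 h.symm
          omega
        have hcq : c (P τs i) ∈ S := hcS (P τs i) hq1 (by omega)
        have hFq : F τs (P τs i) ∈ S := hFS τs hτsn _ hq.1 hq.2
        have hne : c (P τs i) ≠ F τs (P τs i) := by
          rcases Nat.lt_or_ge i r with hir | hir
          · have e := hnext τs (P τs i) (hntk i hir)
            intro hcontra
            have hcc : c (P τs i) = c (P τs (i+1)) := by
              rw [hcontra, ← e.2, hPsucc]
            have heqP := hcinj ⟨hq.1, by omega⟩
              ⟨(hmemi (i+1) (by omega)).1, by
                have := (hmemi (i+1) (by omega)).2; omega⟩ hcc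
            exact hpinj i (i+1) (by omega) (by omega) heqP
          · have hieq : i = r := by omega
            have hT' : T τs (P τs r) := by rw [hrdef]; exact hRf.2.1
            intro h
            rw [hieq] at h
            exact hterm τs (P τs r) hT' (P τs r) (by rw [← hieq]; exact hq.1)
              (by rw [← hieq]; exact hq.2) h
        obtain ⟨k1, hk10, hk1⟩ := (hS _).mp hcq
        obtain ⟨k2, hk20, hk2⟩ := (hS _).mp hFq
        rw [hk1, hk2]
        rw [hk1, hk2] at hne
        have hk12 : k1 ≠ k2 := fun h => hne (by rw [h])
        exact le_of_eq (hd2 k1 k2 hk10 hk20 hk12).symm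
    have hsum1 : ∑ j ∈ PS, dist (c j) (F τs j) ≤ matchingCost τs c (F τs) :=
      Finset.sum_le_sum_of_subset_of_nonneg hsubPS (fun _ _ _ => dist_nonneg)
    have hsum2 : ∑ j ∈ PS, dist (c j) (F τs j) =
        ∑ i ∈ Finset.range (r+1), dist (c (P τs i)) (F τs (P τs i)) := by
      rw [hPS, Finset.sum_image]
      intro a ha b hb hab
      rw [Finset.mem_coe, Finset.mem_range] at ha hb
      by_contra hne
      rcases Nat.lt_or_ge a b with h | h
      · exact hpinj a b h (by omega) hab
      · exact hpinj b a (by omega) (by omega) hab.symm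
    have hsum3 : (2*(K:ℝ) - 1) ≤
        ∑ i ∈ Finset.range (r+1), dist (c (P τs i)) (F τs (P τs i)) := by
      have hge : ∑ i ∈ Finset.range (r+1), (if i = 0 then (1:ℝ) else 2) ≤
          ∑ i ∈ Finset.range (r+1), dist (c (P τs i)) (F τs (P τs i)) := by
        apply Finset.sum_le_sum
        intro i hi
        rw [Finset.mem_range] at hi
        exact hterm_i i (by omega)
      have hval : ∑ i ∈ Finset.range (r+1), (if i = 0 then (1:ℝ) else 2) =
          2*((r:ℝ)+1) - 1 := by
        rw [Finset.sum_range_succ']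
        simp only [Nat.succ_ne_zero, if_false, if_pos rfl]
        rw [Finset.sum_const, Finset.card_range]
        push_cast
        ring
      rw [hrK]
      push_cast
      rw [hval] at hge
      linarith
    calc (2*(K:ℝ) - 1) ≤ _ := hsum3
      _ = ∑ j ∈ PS, dist (c j) (F τs j) := hsum2.symm
      _ ≤ matchingCost τs c (F τs) := hsum1
  have h1mem : (1:ℕ) ∈ Finset.Icc 1 τs := Finset.mem_Icc.mpr ⟨le_rfl, hτs1⟩
  have hOPT : OPT S τs c = 1 := by
    have hlb : ∀ x ∈ {x : ℝ | ∃ f, IsMatching S τs f ∧ matchingCost τs c f = x}, (1:ℝ) ≤ x := by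
      rintro x ⟨f, hf, rfl⟩
      have hf1 : f 1 ∈ S := hf.2 1 ⟨le_rfl, hτs1⟩
      obtain ⟨k, hk0, hk⟩ := (hS _).mp hf1
      have hd : dist (c 1) (f 1) = 1 := by rw [hc1, hk, hd1 k hk0]
      calc (1:ℝ) = dist (c 1) (f 1) := hd.symm
        _ ≤ matchingCost τs c f :=
          Finset.single_le_sum (fun j _ => dist_nonneg) h1mem
    have hmem1 : (1:ℝ) ∈ {x : ℝ | ∃ f, IsMatching S τs f ∧ matchingCost τs c f = x} := by
      have himg : (Finset.Icc 2 τs).image c ⊆ S := by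
        intro x hx
        obtain ⟨j, hj, rfl⟩ := Finset.mem_image.mp hx
        rw [Finset.mem_Icc] at hj
        exact hcS j hj.1 (by omega)
      have hcardlt : ((Finset.Icc 2 τs).image c).card < S.card := by
        have hle := Finset.card_image_le (s := Finset.Icc 2 τs) (f := c)
        rw [Nat.card_Icc] at hle
        omega
      have hex : ∃ s ∈ S, s ∉ (Finset.Icc 2 τs).image c := by
        by_contra hcon
        push_neg at hcon
        exact absurd (Finset.card_le_card hcon) (by omega)
      obtain ⟨s, hsS, hsnot⟩ := hex
      set g : ℕ → X := fun j => if 2 ≤ j ∧ j ≤ τs then c j else s with hg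
      have hgpos : ∀ j, 2 ≤ j → j ≤ τs → g j = c j := by
        intro j hj1 hj2; simp only [hg]; rw [if_pos ⟨hj1, hj2⟩]
      have hgneg : ∀ j, ¬ (2 ≤ j ∧ j ≤ τs) → g j = s := by
        intro j hj; simp only [hg]; rw [if_neg hj]
      refine ⟨g, ⟨?_, ?_⟩, ?_⟩
      · intro a ha b hb hab
        simp only [Set.mem_Icc] at ha hb
        by_cases ha2 : 2 ≤ a ∧ a ≤ τs <;> by_cases hb2 : 2 ≤ b ∧ b ≤ τs
        · rw [hgpos a ha2.1 ha2.2, hgpos b hb2.1 hb2.2] at hab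
          exact hcinj ⟨by omega, by omega⟩ ⟨by omega, by omega⟩ hab
        · rw [hgpos a ha2.1 ha2.2, hgneg b hb2] at hab
          exact absurd (hab ▸ Finset.mem_image_of_mem c
            (Finset.mem_Icc.mpr ⟨ha2.1, ha2.2⟩)) hsnot
        · rw [hgneg a ha2, hgpos b hb2.1 hb2.2] at hab
          exact absurd (hab.symm ▸ Finset.mem_image_of_mem c
            (Finset.mem_Icc.mpr ⟨hb2.1, hb2.2⟩)) hsnot
        · omega
      · intro j hj
        by_cases h2 : 2 ≤ j ∧ j ≤ τs
        · rw [hgpos j h2.1 h2.2]; exact hcS j h2.1 (by omega)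
        · rw [hgneg j h2]; exact hsS
      · show (∑ j ∈ Finset.Icc 1 τs, dist (c j) (g j)) = 1
        rw [Finset.sum_eq_single_of_mem 1 h1mem]
        · rw [hgneg 1 (by omega)]
          obtain ⟨k, hk0, hk⟩ := (hS _).mp hsS
          rw [hc1, hk, hd1 k hk0]
        · intro b hb hb1
          rw [Finset.mem_Icc] at hb
          rw [hgpos b (by omega) hb.2, dist_self]
    exact le_antisymm (csInf_le ⟨1, hlb⟩ hmem1) (le_csInf ⟨1, hmem1⟩ hlb)
  refine ⟨n, le_rfl, c, hc1, hcinj, ?_, τs, hτs1, by omega, ?_, hOPT⟩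
  · intro j hj
    simp only [Set.mem_Icc] at hj
    rcases Nat.lt_or_ge j 2 with h2 | h2
    · have : j = 1 := by omega
      rw [this, hc1]
      exact ⟨0, rfl⟩
    · obtain ⟨k, hk0, hk⟩ := (hS _).mp (hcS j h2 hj.2)
      exact ⟨k, hk.symm⟩
  · have hCpos : (0:ℝ) < Real.log ((C:ℝ)+1) := by
      apply Real.log_pos
      have : (1:ℝ) ≤ (C:ℝ) := by exact_mod_cast hC
      linarith
    have hnle : (n:ℝ) ≤ ((C:ℝ)+1)^(2*K) := by
      have := hpow
      have hcast : ((n:ℝ)) ≤ (((C+1)^(2*K) : ℕ) : ℝ) := by exact_mod_cast this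
      rw [Nat.cast_pow, Nat.cast_add, Nat.cast_one] at hcast
      exact hcast
    have hlog : Real.log n / Real.log ((C:ℝ)+1) ≤ 2*(K:ℝ) := by
      rw [div_le_iff₀ hCpos]
      calc Real.log n ≤ Real.log (((C:ℝ)+1)^(2*K)) := by
            apply Real.log_le_log (by positivity) hnle
        _ = ((2*K : ℕ) : ℝ) * Real.log ((C:ℝ)+1) := by rw [Real.log_pow]
        _ = 2*(K:ℝ) * Real.log ((C:ℝ)+1) := by push_cast; ring
    have hcost' : (2 * (K:ℝ) - 1) ≤ matchingCost τs c (A τs (prefixOf c τs)) := hcost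
    linarith
end

section
/- Let d ≥ 2 be an integer. For every metric space (X,δ) and every finite server set S ⊆ X with |S| = k ≥ 1, there exists a deterministic online matching algorithm A for S such that for every sequence of clients c_1,…,c_k ∈ X: (i) for every t ∈ {1,…,k}, the cost of the matching A(c_1,…,c_t) is at most (2(d−1)·⌈log_d(t+1)⌉ − 1) times OPT_t, and (ii) every client index j is reassigned at most ⌊log_d k⌋ times over the whole sequence. -/
section Basics
open Classical

variable {X : Type*} [MetricSpace X] (S : Finset X) (x0 : X)

/-- truncation of a client sequence -/
def trunc (x0 : X) (c : ℕ → X) (t : ℕ) : ℕ → X := fun j => if 1 ≤ j ∧ j ≤ t then c j else x0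

lemma trunc_eq {c : ℕ → X} {t j : ℕ} (h1 : 1 ≤ j) (h2 : j ≤ t) : trunc x0 c t j = c j := by
  simp [trunc, h1, h2]

lemma trunc_trunc {c : ℕ → X} {q t : ℕ} (h : q ≤ t) :
    trunc x0 (trunc x0 c t) q = trunc x0 c q := by
  funext j
  by_cases hj : 1 ≤ j ∧ j ≤ q
  · simp only [trunc, if_pos hj]
    rw [if_pos ⟨hj.1, le_trans hj.2 h⟩]
  · simp only [trunc, if_neg hj]

lemma matchingCost_congr {t : ℕ} {c₁ c₂ f : ℕ → X}
    (h : ∀ j ∈ Finset.Icc 1 t, c₁ j = c₂ j) : matchingCost t c₁ f = matchingCost t c₂ f := by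
  unfold matchingCost
  exact Finset.sum_congr rfl fun j hj => by rw [h j hj]

lemma matchingCost_trunc {t : ℕ} {c f : ℕ → X} :
    matchingCost t (trunc x0 c t) f = matchingCost t c f :=
  matchingCost_congr fun j hj => by
    rw [Finset.mem_Icc] at hj; exact trunc_eq x0 hj.1 hj.2

lemma matchingCost_nonneg {t : ℕ} {c f : ℕ → X} : 0 ≤ matchingCost t c f :=
  Finset.sum_nonneg fun _ _ => dist_nonneg

lemma matchingCost_mono_t {t1 t2 : ℕ} (h : t1 ≤ t2) {c f : ℕ → X} :
    matchingCost t1 c f ≤ matchingCost t2 c f :=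
  Finset.sum_le_sum_of_subset_of_nonneg (Finset.Icc_subset_Icc_right h)
    (fun _ _ _ => dist_nonneg)

lemma IsMatching.mono {t1 t2 : ℕ} (h : t1 ≤ t2) {f : ℕ → X} (hf : IsMatching S t2 f) :
    IsMatching S t1 f :=
  ⟨hf.1.mono (Set.Icc_subset_Icc_right (by exact_mod_cast h)),
   fun j hj => hf.2 j (Set.Icc_subset_Icc_right h hj)⟩

lemma OPT_congr {t : ℕ} {c₁ c₂ : ℕ → X} (h : ∀ j ∈ Finset.Icc 1 t, c₁ j = c₂ j) :
    OPT S t c₁ = OPT S t c₂ := by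
  unfold OPT
  congr 1
  ext r
  constructor
  · rintro ⟨f, hf, rfl⟩; exact ⟨f, hf, (matchingCost_congr h).symm⟩
  · rintro ⟨f, hf, rfl⟩; exact ⟨f, hf, matchingCost_congr h⟩

lemma OPT_trunc {t : ℕ} {c : ℕ → X} : OPT S t (trunc x0 c t) = OPT S t c :=
  OPT_congr S fun j hj => by
    rw [Finset.mem_Icc] at hj; exact trunc_eq x0 hj.1 hj.2

lemma OPT_le {t : ℕ} {c f : ℕ → X} (hf : IsMatching S t f) :
    OPT S t c ≤ matchingCost t c f := by
  apply csInf_le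
  · exact ⟨0, fun r ⟨g, _, hg⟩ => hg ▸ matchingCost_nonneg⟩
  · exact ⟨f, hf, rfl⟩

/-- existence of an optimal matching -/
lemma exists_opt (hx0 : x0 ∈ S) (c : ℕ → X) (t : ℕ) (ht : t ≤ S.card) :
    ∃ f : ℕ → X, IsMatching S t f ∧
      (∀ g, IsMatching S t g → matchingCost t c f ≤ matchingCost t c g) ∧
      matchingCost t c f = OPT S t c := by
  classical
  -- candidate space
  let F := ({x // x ∈ Finset.Icc 1 t} → {x // x ∈ S})
  let toF : F → (ℕ → X) := fun φ j => if h : j ∈ Finset.Icc 1 t then (φ ⟨j, h⟩ : X) else x0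
  have hmem_iff : ∀ j, j ∈ Finset.Icc 1 t ↔ j ∈ Set.Icc 1 t := by
    intro j; rw [Finset.mem_Icc, Set.mem_Icc]
  -- a witness injection
  have hwit : ∃ φ : F, IsMatching S t (toF φ) := by
    refine ⟨fun p => S.equivFin.symm ⟨p.1 - 1, ?_⟩, ?_, ?_⟩
    · have := Finset.mem_Icc.mp p.2
      omega
    · intro a ha b hb hab
      rw [Set.mem_Icc] at ha hb
      have ha' : a ∈ Finset.Icc 1 t := Finset.mem_Icc.mpr ha
      have hb' : b ∈ Finset.Icc 1 t := Finset.mem_Icc.mpr hb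
      simp only [toF, dif_pos ha', dif_pos hb'] at hab
      have : a - 1 = b - 1 := by
        simpa using congrArg Fin.val (S.equivFin.symm.injective (Subtype.coe_injective hab))
      omega
    · intro j hj
      have hj' : j ∈ Finset.Icc 1 t := Finset.mem_Icc.mpr (Set.mem_Icc.mp hj)
      simp only [toF, dif_pos hj']
      exact Subtype.mem _
  obtain ⟨φ₀, hφ₀⟩ := hwit
  -- minimize over candidates
  let cand : Finset F := Finset.univ.filter (fun φ => IsMatching S t (toF φ))
  have hne : cand.Nonempty := ⟨φ₀, Finset.mem_filter.mpr ⟨Finset.mem_univ _, hφ₀⟩⟩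
  obtain ⟨φm, hφm, hmin⟩ := Finset.exists_min_image cand (fun φ => matchingCost t c (toF φ)) hne
  have hφm' : IsMatching S t (toF φm) := (Finset.mem_filter.mp hφm).2
  have hminimal : ∀ g, IsMatching S t g → matchingCost t c (toF φm) ≤ matchingCost t c g := by
    intro g hg
    let φg : F := fun p => ⟨g p.1, hg.2 p.1 ((hmem_iff p.1).mp p.2)⟩
    have hagree : ∀ j ∈ Finset.Icc 1 t, toF φg j = g j := by
      intro j hj; simp only [toF, dif_pos hj, φg]
    have hcost : matchingCost t c (toF φg) = matchingCost t c g := by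
      unfold matchingCost
      exact Finset.sum_congr rfl fun j hj => by rw [hagree j hj]
    have hM : IsMatching S t (toF φg) := by
      constructor
      · intro a ha b hb hab
        rw [hagree a ((hmem_iff a).mpr ha), hagree b ((hmem_iff b).mpr hb)] at hab
        exact hg.1 ha hb hab
      · intro j hj
        rw [hagree j ((hmem_iff j).mpr hj)]
        exact hg.2 j hj
    have : φg ∈ cand := Finset.mem_filter.mpr ⟨Finset.mem_univ _, hM⟩
    calc matchingCost t c (toF φm) ≤ matchingCost t c (toF φg) := hmin φg this
      _ = matchingCost t c g := hcost
  refine ⟨toF φm, hφm', hminimal, le_antisymm ?_ ?_⟩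
  · refine le_csInf ⟨matchingCost t c (toF φm), ⟨toF φm, hφm', rfl⟩⟩ ?_
    rintro r ⟨g, hg, rfl⟩
    exact hminimal g hg
  · exact OPT_le S hφm'

lemma OPT_nonneg (hx0 : x0 ∈ S) {c : ℕ → X} {t : ℕ} (ht : t ≤ S.card) : 0 ≤ OPT S t c := by
  obtain ⟨f, hf, _, hc⟩ := exists_opt S x0 hx0 c t ht
  rw [← hc]; exact matchingCost_nonneg

lemma OPT_mono (hx0 : x0 ∈ S) {c : ℕ → X} {t1 t2 : ℕ} (h12 : t1 ≤ t2) (h2 : t2 ≤ S.card) :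
    OPT S t1 c ≤ OPT S t2 c := by
  obtain ⟨f, hf, _, hc⟩ := exists_opt S x0 hx0 c t2 h2
  rw [← hc]
  calc OPT S t1 c ≤ matchingCost t1 c f := OPT_le S (hf.mono S h12)
    _ ≤ matchingCost t2 c f := matchingCost_mono_t h12

omit x0 in
lemma OPT_zero (y : X) {c : ℕ → X} : OPT S 0 c = 0 := by
  have h : {r : ℝ | ∃ f : ℕ → X, IsMatching S 0 f ∧ matchingCost 0 c f = r} = {0} := by
    ext r
    simp only [Set.mem_setOf_eq, Set.mem_singleton_iff]
    constructor
    · rintro ⟨f, _, rfl⟩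
      unfold matchingCost
      simp
    · rintro rfl
      refine ⟨fun _ => y, ⟨?_, ?_⟩, ?_⟩
      · intro a ha _ _ _; simp [Set.mem_Icc] at ha
      · intro j hj; simp [Set.mem_Icc] at hj
      · unfold matchingCost; simp
  unfold OPT
  rw [h, csInf_singleton]

end Basics

section Exchange

variable {X : Type*} [MetricSpace X] (S : Finset X)

noncomputable local instance : DecidableEq X := Classical.decEq X

/-- One swap: if server `f j₀` is used by the optimal matching `f` of `t` clients but not by
the optimal matching `g` of `t+1` clients, we can modify `g` along an alternating walk so that
it becomes an optimal matching also using `f j₀`, without losing any other server of `f`. -/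
lemma swap_step {c : ℕ → X} {t : ℕ} {f g : ℕ → X}
    (hf : IsMatching S t f)
    (hfm : ∀ f', IsMatching S t f' → matchingCost t c f ≤ matchingCost t c f')
    (hg : IsMatching S (t+1) g)
    {j₀ : ℕ} (hj₀ : j₀ ∈ Set.Icc 1 t)
    (hs : f j₀ ∉ g '' Set.Icc 1 (t+1)) :
    ∃ g1 : ℕ → X, IsMatching S (t+1) g1 ∧
      matchingCost (t+1) c g1 ≤ matchingCost (t+1) c g ∧
      ((Finset.Icc 1 t).image f \ (Finset.Icc 1 (t+1)).image g1) ⊆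
        ((Finset.Icc 1 t).image f \ (Finset.Icc 1 (t+1)).image g).erase (f j₀) := by
  classical
  have hIccSub : Set.Icc (1:ℕ) t ⊆ Set.Icc 1 (t+1) := Set.Icc_subset_Icc_right (Nat.le_succ t)
  set R : ℕ → ℕ → Prop :=
    fun a b => a ∈ Set.Icc 1 (t+1) ∧ b ∈ Set.Icc 1 t ∧ g a = f b with hR
  set T : Set ℕ := {j | Relation.ReflTransGen R j₀ j} with hT
  have hT0 : j₀ ∈ T := Relation.ReflTransGen.refl
  have hTsub : T ⊆ Set.Icc 1 t := by
    intro j hj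
    induction hj with
    | refl => exact hj₀
    | tail _ h => exact h.2.1
  have hfwd : ∀ {j}, j ∈ T → ∀ {j'}, j' ∈ Set.Icc 1 t → g j = f j' → j' ∈ T := by
    intro j hj j' hj' he
    exact Relation.ReflTransGen.tail hj ⟨hIccSub (hTsub hj), hj', he⟩
  have hback : ∀ {j}, j ∈ T → j ≠ j₀ → ∃ p, p ∈ T ∧ p ∈ Set.Icc 1 (t+1) ∧ g p = f j := by
    intro j hj
    induction hj with
    | refl => intro hne; exact absurd rfl hne
    | tail hab h _ => intro _; exact ⟨_, hab, h.1, h.2.2⟩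
  have hcross : ∀ {a}, a ∈ T → ∀ {b}, b ∈ Set.Icc 1 (t+1) → f a = g b → b ∈ T := by
    intro a ha b hb he
    by_cases haj : a = j₀
    · subst haj
      exact absurd ⟨b, hb, he.symm⟩ hs
    · obtain ⟨p, hpT, hpI, hpe⟩ := hback ha haj
      have : p = b := hg.1 hpI hb (by rw [hpe, he])
      exact this ▸ hpT
  set g1 : ℕ → X := fun j => if j ∈ T then f j else g j with hg1
  set f1 : ℕ → X := fun j => if j ∈ T then g j else f j with hf1
  have hg1M : IsMatching S (t+1) g1 := by
    constructor
    · intro a ha b hb hab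
      simp only [hg1] at hab
      by_cases haT : a ∈ T <;> by_cases hbT : b ∈ T
      · rw [if_pos haT, if_pos hbT] at hab
        exact hf.1 (hTsub haT) (hTsub hbT) hab
      · rw [if_pos haT, if_neg hbT] at hab
        exact absurd (hcross haT hb hab) hbT
      · rw [if_neg haT, if_pos hbT] at hab
        exact absurd (hcross hbT ha hab.symm) haT
      · rw [if_neg haT, if_neg hbT] at hab
        exact hg.1 ha hb hab
    · intro j hj
      simp only [hg1]
      by_cases hjT : j ∈ T
      · rw [if_pos hjT]; exact hf.2 j (hTsub hjT)
      · rw [if_neg hjT]; exact hg.2 j hj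
  have hf1M : IsMatching S t f1 := by
    constructor
    · intro a ha b hb hab
      simp only [hf1] at hab
      by_cases haT : a ∈ T <;> by_cases hbT : b ∈ T
      · rw [if_pos haT, if_pos hbT] at hab
        exact hg.1 (hIccSub (hTsub haT)) (hIccSub (hTsub hbT)) hab
      · rw [if_pos haT, if_neg hbT] at hab
        exact absurd (hfwd haT hb hab) hbT
      · rw [if_neg haT, if_pos hbT] at hab
        exact absurd (hfwd hbT ha hab.symm) haT
      · rw [if_neg haT, if_neg hbT] at hab
        exact hf.1 ha hb hab
    · intro j hj
      simp only [hf1]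
      by_cases hjT : j ∈ T
      · rw [if_pos hjT]; exact hg.2 j (hIccSub hj)
      · rw [if_neg hjT]; exact hf.2 j hj
  -- cost bookkeeping
  have hfilter : (Finset.Icc 1 (t+1)).filter (· ∈ T) = (Finset.Icc 1 t).filter (· ∈ T) := by
    ext j
    simp only [Finset.mem_filter, Finset.mem_Icc]
    constructor
    · rintro ⟨_, hT'⟩
      have := Set.mem_Icc.mp (hTsub hT')
      exact ⟨this, hT'⟩
    · rintro ⟨h1, hT'⟩
      exact ⟨⟨h1.1, h1.2.trans (Nat.le_succ t)⟩, hT'⟩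
  have costsplit : ∀ (u : ℕ) (h : ℕ → X),
      matchingCost u c h =
        ∑ j ∈ (Finset.Icc 1 u).filter (· ∈ T), dist (c j) (h j) +
        ∑ j ∈ (Finset.Icc 1 u).filter (¬ · ∈ T), dist (c j) (h j) := by
    intro u h
    exact (Finset.sum_filter_add_sum_filter_not _ _ _).symm
  have hg1cost : matchingCost (t+1) c g1 =
      ∑ j ∈ (Finset.Icc 1 t).filter (· ∈ T), dist (c j) (f j) +
      ∑ j ∈ (Finset.Icc 1 (t+1)).filter (¬ · ∈ T), dist (c j) (g j) := by
    rw [costsplit (t+1) g1, hfilter]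
    congr 1
    · refine Finset.sum_congr rfl fun j hj => ?_
      rw [Finset.mem_filter] at hj
      simp only [hg1, if_pos hj.2]
    · refine Finset.sum_congr rfl fun j hj => ?_
      rw [Finset.mem_filter] at hj
      simp only [hg1, if_neg hj.2]
  have hf1cost : matchingCost t c f1 =
      ∑ j ∈ (Finset.Icc 1 t).filter (· ∈ T), dist (c j) (g j) +
      ∑ j ∈ (Finset.Icc 1 t).filter (¬ · ∈ T), dist (c j) (f j) := by
    rw [costsplit t f1]
    congr 1
    · refine Finset.sum_congr rfl fun j hj => ?_
      rw [Finset.mem_filter] at hj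
      simp only [hf1, if_pos hj.2]
    · refine Finset.sum_congr rfl fun j hj => ?_
      rw [Finset.mem_filter] at hj
      simp only [hf1, if_neg hj.2]
  have hgcost : matchingCost (t+1) c g =
      ∑ j ∈ (Finset.Icc 1 t).filter (· ∈ T), dist (c j) (g j) +
      ∑ j ∈ (Finset.Icc 1 (t+1)).filter (¬ · ∈ T), dist (c j) (g j) := by
    rw [costsplit (t+1) g, hfilter]
  have hfcost : matchingCost t c f =
      ∑ j ∈ (Finset.Icc 1 t).filter (· ∈ T), dist (c j) (f j) +
      ∑ j ∈ (Finset.Icc 1 t).filter (¬ · ∈ T), dist (c j) (f j) := costsplit t f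
  have hle : matchingCost t c f ≤ matchingCost t c f1 := hfm f1 hf1M
  have hcostle : matchingCost (t+1) c g1 ≤ matchingCost (t+1) c g := by
    rw [hg1cost, hgcost]
    rw [hf1cost, hfcost] at hle
    linarith
  refine ⟨g1, hg1M, hcostle, ?_⟩
  intro s hsmem
  rw [Finset.mem_sdiff] at hsmem
  obtain ⟨hsf, hsg1⟩ := hsmem
  have hsg1' : s ∉ g1 '' Set.Icc 1 (t+1) := by
    intro ⟨b, hb, he⟩
    exact hsg1 (Finset.mem_image.mpr ⟨b, Finset.mem_Icc.mpr (Set.mem_Icc.mp hb), he⟩)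
  rw [Finset.mem_erase, Finset.mem_sdiff]
  refine ⟨?_, hsf, ?_⟩
  · -- s ≠ f j₀
    intro hseq
    apply hsg1'
    exact ⟨j₀, hIccSub hj₀, by simp only [hg1, if_pos hT0, hseq]⟩
  · -- s ∉ image g
    intro hsg
    obtain ⟨p, hp, hpe⟩ := Finset.mem_image.mp hsg
    have hpI : p ∈ Set.Icc 1 (t+1) := Set.mem_Icc.mpr (Finset.mem_Icc.mp hp)
    by_cases hpT : p ∈ T
    · obtain ⟨a, ha, hae⟩ := Finset.mem_image.mp hsf
      have haI : a ∈ Set.Icc 1 t := Set.mem_Icc.mpr (Finset.mem_Icc.mp ha)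
      have haT : a ∈ T := hfwd hpT haI (by rw [hpe, hae])
      exact hsg1' ⟨a, hIccSub haI, by simp only [hg1, if_pos haT]; exact hae⟩
    · exact hsg1' ⟨p, hpI, by simp only [hg1, if_neg hpT]; exact hpe⟩

/-- there is an optimal matching of `t+1` clients whose servers include those of a given
optimal matching of the first `t` clients. -/
lemma nestOpt {c : ℕ → X} {t : ℕ} {f : ℕ → X}
    (hf : IsMatching S t f)
    (hfm : ∀ f', IsMatching S t f' → matchingCost t c f ≤ matchingCost t c f')
    (ht : t + 1 ≤ S.card) (hx : ∃ x0 : X, x0 ∈ S) :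
    ∃ g, IsMatching S (t+1) g ∧
      (∀ g', IsMatching S (t+1) g' → matchingCost (t+1) c g ≤ matchingCost (t+1) c g') ∧
      f '' Set.Icc 1 t ⊆ g '' Set.Icc 1 (t+1) := by
  classical
  obtain ⟨x0, hx0⟩ := hx
  obtain ⟨g0, hg0, hg0m, _⟩ := exists_opt S x0 hx0 c (t+1) ht
  suffices h : ∀ (n : ℕ) (g : ℕ → X),
      ((Finset.Icc 1 t).image f \ (Finset.Icc 1 (t+1)).image g).card ≤ n →
      IsMatching S (t+1) g →
      (∀ g', IsMatching S (t+1) g' → matchingCost (t+1) c g ≤ matchingCost (t+1) c g') →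
      ∃ g1, IsMatching S (t+1) g1 ∧
        (∀ g', IsMatching S (t+1) g' → matchingCost (t+1) c g1 ≤ matchingCost (t+1) c g') ∧
        f '' Set.Icc 1 t ⊆ g1 '' Set.Icc 1 (t+1) by
    exact h _ g0 le_rfl hg0 hg0m
  intro n
  induction n with
  | zero =>
    intro g hcard hg hgm
    refine ⟨g, hg, hgm, ?_⟩
    have hsub : (Finset.Icc 1 t).image f ⊆ (Finset.Icc 1 (t+1)).image g := by
      rw [← Finset.sdiff_eq_empty_iff_subset, ← Finset.card_eq_zero]
      omega
    rintro s ⟨a, ha, rfl⟩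
    have : f a ∈ (Finset.Icc 1 t).image f :=
      Finset.mem_image.mpr ⟨a, Finset.mem_Icc.mpr (Set.mem_Icc.mp ha), rfl⟩
    obtain ⟨b, hb, he⟩ := Finset.mem_image.mp (hsub this)
    exact ⟨b, Set.mem_Icc.mpr (Finset.mem_Icc.mp hb), he⟩
  | succ n ih =>
    intro g hcard hg hgm
    by_cases hdiff : ((Finset.Icc 1 t).image f \ (Finset.Icc 1 (t+1)).image g) = ∅
    · exact ih g (by rw [hdiff]; simp) hg hgm
    · obtain ⟨s, hsmem⟩ := Finset.nonempty_iff_ne_empty.mpr hdiff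
      rw [Finset.mem_sdiff] at hsmem
      obtain ⟨j₀, hj₀, rfl⟩ := Finset.mem_image.mp hsmem.1
      have hj₀' : j₀ ∈ Set.Icc 1 t := Set.mem_Icc.mpr (Finset.mem_Icc.mp hj₀)
      have hnotin : f j₀ ∉ g '' Set.Icc 1 (t+1) := by
        intro ⟨b, hb, he⟩
        exact hsmem.2 (Finset.mem_image.mpr ⟨b, Finset.mem_Icc.mpr (Set.mem_Icc.mp hb), he⟩)
      obtain ⟨g1, hg1M, hg1cost, hg1sub⟩ := swap_step S hf hfm hg hj₀' hnotin
      have hg1m : ∀ g', IsMatching S (t+1) g' →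
          matchingCost (t+1) c g1 ≤ matchingCost (t+1) c g' :=
        fun g' hg' => le_trans hg1cost (hgm g' hg')
      apply ih g1 _ hg1M hg1m
      have h1 : f j₀ ∈ (Finset.Icc 1 t).image f \ (Finset.Icc 1 (t+1)).image g :=
        Finset.mem_sdiff.mpr hsmem
      have := Finset.card_le_card hg1sub
      rw [Finset.card_erase_of_mem h1] at this
      omega

end Exchange

section Chain

variable {X : Type*} [MetricSpace X] (S : Finset X) (x0 : X)

open Classical in
/-- the next nested optimal matching -/
noncomputable def nextM (c : ℕ → X) (i : ℕ) (f : ℕ → X) : ℕ → X :=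
  if h : x0 ∈ S ∧ i + 1 ≤ S.card ∧ IsMatching S i f ∧
      (∀ g, IsMatching S i g → matchingCost i c f ≤ matchingCost i c g) then
    Classical.choose (nestOpt S h.2.2.1 h.2.2.2 h.2.1 ⟨x0, h.1⟩)
  else fun _ => x0

/-- the canonical chain of nested optimal matchings -/
noncomputable def chainM (c : ℕ → X) : ℕ → (ℕ → X)
  | 0 => fun _ => x0
  | (i+1) => nextM S x0 (trunc x0 c (i+1)) i (chainM c i)

lemma chainM_trunc {c : ℕ → X} {T : ℕ} : ∀ {i : ℕ}, i ≤ T →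
    chainM S x0 (trunc x0 c T) i = chainM S x0 c i := by
  intro i
  induction i with
  | zero => intro _; rfl
  | succ i ih =>
    intro hiT
    show nextM S x0 (trunc x0 (trunc x0 c T) (i+1)) i (chainM S x0 (trunc x0 c T) i)
        = nextM S x0 (trunc x0 c (i+1)) i (chainM S x0 c i)
    rw [trunc_trunc x0 hiT, ih (le_trans (Nat.le_succ i) hiT)]

lemma matching_zero (f : ℕ → X) : IsMatching S 0 f := by
  constructor
  · intro a ha; simp [Set.mem_Icc] at ha
  · intro j hj; simp [Set.mem_Icc] at hj

lemma chainM_spec (hx0 : x0 ∈ S) {c : ℕ → X} : ∀ {i : ℕ}, i ≤ S.card →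
    IsMatching S i (chainM S x0 c i) ∧
    (∀ g, IsMatching S i g →
      matchingCost i c (chainM S x0 c i) ≤ matchingCost i c g) := by
  intro i
  induction i with
  | zero =>
    intro _
    refine ⟨matching_zero S _, fun g _ => ?_⟩
    simp [matchingCost]
  | succ i ih =>
    intro hi
    obtain ⟨hM, hmin⟩ := ih (le_trans (Nat.le_succ i) hi)
    have hagree : ∀ j ∈ Finset.Icc 1 i, trunc x0 c (i+1) j = c j := by
      intro j hj
      rw [Finset.mem_Icc] at hj
      exact trunc_eq x0 hj.1 (hj.2.trans (Nat.le_succ i))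
    have hmin' : ∀ g, IsMatching S i g →
        matchingCost i (trunc x0 c (i+1)) (chainM S x0 c i) ≤
          matchingCost i (trunc x0 c (i+1)) g := by
      intro g hg
      rw [matchingCost_congr hagree, matchingCost_congr hagree]
      exact hmin g hg
    have hcond : x0 ∈ S ∧ i + 1 ≤ S.card ∧ IsMatching S i (chainM S x0 c i) ∧
        (∀ g, IsMatching S i g →
          matchingCost i (trunc x0 c (i+1)) (chainM S x0 c i) ≤
            matchingCost i (trunc x0 c (i+1)) g) := ⟨hx0, hi, hM, hmin'⟩
    have heq : chainM S x0 c (i+1) =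
        Classical.choose (nestOpt S hcond.2.2.1 hcond.2.2.2 hcond.2.1 ⟨x0, hcond.1⟩) := by
      show nextM S x0 (trunc x0 c (i+1)) i (chainM S x0 c i) = _
      rw [nextM, dif_pos hcond]
    have hspec := Classical.choose_spec
      (nestOpt S hcond.2.2.1 hcond.2.2.2 hcond.2.1 ⟨x0, hcond.1⟩)
    rw [← heq] at hspec
    have hagree' : ∀ j ∈ Finset.Icc 1 (i+1), trunc x0 c (i+1) j = c j := by
      intro j hj
      rw [Finset.mem_Icc] at hj
      exact trunc_eq x0 hj.1 hj.2
    refine ⟨hspec.1, fun g hg => ?_⟩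
    have := hspec.2.1 g hg
    rwa [matchingCost_congr hagree', matchingCost_congr hagree'] at this

lemma chainM_nest (hx0 : x0 ∈ S) {c : ℕ → X} {i : ℕ} (hi : i + 1 ≤ S.card) :
    chainM S x0 c i '' Set.Icc 1 i ⊆ chainM S x0 c (i+1) '' Set.Icc 1 (i+1) := by
  obtain ⟨hM, hmin⟩ := chainM_spec S x0 hx0 (c := c) (le_trans (Nat.le_succ i) hi)
  have hagree : ∀ j ∈ Finset.Icc 1 i, trunc x0 c (i+1) j = c j := by
    intro j hj
    rw [Finset.mem_Icc] at hj
    exact trunc_eq x0 hj.1 (hj.2.trans (Nat.le_succ i))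
  have hmin' : ∀ g, IsMatching S i g →
      matchingCost i (trunc x0 c (i+1)) (chainM S x0 c i) ≤
        matchingCost i (trunc x0 c (i+1)) g := by
    intro g hg
    rw [matchingCost_congr hagree, matchingCost_congr hagree]
    exact hmin g hg
  have hcond : x0 ∈ S ∧ i + 1 ≤ S.card ∧ IsMatching S i (chainM S x0 c i) ∧
      (∀ g, IsMatching S i g →
        matchingCost i (trunc x0 c (i+1)) (chainM S x0 c i) ≤
          matchingCost i (trunc x0 c (i+1)) g) := ⟨hx0, hi, hM, hmin'⟩
  have heq : chainM S x0 c (i+1) =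
      Classical.choose (nestOpt S hcond.2.2.1 hcond.2.2.2 hcond.2.1 ⟨x0, hcond.1⟩) := by
    show nextM S x0 (trunc x0 c (i+1)) i (chainM S x0 c i) = _
    rw [nextM, dif_pos hcond]
  have hspec := Classical.choose_spec
    (nestOpt S hcond.2.2.1 hcond.2.2.2 hcond.2.1 ⟨x0, hcond.1⟩)
  rw [← heq] at hspec
  exact hspec.2.2

lemma chainM_mono (hx0 : x0 ∈ S) {c : ℕ → X} {i i' : ℕ} (h : i ≤ i') (hi' : i' ≤ S.card) :
    chainM S x0 c i '' Set.Icc 1 i ⊆ chainM S x0 c i' '' Set.Icc 1 i' := by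
  induction i', h using Nat.le_induction with
  | base => exact subset_rfl
  | succ m hm ih =>
    exact subset_trans (ih (le_trans (Nat.le_succ m) hi'))
      (chainM_nest S x0 hx0 hi')

lemma chainM_cost (hx0 : x0 ∈ S) {c : ℕ → X} {i : ℕ} (hi : i ≤ S.card) :
    matchingCost i c (chainM S x0 c i) = OPT S i c := by
  obtain ⟨hM, hmin⟩ := chainM_spec S x0 hx0 (c := c) hi
  obtain ⟨g, hg, _, hgOPT⟩ := exists_opt S x0 hx0 c i hi
  refine le_antisymm ?_ (OPT_le S hM)
  rw [← hgOPT]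
  exact hmin g hg

end Chain

section Pairing

variable {X : Type*} [MetricSpace X] (S : Finset X)

/-- The key pairing lemma: the new clients `t'+1, …, t` can be matched to servers used by `g`
but not by `f`, at total cost at most `cost f + cost g`. -/
lemma pairing {c : ℕ → X} {t : ℕ} {g : ℕ → X} (hg : IsMatching S t g) :
    ∀ (t' : ℕ) (f : ℕ → X), t' ≤ t → Set.InjOn f (Set.Icc 1 t') →
    ∃ h : ℕ → X, Set.InjOn h (Set.Ioc t' t) ∧
      (∀ j ∈ Set.Ioc t' t, h j ∈ g '' Set.Icc 1 t ∧ h j ∉ f '' Set.Icc 1 t') ∧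
      ∑ j ∈ Finset.Ioc t' t, dist (c j) (h j) ≤ matchingCost t' c f + matchingCost t c g := by
  intro t'
  induction t' with
  | zero =>
    intro f _ _
    refine ⟨g, ?_, ?_, ?_⟩
    · intro a ha b hb hab
      rw [Set.mem_Ioc] at ha hb
      exact hg.1 (Set.mem_Icc.mpr ⟨ha.1, ha.2⟩) (Set.mem_Icc.mpr ⟨hb.1, hb.2⟩) hab
    · intro j hj
      rw [Set.mem_Ioc] at hj
      constructor
      · exact ⟨j, Set.mem_Icc.mpr ⟨hj.1, hj.2⟩, rfl⟩
      · rintro ⟨a, ha, -⟩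
        rw [Set.mem_Icc] at ha
        omega
    · have : Finset.Ioc 0 t = Finset.Icc 1 t := by
        ext j; rw [Finset.mem_Ioc, Finset.mem_Icc]; omega
      rw [this]
      have : matchingCost 0 c f = 0 := by simp [matchingCost]
      rw [this, zero_add]
      exact le_of_eq rfl
  | succ t' ih =>
    intro f hle hinj
    have hle' : t' ≤ t := le_trans (Nat.le_succ t') hle
    have hinj' : Set.InjOn f (Set.Icc 1 t') :=
      hinj.mono (Set.Icc_subset_Icc_right (Nat.le_succ t'))
    obtain ⟨h', hinjh, hmemh, hcosth⟩ := ih f hle' hinj'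
    have ht'mem : (t' + 1) ∈ Set.Ioc t' t := Set.mem_Ioc.mpr ⟨Nat.lt_succ_self t', hle⟩
    -- cost of f at t'+1 vs t'
    have hfc : matchingCost (t'+1) c f = matchingCost t' c f + dist (c (t'+1)) (f (t'+1)) := by
      unfold matchingCost
      have hmem : t' + 1 ∈ Finset.Icc 1 (t'+1) := by rw [Finset.mem_Icc]; omega
      have herase : (Finset.Icc 1 (t'+1)).erase (t'+1) = Finset.Icc 1 t' := by
        ext j; rw [Finset.mem_erase, Finset.mem_Icc, Finset.mem_Icc]; omega
      rw [← Finset.add_sum_erase _ _ hmem, herase]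
      ring
    by_cases hcase : ∃ j ∈ Set.Ioc (t'+1) t, h' j = f (t'+1)
    · obtain ⟨j', hj'mem, hj'eq⟩ := hcase
      classical
      refine ⟨Function.update h' j' (h' (t'+1)), ?_, ?_, ?_⟩
      · intro a ha b hb hab
        rw [Set.mem_Ioc] at ha hb
        have haI : a ∈ Set.Ioc t' t := Set.mem_Ioc.mpr ⟨by omega, ha.2⟩
        have hbI : b ∈ Set.Ioc t' t := Set.mem_Ioc.mpr ⟨by omega, hb.2⟩
        by_cases haj : a = j' <;> by_cases hbj : b = j'
        · rw [haj, hbj]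
        · rw [Function.update_apply, if_pos haj, Function.update_apply, if_neg hbj] at hab
          have : t' + 1 = b := hinjh ht'mem hbI hab
          omega
        · rw [Function.update_apply, if_neg haj, Function.update_apply, if_pos hbj] at hab
          have : a = t' + 1 := hinjh haI ht'mem hab
          omega
        · rw [Function.update_apply, if_neg haj, Function.update_apply, if_neg hbj] at hab
          exact hinjh haI hbI hab
      · intro j hj
        rw [Set.mem_Ioc] at hj
        have hjI : j ∈ Set.Ioc t' t := Set.mem_Ioc.mpr ⟨by omega, hj.2⟩
        have himg : f '' Set.Icc 1 (t'+1) ⊆ f '' Set.Icc 1 t' ∪ {f (t'+1)} := by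
          rintro s ⟨a, ha, rfl⟩
          rw [Set.mem_Icc] at ha
          by_cases hat : a ≤ t'
          · exact Or.inl ⟨a, Set.mem_Icc.mpr ⟨ha.1, hat⟩, rfl⟩
          · have : a = t' + 1 := by omega
            exact Or.inr (by rw [this]; rfl)
        by_cases hjj : j = j'
        · rw [hjj, Function.update_self]
          refine ⟨(hmemh _ ht'mem).1, fun hmem => ?_⟩
          rcases himg hmem with h1 | h1
          · exact (hmemh _ ht'mem).2 h1
          · rw [Set.mem_singleton_iff] at h1
            have hne : (t' + 1) ≠ j' := by
              rw [Set.mem_Ioc] at hj'mem; omega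
            exact hne (hinjh ht'mem (Set.mem_Ioc.mpr (by rw [Set.mem_Ioc] at hj'mem; omega))
              (by rw [h1, hj'eq]))
        · rw [Function.update_apply, if_neg hjj]
          refine ⟨(hmemh _ hjI).1, fun hmem => ?_⟩
          rcases himg hmem with h1 | h1
          · exact (hmemh _ hjI).2 h1
          · rw [Set.mem_singleton_iff] at h1
            rw [← hj'eq] at h1
            exact hjj (hinjh hjI (Set.mem_Ioc.mpr (by rw [Set.mem_Ioc] at hj'mem; omega)) h1)
      · -- cost bound
        have hj'F : j' ∈ Finset.Ioc (t'+1) t := by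
          rw [Finset.mem_Ioc]; exact Set.mem_Ioc.mp hj'mem
        have htri : dist (c j') (h' (t'+1)) ≤
            dist (c j') (h' j') + dist (c (t'+1)) (f (t'+1)) + dist (c (t'+1)) (h' (t'+1)) := by
          calc dist (c j') (h' (t'+1))
              ≤ dist (c j') (h' j') + dist (h' j') (h' (t'+1)) := dist_triangle _ _ _
            _ ≤ dist (c j') (h' j') + (dist (h' j') (c (t'+1)) + dist (c (t'+1)) (h' (t'+1))) := by
                have := dist_triangle (h' j') (c (t'+1)) (h' (t'+1))
                linarith
            _ = dist (c j') (h' j') + dist (c (t'+1)) (f (t'+1)) + dist (c (t'+1)) (h' (t'+1)) := by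
                simp only [hj'eq]
                rw [dist_comm (f (t'+1)) (c (t'+1))]
                ring
        have hsum : ∑ j ∈ Finset.Ioc (t'+1) t, dist (c j) (Function.update h' j' (h' (t'+1)) j)
            = dist (c j') (h' (t'+1)) + ∑ j ∈ (Finset.Ioc (t'+1) t).erase j', dist (c j) (h' j) := by
          rw [← Finset.add_sum_erase _ _ hj'F, Function.update_self]
          congr 1
          exact Finset.sum_congr rfl fun j hj => by
            rw [Function.update_of_ne (Finset.ne_of_mem_erase hj)]
        have h2 : ∑ j ∈ (Finset.Ioc (t'+1) t).erase j', dist (c j) (h' j) =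
            ∑ j ∈ Finset.Ioc (t'+1) t, dist (c j) (h' j) - dist (c j') (h' j') := by
          rw [← Finset.add_sum_erase _ _ hj'F]; ring
        have herase : (Finset.Ioc t' t).erase (t'+1) = Finset.Ioc (t'+1) t := by
          ext j; rw [Finset.mem_erase, Finset.mem_Ioc, Finset.mem_Ioc]; omega
        have hsplit : ∑ j ∈ Finset.Ioc t' t, dist (c j) (h' j) =
            dist (c (t'+1)) (h' (t'+1)) + ∑ j ∈ Finset.Ioc (t'+1) t, dist (c j) (h' j) := by
          rw [← Finset.add_sum_erase _ _ (show t'+1 ∈ Finset.Ioc t' t by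
            rw [Finset.mem_Ioc]; omega), herase]
        rw [hsum, h2]
        linarith
    · push_neg at hcase
      refine ⟨h', hinjh.mono (Set.Ioc_subset_Ioc_left (Nat.le_succ t')), ?_, ?_⟩
      · intro j hj
        have hjI : j ∈ Set.Ioc t' t := Set.Ioc_subset_Ioc_left (Nat.le_succ t') hj
        refine ⟨(hmemh _ hjI).1, fun hmem => ?_⟩
        obtain ⟨a, ha, hae⟩ := hmem
        rw [Set.mem_Icc] at ha
        by_cases hat : a ≤ t'
        · exact (hmemh _ hjI).2 ⟨a, Set.mem_Icc.mpr ⟨ha.1, hat⟩, hae⟩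
        · have : a = t' + 1 := by omega
          exact hcase j hj (by rw [← hae, this])
      · calc ∑ j ∈ Finset.Ioc (t'+1) t, dist (c j) (h' j)
            ≤ ∑ j ∈ Finset.Ioc t' t, dist (c j) (h' j) := by
              apply Finset.sum_le_sum_of_subset_of_nonneg
              · intro j hj; rw [Finset.mem_Ioc] at *; omega
              · intro _ _ _; exact dist_nonneg
          _ ≤ matchingCost t' c f + matchingCost t c g := hcosth
          _ ≤ matchingCost (t'+1) c f + matchingCost t c g := by
              rw [hfc]
              have := dist_nonneg (x := c (t'+1)) (y := f (t'+1))
              linarith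

end Pairing

section Dchain

variable (d : ℕ)

/-- the exponent of the largest power of `d` dividing `t` -/
def vd (t : ℕ) : ℕ := Nat.findGreatest (fun w => d ^ w ∣ t) t

/-- one step down the chain -/
def stepc (t : ℕ) : ℕ := t - d ^ (vd d t)

lemma vd_dvd {t : ℕ} : d ^ (vd d t) ∣ t :=
  Nat.findGreatest_spec (P := fun w => d ^ w ∣ t) (Nat.zero_le t) (by simp)

lemma pow_vd_le {t : ℕ} (ht : 1 ≤ t) : d ^ (vd d t) ≤ t := Nat.le_of_dvd ht (vd_dvd d)

lemma pow_vd_pos {t : ℕ} (ht : 1 ≤ t) : 1 ≤ d ^ (vd d t) :=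
  Nat.pos_of_dvd_of_pos (vd_dvd d) ht

lemma stepc_lt {t : ℕ} (ht : 1 ≤ t) : stepc d t < t :=
  Nat.sub_lt ht (pow_vd_pos d ht)

lemma stepc_le (t : ℕ) : stepc d t ≤ t := Nat.sub_le _ _

lemma vd_not_dvd (hd : 2 ≤ d) {t : ℕ} (ht : 1 ≤ t) : ¬ d ^ (vd d t + 1) ∣ t := by
  intro hdvd
  have h0 := Nat.le_of_dvd ht hdvd
  have h1 := Nat.lt_pow_self (n := vd d t + 1) (show 1 < d by omega)
  have h2 : vd d t + 1 ≤ t := by omega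
  exact Nat.findGreatest_is_greatest (P := fun w => d ^ w ∣ t) (n := t)
    (Nat.lt_succ_self _) h2 hdvd

lemma vd_eq (hd : 2 ≤ d) {t w : ℕ} (ht : 1 ≤ t) (h1 : d ^ w ∣ t) (h2 : ¬ d ^ (w+1) ∣ t) :
    vd d t = w := by
  have h0 := Nat.le_of_dvd ht h1
  have h0' := Nat.lt_pow_self (n := w) (show 1 < d by omega)
  have hge : w ≤ vd d t := Nat.le_findGreatest (by omega) h1
  by_contra hne
  exact h2 ((pow_dvd_pow d (by omega : w + 1 ≤ vd d t)).trans (vd_dvd d))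

lemma stepc_dvd {t : ℕ} : d ^ (vd d t) ∣ stepc d t := Nat.dvd_sub (vd_dvd d) dvd_rfl

/-- the length of the chain -/
def clen : ℕ → ℕ
  | 0 => 0
  | (t+1) => clen (stepc d (t+1)) + 1
decreasing_by exact stepc_lt d (by omega)

lemma clen_eq {t : ℕ} (ht : 1 ≤ t) : clen d t = clen d (stepc d t) + 1 := by
  obtain ⟨u, rfl⟩ : ∃ u, t = u + 1 := ⟨t - 1, by omega⟩
  rw [clen]

/-- base-`d` digit sum potential -/
def phi (t : ℕ) : ℕ := ∑ i ∈ Finset.range (Nat.clog d (t+1)), t / d ^ i % d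

lemma pred_div {a b : ℕ} (hb : 0 < b) (hab : 1 ≤ a % b) :
    (a - 1) / b = a / b ∧ (a - 1) % b = a % b - 1 := by
  have hmod := Nat.mod_lt a hb
  have hdecomp : a - 1 = (a % b - 1) + b * (a / b) := by
    have := Nat.div_add_mod a b
    omega
  constructor
  · rw [hdecomp, Nat.add_mul_div_left _ _ hb, Nat.div_eq_of_lt (by omega)]
    omega
  · rw [hdecomp, Nat.add_mul_mod_self_left, Nat.mod_eq_of_lt (by omega)]

lemma phi_step (hd : 2 ≤ d) {t : ℕ} (ht : 1 ≤ t) : phi d t = phi d (stepc d t) + 1 := by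
  have hd1 : 1 < d := by omega
  set v := vd d t with hv
  set m := t / d ^ v with hmdef
  have hdm : d ^ v * m = t := Nat.mul_div_cancel' (vd_dvd d)
  have hpowpos : 0 < d ^ v := pow_vd_pos d ht
  have hm1 : 1 ≤ m := by
    rcases Nat.eq_zero_or_pos m with h | h
    · rw [h, Nat.mul_zero] at hdm; omega
    · exact h
  have hndvd : ¬ d ∣ m := by
    rintro ⟨m', hm'⟩
    refine vd_not_dvd d hd ht ⟨m', ?_⟩
    rw [← hv, ← hdm, hm', pow_succ]
    ring
  have hstep : stepc d t = d ^ v * (m - 1) := by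
    rw [stepc, Nat.mul_sub, hdm, Nat.mul_one]
  set s := stepc d t with hs
  have hslt : s < t := stepc_lt d ht
  set K := Nat.clog d (t+1) with hK
  have hvK : v < K := by
    rw [hK]
    rw [Nat.lt_clog_iff_pow_lt hd1]
    have h : d ^ v ≤ t := by rw [hv]; exact pow_vd_le d ht
    omega
  have hKs : Nat.clog d (s+1) ≤ K := Nat.clog_mono_right _ (by omega)
  -- digits of t and s agree except at position v
  have hdig_lt : ∀ i < v, t / d ^ i % d = 0 ∧ s / d ^ i % d = 0 := by
    intro i hi
    have hdvd_t : d ^ (i+1) ∣ t := (pow_dvd_pow d (by omega)).trans (vd_dvd d)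
    have hdvd_s : d ^ (i+1) ∣ s := (pow_dvd_pow d (by omega)).trans (stepc_dvd d)
    have key : ∀ u : ℕ, d ^ (i+1) ∣ u → u / d ^ i % d = 0 := by
      rintro u ⟨r, hr⟩
      rw [hr, pow_succ, mul_assoc, Nat.mul_div_cancel_left _ (by positivity),
        Nat.mul_mod_right]
    exact ⟨key t hdvd_t, key s hdvd_s⟩
  have hdiv_t : t / d ^ v = m := rfl
  have hdiv_s : s / d ^ v = m - 1 := by
    rw [hstep, Nat.mul_div_cancel_left _ hpowpos]
  have hmodm : 1 ≤ m % d := by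
    rcases Nat.eq_zero_or_pos (m % d) with h | h
    · exact absurd (Nat.dvd_of_mod_eq_zero h) hndvd
    · exact h
  have hdig_v : t / d ^ v % d = s / d ^ v % d + 1 := by
    rw [hdiv_t, hdiv_s, (pred_div (by omega) hmodm).2]
    omega
  have hdig_gt : ∀ i, v < i → t / d ^ i % d = s / d ^ i % d := by
    intro i hi
    have hsplit : d ^ i = d ^ v * d ^ (i - v) := by
      rw [← pow_add]
      congr 1
      omega
    have hjpos : 0 < d ^ (i - v) := by positivity
    have ht' : t / d ^ i = m / d ^ (i - v) := by
      rw [hsplit, ← Nat.div_div_eq_div_mul, hdiv_t]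
    have hs' : s / d ^ i = (m - 1) / d ^ (i - v) := by
      rw [hsplit, ← Nat.div_div_eq_div_mul, hdiv_s]
    have hmmod : 1 ≤ m % d ^ (i - v) := by
      rcases Nat.eq_zero_or_pos (m % d ^ (i - v)) with h | h
      · exfalso
        apply hndvd
        exact dvd_trans (dvd_pow_self d (by omega : i - v ≠ 0)) (Nat.dvd_of_mod_eq_zero h)
      · exact h
    rw [ht', hs', (pred_div hjpos hmmod).1]
  -- extend phi s to range K
  have hphis : phi d s = ∑ i ∈ Finset.range K, s / d ^ i % d := by
    rw [phi]
    apply Finset.sum_subset (Finset.range_subset_range.mpr hKs)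
    intro i _ hi
    rw [Finset.mem_range, not_lt] at hi
    have : s + 1 ≤ d ^ i :=
      le_trans (Nat.le_pow_clog hd1 (s+1)) (Nat.pow_le_pow_right (by omega) hi)
    rw [Nat.div_eq_of_lt (by omega)]
    exact Nat.zero_mod d
  have hvmem : v ∈ Finset.range K := Finset.mem_range.mpr hvK
  have h1 : phi d t = t / d ^ v % d + ∑ i ∈ (Finset.range K).erase v, t / d ^ i % d :=
    (Finset.add_sum_erase _ _ hvmem).symm
  have h2 : phi d s = s / d ^ v % d + ∑ i ∈ (Finset.range K).erase v, s / d ^ i % d := by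
    rw [hphis]
    exact (Finset.add_sum_erase _ _ hvmem).symm
  have h3 : ∑ i ∈ (Finset.range K).erase v, t / d ^ i % d =
      ∑ i ∈ (Finset.range K).erase v, s / d ^ i % d := by
    apply Finset.sum_congr rfl
    intro i hi
    have hine := Finset.ne_of_mem_erase hi
    rcases Nat.lt_or_ge i v with h | h
    · rw [(hdig_lt i h).1, (hdig_lt i h).2]
    · exact hdig_gt i (by omega)
  rw [h1, h2, h3, hdig_v]
  ring

lemma clen_le_phi (hd : 2 ≤ d) : ∀ t, clen d t ≤ phi d t := by
  intro t
  induction t using Nat.strong_induction_on with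
  | _ t ih =>
    rcases Nat.eq_zero_or_pos t with rfl | ht
    · have h0 : clen d 0 = 0 := by rw [clen]
      omega
    · rw [clen_eq d ht, phi_step d hd ht]
      have := ih (stepc d t) (stepc_lt d ht)
      omega

lemma clen_bound (hd : 2 ≤ d) (t : ℕ) : clen d t ≤ (d - 1) * Nat.clog d (t+1) := by
  refine le_trans (clen_le_phi d hd t) ?_
  rw [phi]
  have := Finset.sum_le_card_nsmul (Finset.range (Nat.clog d (t+1)))
    (fun i => t / d ^ i % d) (d - 1)
    (fun i _ => by
      show t / d ^ i % d ≤ d - 1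
      have := Nat.mod_lt (t / d ^ i) (show 0 < d by omega)
      omega)
  rw [Finset.card_range, smul_eq_mul, Nat.mul_comm] at this
  exact this

/-- reachability along the chain -/
def Reach (a b : ℕ) : Prop := ∃ n, b = (stepc d)^[n] a

lemma reach_refl {a : ℕ} : Reach d a a := ⟨0, rfl⟩

lemma reach_stepc (a : ℕ) : Reach d a (stepc d a) := ⟨1, rfl⟩

lemma reach_trans {a b c : ℕ} : Reach d a b → Reach d b c → Reach d a c := by
  rintro ⟨n, rfl⟩ ⟨m, rfl⟩
  exact ⟨m + n, (Function.iterate_add_apply _ m n a).symm⟩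

lemma iterate_stepc_le (n a : ℕ) : (stepc d)^[n] a ≤ a := by
  induction n generalizing a with
  | zero => exact le_rfl
  | succ n ih =>
    rw [Function.iterate_succ_apply]
    exact le_trans (ih (stepc d a)) (stepc_le d a)

lemma reach_le {a b : ℕ} (h : Reach d a b) : b ≤ a := by
  obtain ⟨n, rfl⟩ := h
  exact iterate_stepc_le d n a

lemma stepc_add (hd : 2 ≤ d) {q w a : ℕ} (hq : d ^ (w+1) ∣ q) (ha : 1 ≤ a) (had : a ≤ d - 1) :
    stepc d (q + a * d ^ w) = q + (a - 1) * d ^ w := by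
  have hpw : 0 < d ^ w := by positivity
  have h1 : d ^ w ∣ q + a * d ^ w :=
    dvd_add ((pow_dvd_pow d (Nat.le_succ w)).trans hq) (Dvd.intro_left a rfl)
  have h2 : ¬ d ^ (w+1) ∣ q + a * d ^ w := by
    intro hcon
    have hdiv : d ^ (w+1) ∣ a * d ^ w := (Nat.dvd_add_right hq).mp hcon
    have hda : d ∣ a := by
      have h' : d ^ w * d ∣ d ^ w * a := by
        rw [← pow_succ, mul_comm (d ^ w) a]
        exact hdiv
      exact (Nat.mul_dvd_mul_iff_left hpw).mp h'
    have := Nat.le_of_dvd (by omega) hda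
    omega
  have hpos : 1 ≤ q + a * d ^ w := by
    have : 1 ≤ a * d ^ w := by
      calc 1 = 1 * 1 := by ring
      _ ≤ a * d ^ w := Nat.mul_le_mul ha hpw
    omega
  rw [stepc, vd_eq d hd hpos h1 h2]
  have harr : a * d ^ w = (a - 1) * d ^ w + d ^ w := by
    calc a * d ^ w = ((a - 1) + 1) * d ^ w := by rw [Nat.sub_add_cancel ha]
    _ = (a - 1) * d ^ w + d ^ w := by ring
  omega

lemma desc (hd : 2 ≤ d) {q w : ℕ} (hq : d ^ (w+1) ∣ q) :
    ∀ a, a ≤ d - 1 → Reach d (q + a * d ^ w) q := by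
  intro a
  induction a with
  | zero => intro _; simpa using reach_refl d
  | succ a ih =>
    intro h
    have hstep := stepc_add d hd hq (Nat.succ_le_succ (Nat.zero_le a)) h
    have : Reach d (q + (a+1) * d ^ w) (q + a * d ^ w) := by
      have := reach_stepc d (q + (a+1) * d ^ w)
      rw [hstep] at this
      simpa using this
    exact reach_trans d this (ih (by omega))

lemma reach_clear (hd : 2 ≤ d) : ∀ w q, d ^ w ∣ q → Reach d (q + d ^ w - 1) q := by
  intro w
  induction w with
  | zero => intro q _; simpa using reach_refl d
  | succ w ih =>
    intro q hq
    have hpw : 0 < d ^ w := by positivity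
    have hpow : d ^ (w+1) = (d-1) * d ^ w + d ^ w := by
      have h1 : d ^ (w+1) = d * d ^ w := by rw [pow_succ]; ring
      have h2 : (d-1) * d ^ w + d ^ w = d * d ^ w := by
        calc (d-1) * d ^ w + d ^ w = ((d-1)+1) * d ^ w := by ring
        _ = d * d ^ w := by rw [show d - 1 + 1 = d by omega]
      omega
    have harith : q + d ^ (w+1) - 1 = (q + (d-1) * d ^ w) + d ^ w - 1 := by omega
    have h1 : d ^ w ∣ q + (d-1) * d ^ w :=
      dvd_add ((pow_dvd_pow d (Nat.le_succ w)).trans hq) (Dvd.intro_left _ rfl)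
    have h2 := ih (q + (d-1) * d ^ w) h1
    have h3 := desc d hd hq (d-1) le_rfl
    rw [harith]
    exact reach_trans d h2 h3

lemma reach_pred (hd : 2 ≤ d) {t : ℕ} (ht : 1 ≤ t) : Reach d (t - 1) (stepc d t) := by
  by_cases hv : vd d t = 0
  · have h0 : stepc d t = t - 1 := by rw [stepc, hv, pow_zero]
    rw [h0]; exact reach_refl d
  · have hle := pow_vd_le d ht
    have hsplit : t - 1 = stepc d t + d ^ (vd d t) - 1 := by
      rw [stepc]; omega
    have hdvd : d ^ (vd d t) ∣ stepc d t := stepc_dvd d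
    rw [hsplit]
    exact reach_clear d hd (vd d t) (stepc d t) hdvd

/-- the anchor (chain point whose block contains client `j`) -/
def anc : ℕ → ℕ → ℕ
  | t, j => if h : 1 ≤ j ∧ j ≤ stepc d t then anc (stepc d t) j else t
decreasing_by
  have h1 : 1 ≤ stepc d t := le_trans h.1 h.2
  exact stepc_lt d (le_trans h1 (stepc_le d t))

lemma anc_eq_of_le {t j : ℕ} (h1 : 1 ≤ j) (h2 : j ≤ stepc d t) :
    anc d t j = anc d (stepc d t) j := by
  rw [anc, dif_pos ⟨h1, h2⟩]

lemma anc_eq_self {t j : ℕ} (h : ¬ j ≤ stepc d t) : anc d t j = t := by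
  rw [anc, dif_neg (fun hc => h hc.2)]

lemma anc_spec {j : ℕ} (h1 : 1 ≤ j) : ∀ {t : ℕ}, j ≤ t →
    stepc d (anc d t j) < j ∧ j ≤ anc d t j ∧ anc d t j ≤ t := by
  intro t
  induction t using Nat.strong_induction_on with
  | _ t ih =>
    intro h2
    by_cases h : j ≤ stepc d t
    · rw [anc_eq_of_le d h1 h]
      obtain ⟨a, b, c'⟩ := ih (stepc d t) (stepc_lt d (le_trans h1 h2)) h
      exact ⟨a, b, le_trans c' (stepc_le d t)⟩
    · rw [anc_eq_self d h]
      exact ⟨not_le.mp h, h2, le_rfl⟩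

lemma anc_reach {j : ℕ} (h1 : 1 ≤ j) : ∀ {t : ℕ}, j ≤ t → Reach d t (anc d t j) := by
  intro t
  induction t using Nat.strong_induction_on with
  | _ t ih =>
    intro h2
    by_cases h : j ≤ stepc d t
    · rw [anc_eq_of_le d h1 h]
      exact reach_trans d (reach_stepc d t) (ih (stepc d t) (stepc_lt d (le_trans h1 h2)) h)
    · rw [anc_eq_self d h]
      exact reach_refl d

lemma anc_stable {j : ℕ} (h1 : 1 ≤ j) {t q : ℕ} (hq : Reach d t q) (hj : j ≤ q) :
    anc d t j = anc d q j := by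
  obtain ⟨n, rfl⟩ := hq
  induction n generalizing t with
  | zero => rfl
  | succ n ih =>
    rw [Function.iterate_succ_apply] at hj ⊢
    have hjs : j ≤ stepc d t := le_trans hj (iterate_stepc_le d n (stepc d t))
    rw [anc_eq_of_le d h1 hjs]
    exact ih hj

lemma anc_le_step {j1 j2 : ℕ} (hj1 : 1 ≤ j1) (hj2 : 1 ≤ j2) : ∀ {t : ℕ}, j1 ≤ t → j2 ≤ t →
    anc d t j1 < anc d t j2 → anc d t j1 ≤ stepc d (anc d t j2) := by
  intro t
  induction t using Nat.strong_induction_on with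
  | _ t ih =>
    intro ht1 ht2 hlt
    by_cases h1 : j1 ≤ stepc d t <;> by_cases h2 : j2 ≤ stepc d t
    · rw [anc_eq_of_le d hj1 h1, anc_eq_of_le d hj2 h2] at hlt ⊢
      exact ih (stepc d t) (stepc_lt d (le_trans hj1 ht1)) h1 h2 hlt
    · rw [anc_eq_of_le d hj1 h1] at hlt ⊢
      rw [anc_eq_self d h2] at hlt ⊢
      exact (anc_spec d hj1 h1).2.2
    · exfalso
      rw [anc_eq_self d h1] at hlt
      rw [anc_eq_of_le d hj2 h2] at hlt
      have := (anc_spec d hj2 h2).2.2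
      have := stepc_le d t
      omega
    · rw [anc_eq_self d h1, anc_eq_self d h2] at hlt
      omega

end Dchain

section Algo

variable {X : Type*} [MetricSpace X] (S : Finset X) (x0 : X) (d : ℕ)

lemma pairEx (hx0 : x0 ∈ S) (c : ℕ → X) (q : ℕ) (hq : q ≤ S.card) :
    ∃ h : ℕ → X, Set.InjOn h (Set.Ioc (stepc d q) q) ∧
      (∀ j ∈ Set.Ioc (stepc d q) q,
        h j ∈ chainM S x0 c q '' Set.Icc 1 q ∧
        h j ∉ chainM S x0 c (stepc d q) '' Set.Icc 1 (stepc d q)) ∧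
      ∑ j ∈ Finset.Ioc (stepc d q) q, dist (c j) (h j) ≤
        OPT S (stepc d q) c + OPT S q c := by
  have hsq : stepc d q ≤ q := stepc_le d q
  have hg := (chainM_spec S x0 hx0 (c := c) hq).1
  have hf := (chainM_spec S x0 hx0 (c := c) (le_trans hsq hq)).1
  obtain ⟨h, hinj, hmem, hcost⟩ :=
    pairing S hg (stepc d q) (chainM S x0 c (stepc d q)) hsq hf.1
  refine ⟨h, hinj, hmem, ?_⟩
  rwa [chainM_cost S x0 hx0 (le_trans hsq hq), chainM_cost S x0 hx0 hq] at hcost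

open Classical in
noncomputable def bAssign (c : ℕ → X) (q : ℕ) : ℕ → X :=
  if h : x0 ∈ S ∧ q ≤ S.card then Classical.choose (pairEx S x0 d h.1 c q h.2)
  else fun _ => x0

lemma bAssign_spec (hx0 : x0 ∈ S) {c : ℕ → X} {q : ℕ} (hq : q ≤ S.card) :
    Set.InjOn (bAssign S x0 d c q) (Set.Ioc (stepc d q) q) ∧
    (∀ j ∈ Set.Ioc (stepc d q) q,
      bAssign S x0 d c q j ∈ chainM S x0 c q '' Set.Icc 1 q ∧
      bAssign S x0 d c q j ∉ chainM S x0 c (stepc d q) '' Set.Icc 1 (stepc d q)) ∧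
    ∑ j ∈ Finset.Ioc (stepc d q) q, dist (c j) (bAssign S x0 d c q j) ≤
      OPT S (stepc d q) c + OPT S q c := by
  have heq : bAssign S x0 d c q = Classical.choose (pairEx S x0 d hx0 c q hq) := by
    rw [bAssign, dif_pos ⟨hx0, hq⟩]
  rw [heq]
  exact Classical.choose_spec (pairEx S x0 d hx0 c q hq)

def cfOf (t : ℕ) (cp : Fin t → X) : ℕ → X :=
  fun i => if h : 1 ≤ i ∧ i ≤ t then cp ⟨i - 1, by omega⟩ else x0

noncomputable def Mval (c : ℕ → X) (t j : ℕ) : X :=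
  bAssign S x0 d (trunc x0 c (anc d t j)) (anc d t j) j

noncomputable def algA (t : ℕ) (cp : Fin t → X) : ℕ → X := fun j =>
  if h : 1 ≤ j ∧ j ≤ t then Mval S x0 d (cfOf x0 t cp) t j else x0

lemma cfOf_prefix (c : ℕ → X) (t : ℕ) : cfOf x0 t (prefixOf c t) = trunc x0 c t := by
  funext i
  by_cases h : 1 ≤ i ∧ i ≤ t
  · rw [cfOf, dif_pos h, trunc, if_pos h]
    show c (i - 1 + 1) = c i
    congr 1
    omega
  · rw [cfOf, dif_neg h, trunc, if_neg h]

lemma algA_val (c : ℕ → X) {t j : ℕ} (h1 : 1 ≤ j) (h2 : j ≤ t) :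
    algA S x0 d t (prefixOf c t) j =
      bAssign S x0 d (trunc x0 c (anc d t j)) (anc d t j) j := by
  have hanc : anc d t j ≤ t := (anc_spec d h1 h2).2.2
  rw [algA]
  rw [dif_pos ⟨h1, h2⟩, cfOf_prefix, Mval, trunc_trunc x0 hanc]

lemma algA_matching (hx0 : x0 ∈ S) (t : ℕ) (ht : t ≤ S.card) (cp : Fin t → X) :
    IsMatching S t (algA S x0 d t cp) := by
  set c' := cfOf x0 t cp with hc'
  have hval : ∀ j, 1 ≤ j → j ≤ t →
      algA S x0 d t cp j = bAssign S x0 d (trunc x0 c' (anc d t j)) (anc d t j) j := by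
    intro j h1 h2
    rw [algA, dif_pos ⟨h1, h2⟩, Mval, ← hc']
  constructor
  · -- injectivity
    intro a ha b hb hab
    rw [Set.mem_Icc] at ha hb
    have hqa := anc_spec d ha.1 ha.2
    have hqb := anc_spec d hb.1 hb.2
    rw [hval a ha.1 ha.2, hval b hb.1 hb.2] at hab
    set qa := anc d t a with hqadef
    set qb := anc d t b with hqbdef
    have hqacard : qa ≤ S.card := le_trans hqa.2.2 ht
    have hqbcard : qb ≤ S.card := le_trans hqb.2.2 ht
    have hmema : a ∈ Set.Ioc (stepc d qa) qa := Set.mem_Ioc.mpr ⟨hqa.1, hqa.2.1⟩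
    have hmemb : b ∈ Set.Ioc (stepc d qb) qb := Set.mem_Ioc.mpr ⟨hqb.1, hqb.2.1⟩
    rcases lt_trichotomy qa qb with hlt | heq | hlt
    · exfalso
      have hle := anc_le_step d ha.1 hb.1 ha.2 hb.2 hlt
      have hina := ((bAssign_spec S x0 d hx0 (c := trunc x0 c' qa) hqacard).2.1 a hmema).1
      have hinb := ((bAssign_spec S x0 d hx0 (c := trunc x0 c' qb) hqbcard).2.1 b hmemb).2
      rw [chainM_trunc S x0 le_rfl] at hina
      rw [chainM_trunc S x0 (stepc_le d qb)] at hinb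
      apply hinb
      rw [← hab]
      exact chainM_mono S x0 hx0 hle (le_trans (stepc_le d qb) hqbcard) hina
    · rw [heq] at hab hmema
      exact (bAssign_spec S x0 d hx0 (c := trunc x0 c' qb) hqbcard).1 hmema hmemb hab
    · exfalso
      have hle := anc_le_step d hb.1 ha.1 hb.2 ha.2 hlt
      have hinb := ((bAssign_spec S x0 d hx0 (c := trunc x0 c' qb) hqbcard).2.1 b hmemb).1
      have hina := ((bAssign_spec S x0 d hx0 (c := trunc x0 c' qa) hqacard).2.1 a hmema).2
      rw [chainM_trunc S x0 le_rfl] at hinb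
      rw [chainM_trunc S x0 (stepc_le d qa)] at hina
      apply hina
      rw [hab]
      exact chainM_mono S x0 hx0 hle (le_trans (stepc_le d qa) hqacard) hinb
  · -- values in S
    intro j hj
    rw [Set.mem_Icc] at hj
    have hq := anc_spec d hj.1 hj.2
    rw [hval j hj.1 hj.2]
    have hqcard : anc d t j ≤ S.card := le_trans hq.2.2 ht
    have hmem := ((bAssign_spec S x0 d hx0 (c := trunc x0 c' (anc d t j)) hqcard).2.1 j
      (Set.mem_Ioc.mpr ⟨hq.1, hq.2.1⟩)).1
    obtain ⟨a, ha, hae⟩ := hmem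
    rw [← hae]
    exact ((chainM_spec S x0 hx0 hqcard).1).2 a ha

lemma Ioc_zero_Icc (x : ℕ) : Finset.Ioc 0 x = Finset.Icc 1 x := by
  ext j
  rw [Finset.mem_Ioc, Finset.mem_Icc]
  omega

lemma cost_rec (hd : 2 ≤ d) (hx0 : x0 ∈ S) (c : ℕ → X) : ∀ t, t ≤ S.card → 1 ≤ t →
    ∑ j ∈ Finset.Icc 1 t,
      dist (c j) (bAssign S x0 d (trunc x0 c (anc d t j)) (anc d t j) j) ≤
      (2 * (clen d t : ℝ) - 1) * OPT S t c := by
  intro t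
  induction t using Nat.strong_induction_on with
  | _ t ih =>
    intro htcard ht1
    set s := stepc d t with hsdef
    have hst : s < t := stepc_lt d ht1
    have hscard : s ≤ S.card := le_trans (le_of_lt hst) htcard
    set F : ℕ → ℝ :=
      fun j => dist (c j) (bAssign S x0 d (trunc x0 c (anc d t j)) (anc d t j) j) with hF
    have hsplit : ∑ j ∈ Finset.Icc 1 s, F j + ∑ j ∈ Finset.Ioc s t, F j =
        ∑ j ∈ Finset.Icc 1 t, F j := by
      rw [← Ioc_zero_Icc, ← Ioc_zero_Icc]
      exact Finset.sum_Ioc_consecutive F (Nat.zero_le s) (le_of_lt hst)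
    -- upper block
    have hupper : ∑ j ∈ Finset.Ioc s t, F j ≤ OPT S s c + OPT S t c := by
      have hspec := (bAssign_spec S x0 d hx0 (c := trunc x0 c t) (q := t) htcard).2.2
      have hcongr : ∑ j ∈ Finset.Ioc s t, F j =
          ∑ j ∈ Finset.Ioc (stepc d t) t,
            dist ((trunc x0 c t) j) (bAssign S x0 d (trunc x0 c t) t j) := by
        apply Finset.sum_congr (by rw [hsdef])
        intro j hj
        rw [Finset.mem_Ioc] at hj
        have hanc : anc d t j = t := anc_eq_self d (by omega)
        rw [hF]
        simp only
        rw [hanc, trunc_eq x0 (by omega : 1 ≤ j) hj.2]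
      rw [hcongr]
      refine le_trans hspec ?_
      have h1 : OPT S (stepc d t) (trunc x0 c t) = OPT S s c := by
        rw [← hsdef]
        apply OPT_congr S
        intro j hj
        rw [Finset.mem_Icc] at hj
        exact trunc_eq x0 hj.1 (le_trans hj.2 (le_of_lt hst))
      have h2 : OPT S t (trunc x0 c t) = OPT S t c := by
        apply OPT_congr S
        intro j hj
        rw [Finset.mem_Icc] at hj
        exact trunc_eq x0 hj.1 hj.2
      rw [h1, h2]
    -- lower block
    have hlowcongr : ∑ j ∈ Finset.Icc 1 s, F j =
        ∑ j ∈ Finset.Icc 1 s,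
          dist (c j) (bAssign S x0 d (trunc x0 c (anc d s j)) (anc d s j) j) := by
      apply Finset.sum_congr rfl
      intro j hj
      rw [Finset.mem_Icc] at hj
      rw [hF]
      simp only
      rw [anc_eq_of_le d hj.1 (by rw [← hsdef]; exact hj.2)]
    have hOPTmono : OPT S s c ≤ OPT S t c := OPT_mono S x0 hx0 (le_of_lt hst) htcard
    have hOPTnn : 0 ≤ OPT S t c := OPT_nonneg S x0 hx0 htcard
    have hclen : clen d t = clen d s + 1 := clen_eq d ht1
    rcases Nat.eq_zero_or_pos s with hs0 | hs1
    · -- s = 0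
      have hempty : ∑ j ∈ Finset.Icc 1 s, F j = 0 := by
        rw [hs0]
        simp
      have hO0 : OPT S s c = 0 := by rw [hs0]; exact OPT_zero S x0
      have hclen0 : clen d s = 0 := by rw [hs0, clen]
      rw [← hsplit, hempty, zero_add]
      rw [hclen, hclen0]
      push_cast
      rw [hO0] at hupper
      linarith
    · -- s ≥ 1
      have hIH := ih s hst hscard hs1
      rw [← hlowcongr] at hIH
      rw [← hsplit, hclen]
      push_cast
      have hmul : (clen d s : ℝ) * OPT S s c ≤ (clen d s : ℝ) * OPT S t c :=
        mul_le_mul_of_nonneg_left hOPTmono (by positivity)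
      linarith

end Algo

section Final

variable {X : Type*} [MetricSpace X] (S : Finset X) (x0 : X) (d : ℕ)

lemma recourse (hd : 2 ≤ d) (hx0 : x0 ∈ S) (c : ℕ → X) (j : ℕ)
    (hj1 : 1 ≤ j) :
    {t : ℕ | j < t ∧ t ≤ S.card ∧
        algA S x0 d t (prefixOf c t) j ≠ algA S x0 d (t-1) (prefixOf c (t-1)) j}.ncard
      ≤ Nat.log d S.card := by
  set R := {t : ℕ | j < t ∧ t ≤ S.card ∧
      algA S x0 d t (prefixOf c t) j ≠ algA S x0 d (t-1) (prefixOf c (t-1)) j} with hRdef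
  have hmain : ∀ t ∈ R, stepc d t < j := by
    intro t ht
    obtain ⟨hjt, htk, hne⟩ := ht
    by_contra hle
    push_neg at hle
    apply hne
    have ht1 : 1 ≤ t := by omega
    rw [algA_val S x0 d c hj1 (by omega : j ≤ t),
      algA_val S x0 d c hj1 (by omega : j ≤ t - 1)]
    have e1 : anc d t j = anc d (stepc d t) j := anc_eq_of_le d hj1 hle
    have e2 : anc d (t-1) j = anc d (stepc d t) j :=
      anc_stable d hj1 (reach_pred d hd ht1) hle
    rw [e1, e2]
  have hv1 : ∀ t ∈ R, 1 ≤ vd d t := by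
    intro t ht
    have hs := hmain t ht
    rcases Nat.eq_zero_or_pos (vd d t) with h0 | h
    · exfalso
      have : stepc d t = t - 1 := by rw [stepc, h0, pow_zero]
      obtain ⟨hjt, -, -⟩ := ht
      omega
    · exact h
  have hvlog : ∀ t ∈ R, vd d t ∈ Set.Icc 1 (Nat.log d S.card) := by
    intro t ht
    refine Set.mem_Icc.mpr ⟨hv1 t ht, ?_⟩
    obtain ⟨hjt, htk, -⟩ := ht
    have hle := pow_vd_le d (show 1 ≤ t by omega)
    have hcard : d ^ vd d t ≤ S.card := le_trans hle htk
    exact (Nat.le_log_iff_pow_le (by omega) (by omega)).mpr hcard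
  have key : ∀ t1 ∈ R, ∀ t2 ∈ R, vd d t1 = vd d t2 → t1 < t2 → False := by
    intro t1 h1 t2 h2 heq hlt
    have hd1 : d ^ vd d t1 ∣ t1 := vd_dvd d
    have hd2 : d ^ vd d t1 ∣ t2 := by rw [heq]; exact vd_dvd d
    have hsub : d ^ vd d t1 ∣ t2 - t1 := Nat.dvd_sub hd2 hd1
    have hpow_le : d ^ vd d t1 ≤ t2 - t1 := Nat.le_of_dvd (by omega) hsub
    have hs1 := hmain t1 h1
    have hs2 := hmain t2 h2
    rw [stepc, ← heq] at hs2
    obtain ⟨hjt1, -, -⟩ := h1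
    rw [stepc] at hs1
    omega
  have hinj : Set.InjOn (vd d) R := by
    intro t1 h1 t2 h2 heq
    by_contra hne
    rcases Nat.lt_or_ge t1 t2 with h | h
    · exact key t1 h1 t2 h2 heq h
    · exact key t2 h2 t1 h1 heq.symm (by omega)
  have hfin : R.Finite := Set.Finite.subset (Set.finite_Icc 0 S.card)
    (fun t ht => Set.mem_Icc.mpr ⟨Nat.zero_le t, ht.2.1⟩)
  calc R.ncard = ((vd d) '' R).ncard := (Set.ncard_image_of_injOn hinj).symm
    _ ≤ (Set.Icc 1 (Nat.log d S.card)).ncard := by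
        refine Set.ncard_le_ncard ?_ (Set.finite_Icc _ _)
        rintro v ⟨t, ht, rfl⟩
        exact hvlog t ht
    _ = Nat.log d S.card := by
        rw [← Finset.coe_Icc, Set.ncard_coe_finset, Nat.card_Icc]
        omega

end Final


/-- For every integer `d ≥ 2`, every metric space `(X,δ)` and every finite server set `S`
with `|S| = k ≥ 1`, there is a deterministic online matching algorithm `A` for `S` such that
for every client sequence `c 1, …, c k`: (i) at every time `1 ≤ t ≤ k` the matching
maintained has cost at most `(2(d−1)⌈log_d(t+1)⌉ − 1) · OPT_t`, and (ii) every client index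
`j` is reassigned at most `⌊log_d k⌋` times over the whole sequence. -/
theorem stmt3 (d : ℕ) (hd : 2 ≤ d) {X : Type*} [MetricSpace X]
    (S : Finset X) (hk : 1 ≤ S.card) :
    ∃ A : (t : ℕ) → (Fin t → X) → (ℕ → X),
      (∀ t, t ≤ S.card → ∀ cp : Fin t → X, IsMatching S t (A t cp)) ∧
      ∀ c : ℕ → X,
        (∀ t, 1 ≤ t → t ≤ S.card →
          matchingCost t c (A t (prefixOf c t)) ≤
            (2 * ((d : ℝ) - 1) * (Nat.clog d (t + 1) : ℝ) - 1) * OPT S t c) ∧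
        (∀ j, 1 ≤ j → j ≤ S.card →
          {t : ℕ | j < t ∧ t ≤ S.card ∧
              A t (prefixOf c t) j ≠ A (t - 1) (prefixOf c (t - 1)) j}.ncard
            ≤ Nat.log d S.card) := by
  obtain ⟨x0, hx0⟩ : S.Nonempty := Finset.card_pos.mp hk
  refine ⟨algA S x0 d, fun t ht cp => algA_matching S x0 d hx0 t ht cp, fun c => ⟨?_, ?_⟩⟩
  · intro t ht1 htk
    have hcost : matchingCost t c (algA S x0 d t (prefixOf c t)) =
        ∑ j ∈ Finset.Icc 1 t,
          dist (c j) (bAssign S x0 d (trunc x0 c (anc d t j)) (anc d t j) j) := by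
      unfold matchingCost
      apply Finset.sum_congr rfl
      intro j hj
      rw [Finset.mem_Icc] at hj
      rw [algA_val S x0 d c hj.1 hj.2]
    rw [hcost]
    refine le_trans (cost_rec S x0 d hd hx0 c t htk ht1) ?_
    have hOPT := OPT_nonneg S x0 hx0 (c := c) htk
    have hclen := clen_bound d hd t
    have hcast : (clen d t : ℝ) ≤ ((d : ℝ) - 1) * (Nat.clog d (t+1) : ℝ) := by
      have h1 : (clen d t : ℝ) ≤ (((d - 1) * Nat.clog d (t+1) : ℕ) : ℝ) := by
        exact_mod_cast hclen
      have h2 : (((d - 1) * Nat.clog d (t+1) : ℕ) : ℝ) =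
          ((d : ℝ) - 1) * (Nat.clog d (t+1) : ℝ) := by
        rw [Nat.cast_mul, Nat.cast_sub (by omega : 1 ≤ d), Nat.cast_one]
      rw [h2] at h1
      exact h1
    have hcoef : 2 * (clen d t : ℝ) - 1 ≤
        2 * ((d : ℝ) - 1) * (Nat.clog d (t+1) : ℝ) - 1 := by linarith
    exact mul_le_mul_of_nonneg_right hcoef hOPT
  · intro j hj1 _
    exact recourse S x0 d hd hx0 c j hj1
end
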